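/- arXiv:0804.1415 — 7 statements merged into one kernel-verified Lean document; each statement's English description precedes it below -/
import Mathlib

section
/- For every u ∈ [0,1] one has G(u) ≥ (μ/2) u. -/
open MeasureTheory ProbabilityTheory Real

lemma exp_neg_le_one_sub_half {t : ℝ} (h0 : 0 ≤ t) (h1 : t ≤ 1) :
    Real.exp (-t) ≤ 1 - t / 2 := by
  have hc := convexOn_exp.2 (Set.mem_univ (0 : ℝ)) (Set.mem_univ (-1 : ℝ))
    (by linarith : (0:ℝ) ≤ 1 - t) h0 (by ring)
  simp only [smul_eq_mul, mul_zero, mul_neg, mul_one, zero_add, Real.exp_zero] at hc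
  have he : Real.exp (-1) ≤ 1 / 2 := by
    have hm : Real.exp (-1) * Real.exp 1 = 1 := by rw [← Real.exp_add]; norm_num
    nlinarith [Real.add_one_le_exp (1 : ℝ), Real.exp_pos (-1)]
  calc Real.exp (-t) ≤ 1 - t + t * Real.exp (-1) := hc
    _ ≤ 1 - t + t * (1 / 2) := by nlinarith
    _ = 1 - t / 2 := by ring

/-- For `G(u) = -ln E[exp(-u ξ)]` with `0 ≤ ξ ≤ 1` a.s. and `μ = E ξ > 0`,
one has `G(u) ≥ (μ/2) u` for all `u ∈ [0,1]`. -/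
theorem G_lower_bound_on_unit_interval
    {Ω : Type*} [MeasurableSpace Ω] (P : Measure Ω) [IsProbabilityMeasure P]
    (ξ : Ω → ℝ) (hmeas : Measurable ξ)
    (hξ : ∀ᵐ ω ∂P, 0 ≤ ξ ω ∧ ξ ω ≤ 1)
    (p : ℝ) (hp : p = (P {ω | ξ ω = 0}).toReal) (hp0 : 0 < p) (hp1 : p < 1)
    (μ : ℝ) (hμ : μ = ∫ ω, ξ ω ∂P) (hμpos : 0 < μ)
    (ν : ℝ) (hν : ν = Real.log (1 / p))
    (G : ℝ → ℝ) (hG : ∀ u, G u = -Real.log (∫ ω, Real.exp (-u * ξ ω) ∂P)) :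
    ∀ u ∈ Set.Icc (0 : ℝ) 1, μ / 2 * u ≤ G u := by
  intro u hu
  obtain ⟨hu0, hu1⟩ := hu
  -- integrability of ξ
  have hξint : Integrable ξ P := by
    refine Integrable.mono' (integrable_const 1) hmeas.aestronglyMeasurable ?_
    filter_upwards [hξ] with ω ⟨h0, h1⟩
    rw [Real.norm_eq_abs, abs_of_nonneg h0]; exact h1
  -- integrability of exp(-u ξ)
  have hexpmeas : Measurable fun ω => Real.exp (-u * ξ ω) :=
    (Real.measurable_exp.comp ((measurable_const.mul hmeas)))
  have hexpint : Integrable (fun ω => Real.exp (-u * ξ ω)) P := by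
    refine Integrable.mono' (integrable_const 1) hexpmeas.aestronglyMeasurable ?_
    filter_upwards [hξ] with ω ⟨h0, h1⟩
    rw [Real.norm_eq_abs, abs_of_nonneg (Real.exp_pos _).le]
    rw [show (1:ℝ) = Real.exp 0 by simp]
    exact Real.exp_le_exp.mpr (by nlinarith)
  -- μ ≤ 1
  have hμ1 : μ ≤ 1 := by
    rw [hμ]
    calc (∫ ω, ξ ω ∂P) ≤ ∫ _ω, (1:ℝ) ∂P := by
          refine integral_mono_ae hξint (integrable_const 1) ?_
          filter_upwards [hξ] with ω ⟨_, h1⟩ using h1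
      _ = 1 := by simp
  -- pointwise bound, integrated
  have hbound : (∫ ω, Real.exp (-u * ξ ω) ∂P) ≤ 1 - u * μ / 2 := by
    have hmono : (∫ ω, Real.exp (-u * ξ ω) ∂P) ≤ ∫ ω, (1 - u * ξ ω / 2) ∂P := by
      refine integral_mono_ae hexpint ((integrable_const 1).sub ((hξint.const_mul u).div_const 2)) ?_
      filter_upwards [hξ] with ω ⟨h0, h1⟩
      have := exp_neg_le_one_sub_half (t := u * ξ ω) (by positivity) (by nlinarith)
      simpa [neg_mul] using this
    have heq : (∫ ω, (1 - u * ξ ω / 2) ∂P) = 1 - u * μ / 2 := by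
      rw [integral_sub (integrable_const 1) ((hξint.const_mul u).div_const 2)]
      simp only [integral_const, measure_univ, probReal_univ, ENNReal.toReal_one, one_smul]
      rw [integral_div, integral_const_mul, ← hμ]
    linarith [hmono, heq.le]
  -- lower bound: the integral is positive
  have hpos : 0 < ∫ ω, Real.exp (-u * ξ ω) ∂P := by
    have : Real.exp (-1) ≤ ∫ ω, Real.exp (-u * ξ ω) ∂P := by
      calc Real.exp (-1) = ∫ _ω, Real.exp (-1) ∂P := by simp
        _ ≤ _ := by
            refine integral_mono_ae (integrable_const _) hexpint ?_
            filter_upwards [hξ] with ω ⟨h0, h1⟩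
            exact Real.exp_le_exp.mpr (by nlinarith)
    linarith [Real.exp_pos (-1)]
  have hhalf : 1 - u * μ / 2 > 0 := by nlinarith
  rw [hG]
  have hlog1 : Real.log (∫ ω, Real.exp (-u * ξ ω) ∂P) ≤ Real.log (1 - u * μ / 2) :=
    Real.log_le_log hpos hbound
  have hlog2 : Real.log (1 - u * μ / 2) ≤ -(u * μ / 2) := by
    have := Real.log_le_sub_one_of_pos hhalf
    linarith
  nlinarith [hlog1, hlog2]
end

section
/- The function h ↦ Γ(h; φ) is differentiable on (0,∞) with derivative Γ′(h; φ) = ∫_{ℝ^d} |φ(x)|² G′(h |φ(x)|²) dx, where G′(u) = E[ξ exp(−u ξ)]/E[exp(−u ξ)]; moreover 0 < Γ′(h; φ) ≤ (μ/p) ‖φ‖₂² for every h > 0, and Γ′(h; φ) → μ ‖φ‖₂² as h → 0⁺. -/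
open MeasureTheory ProbabilityTheory Real Filter Topology

section Aux
variable {Ω : Type*} [MeasurableSpace Ω] {P : Measure Ω} [IsProbabilityMeasure P]
  {ξ : Ω → ℝ}

/-- Laplace transform -/
noncomputable def EE (P : Measure Ω) (ξ : Ω → ℝ) : ℝ → ℝ :=
  fun u => ∫ ω, Real.exp (-u * ξ ω) ∂P

noncomputable def AA (P : Measure Ω) (ξ : Ω → ℝ) : ℝ → ℝ :=
  fun u => ∫ ω, ξ ω * Real.exp (-u * ξ ω) ∂P

lemma int_exp (hmeas : Measurable ξ) (hξ : ∀ᵐ ω ∂P, 0 ≤ ξ ω ∧ ξ ω ≤ 1) (u : ℝ) :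
    Integrable (fun ω => Real.exp (-u * ξ ω)) P := by
  refine (integrable_const (Real.exp |u|)).mono'
    ((hmeas.const_mul (-u)).exp.aestronglyMeasurable) ?_
  filter_upwards [hξ] with ω ⟨h0, h1⟩
  rw [Real.norm_eq_abs, abs_of_pos (Real.exp_pos _)]
  apply Real.exp_le_exp.mpr
  nlinarith [le_abs_self u, neg_abs_le u, abs_nonneg u]

lemma int_xi_exp (hmeas : Measurable ξ) (hξ : ∀ᵐ ω ∂P, 0 ≤ ξ ω ∧ ξ ω ≤ 1) (u : ℝ) :
    Integrable (fun ω => ξ ω * Real.exp (-u * ξ ω)) P := by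
  refine (integrable_const (Real.exp |u|)).mono'
    (hmeas.mul (hmeas.const_mul (-u)).exp).aestronglyMeasurable ?_
  filter_upwards [hξ] with ω ⟨h0, h1⟩
  rw [Real.norm_eq_abs, abs_of_nonneg (by positivity)]
  calc ξ ω * Real.exp (-u * ξ ω) ≤ 1 * Real.exp |u| := by
        apply mul_le_mul h1 (Real.exp_le_exp.mpr (by nlinarith [le_abs_self u, neg_abs_le u, abs_nonneg u])) (Real.exp_pos _).le zero_le_one
    _ = Real.exp |u| := one_mul _

lemma int_xi (hmeas : Measurable ξ) (hξ : ∀ᵐ ω ∂P, 0 ≤ ξ ω ∧ ξ ω ≤ 1) :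
    Integrable ξ P := by
  refine (integrable_const (1:ℝ)).mono' hmeas.aestronglyMeasurable ?_
  filter_upwards [hξ] with ω ⟨h0, h1⟩
  rwa [Real.norm_eq_abs, abs_of_nonneg h0]

lemma EE_ge (hmeas : Measurable ξ) (hξ : ∀ᵐ ω ∂P, 0 ≤ ξ ω ∧ ξ ω ≤ 1) (u : ℝ) :
    (P {ω | ξ ω = 0}).toReal ≤ EE P ξ u := by
  have hs : MeasurableSet {ω | ξ ω = 0} := hmeas (measurableSet_singleton 0)
  rw [← measureReal_def, ← MeasureTheory.integral_indicator_one hs]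
  refine integral_mono ((integrable_const (1:ℝ)).indicator hs) (int_exp hmeas hξ u) ?_
  intro ω
  by_cases h : ξ ω = 0
  · simp [Set.indicator_of_mem, h]
  · simp only [Set.indicator_apply, Set.mem_setOf_eq, if_neg h, Pi.one_apply]
    exact (Real.exp_pos _).le

lemma EE_le_one (hmeas : Measurable ξ) (hξ : ∀ᵐ ω ∂P, 0 ≤ ξ ω ∧ ξ ω ≤ 1)
    {u : ℝ} (hu : 0 ≤ u) : EE P ξ u ≤ 1 := by
  have : EE P ξ u ≤ ∫ _ω, (1:ℝ) ∂P := by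
    refine integral_mono_ae (int_exp hmeas hξ u) (integrable_const 1) ?_
    filter_upwards [hξ] with ω ⟨h0, h1⟩
    rw [← Real.exp_zero]
    apply Real.exp_le_exp.mpr
    nlinarith
  simpa using this

lemma AA_le_mu (hmeas : Measurable ξ) (hξ : ∀ᵐ ω ∂P, 0 ≤ ξ ω ∧ ξ ω ≤ 1)
    {u : ℝ} (hu : 0 ≤ u) : AA P ξ u ≤ ∫ ω, ξ ω ∂P := by
  refine integral_mono_ae (int_xi_exp hmeas hξ u) (int_xi hmeas hξ) ?_
  filter_upwards [hξ] with ω ⟨h0, h1⟩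
  calc ξ ω * Real.exp (-u * ξ ω) ≤ ξ ω * 1 := by
        apply mul_le_mul_of_nonneg_left _ h0
        rw [← Real.exp_zero]; apply Real.exp_le_exp.mpr; nlinarith
    _ = ξ ω := mul_one _

lemma AA_ge (hmeas : Measurable ξ) (hξ : ∀ᵐ ω ∂P, 0 ≤ ξ ω ∧ ξ ω ≤ 1)
    {u : ℝ} (hu : 0 ≤ u) : Real.exp (-u) * ∫ ω, ξ ω ∂P ≤ AA P ξ u := by
  have : ∫ ω, Real.exp (-u) * ξ ω ∂P ≤ AA P ξ u := by
    refine integral_mono_ae ((int_xi hmeas hξ).const_mul _) (int_xi_exp hmeas hξ u) ?_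
    filter_upwards [hξ] with ω ⟨h0, h1⟩
    rw [mul_comm]
    apply mul_le_mul_of_nonneg_left _ h0
    apply Real.exp_le_exp.mpr; nlinarith
  simpa [integral_const_mul] using this


lemma EE_cont (hmeas : Measurable ξ) (hξ : ∀ᵐ ω ∂P, 0 ≤ ξ ω ∧ ξ ω ≤ 1) :
    Continuous (EE P ξ) := by
  rw [continuous_iff_continuousAt]
  intro u₀
  refine continuousAt_of_dominated (bound := fun _ => Real.exp (|u₀| + 1))
    (Eventually.of_forall fun u => ((hmeas.const_mul (-u)).exp.aestronglyMeasurable)) ?_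
    (integrable_const _) ?_
  · filter_upwards [Metric.ball_mem_nhds u₀ one_pos] with u hu
    filter_upwards [hξ] with ω ⟨h0, h1⟩
    rw [Real.norm_eq_abs, abs_of_pos (Real.exp_pos _)]
    apply Real.exp_le_exp.mpr
    rw [Metric.mem_ball, Real.dist_eq] at hu
    have : |u| ≤ |u₀| + 1 := by
      calc |u| ≤ |u₀| + |u - u₀| := by
            have := abs_add_le u₀ (u - u₀); simpa using this
        _ ≤ |u₀| + 1 := by linarith
    nlinarith [le_abs_self u, neg_abs_le u, abs_nonneg u]
  · filter_upwards [hξ] with ω _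
    exact ((continuous_id.neg.mul continuous_const).rexp).continuousAt

lemma AA_cont (hmeas : Measurable ξ) (hξ : ∀ᵐ ω ∂P, 0 ≤ ξ ω ∧ ξ ω ≤ 1) :
    Continuous (AA P ξ) := by
  rw [continuous_iff_continuousAt]
  intro u₀
  refine continuousAt_of_dominated (bound := fun _ => Real.exp (|u₀| + 1))
    (Eventually.of_forall fun u =>
      (hmeas.mul (hmeas.const_mul (-u)).exp).aestronglyMeasurable) ?_
    (integrable_const _) ?_
  · filter_upwards [Metric.ball_mem_nhds u₀ one_pos] with u hu
    filter_upwards [hξ] with ω ⟨h0, h1⟩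
    rw [Real.norm_eq_abs, abs_of_nonneg (by positivity)]
    rw [Metric.mem_ball, Real.dist_eq] at hu
    have hub : |u| ≤ |u₀| + 1 := by
      calc |u| ≤ |u₀| + |u - u₀| := by
            have := abs_add_le u₀ (u - u₀); simpa using this
        _ ≤ |u₀| + 1 := by linarith
    calc ξ ω * Real.exp (-u * ξ ω) ≤ 1 * Real.exp (|u₀| + 1) := by
          apply mul_le_mul h1 (Real.exp_le_exp.mpr (by nlinarith [le_abs_self u, neg_abs_le u, abs_nonneg u])) (Real.exp_pos _).le zero_le_one
      _ = _ := one_mul _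
  · filter_upwards [hξ] with ω _
    exact (continuous_const.mul (continuous_id.neg.mul continuous_const).rexp).continuousAt

lemma EE_hasDeriv (hmeas : Measurable ξ) (hξ : ∀ᵐ ω ∂P, 0 ≤ ξ ω ∧ ξ ω ≤ 1) (u : ℝ) :
    HasDerivAt (EE P ξ) (-(AA P ξ u)) u := by
  have key := hasDerivAt_integral_of_dominated_loc_of_deriv_le (μ := P)
    (F := fun v ω => Real.exp (-v * ξ ω))
    (F' := fun v ω => -(ξ ω * Real.exp (-v * ξ ω)))
    (x₀ := u) (bound := fun _ => Real.exp (|u| + 1)) (Metric.ball_mem_nhds u one_pos)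
    (Eventually.of_forall fun v => ((hmeas.const_mul (-v)).exp.aestronglyMeasurable))
    (int_exp hmeas hξ u)
    ((hmeas.mul (hmeas.const_mul (-u)).exp).neg.aestronglyMeasurable)
    ?_ (integrable_const _) ?_
  · have : (∫ ω, -(ξ ω * Real.exp (-u * ξ ω)) ∂P) = -(AA P ξ u) := by
      rw [integral_neg]; rfl
    rw [this] at key
    exact key.2
  · filter_upwards [hξ] with ω ⟨h0, h1⟩
    intro v hv
    rw [Metric.mem_ball, Real.dist_eq] at hv
    have hub : |v| ≤ |u| + 1 := by
      calc |v| ≤ |u| + |v - u| := by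
            have := abs_add_le u (v - u); simpa using this
        _ ≤ |u| + 1 := by linarith
    rw [norm_neg, Real.norm_eq_abs, abs_of_nonneg (by positivity)]
    calc ξ ω * Real.exp (-v * ξ ω) ≤ 1 * Real.exp (|u| + 1) := by
          apply mul_le_mul h1 (Real.exp_le_exp.mpr (by nlinarith [le_abs_self v, neg_abs_le v, abs_nonneg v])) (Real.exp_pos _).le zero_le_one
      _ = _ := one_mul _
  · filter_upwards [hξ] with ω _
    intro v _
    have h1 : HasDerivAt (fun v : ℝ => -v * ξ ω) (-(ξ ω)) v := by
      simpa using ((hasDerivAt_id v).neg.mul_const (ξ ω))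
    have := h1.exp
    have e : -(ξ ω * Real.exp (-v * ξ ω)) = Real.exp (-v * ξ ω) * -(ξ ω) := by ring
    rw [e]; exact this

lemma EE_zero : EE P ξ 0 = 1 := by
  simp [EE]

lemma AA_zero : AA P ξ 0 = ∫ ω, ξ ω ∂P := by
  simp [AA]

end Aux


/-- `h ↦ Γ(h; φ)` is differentiable on `(0,∞)` with derivative
`Γ'(h; φ) = ∫ |φ(x)|² G'(h |φ(x)|²) dx`; moreover `0 < Γ'(h; φ) ≤ (μ/p) ‖φ‖₂²`
for every `h > 0`, and `Γ'(h; φ) → μ ‖φ‖₂²` as `h → 0⁺`. -/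
theorem Gamma_deriv_properties
    {Ω : Type*} [MeasurableSpace Ω] (P : Measure Ω) [IsProbabilityMeasure P]
    (ξ : Ω → ℝ) (hmeas : Measurable ξ)
    (hξ : ∀ᵐ ω ∂P, 0 ≤ ξ ω ∧ ξ ω ≤ 1)
    (p : ℝ) (hp : p = (P {ω | ξ ω = 0}).toReal) (hp0 : 0 < p) (hp1 : p < 1)
    (μ : ℝ) (hμ : μ = ∫ ω, ξ ω ∂P) (hμpos : 0 < μ)
    (ν : ℝ) (hν : ν = Real.log (1 / p))
    (G : ℝ → ℝ) (hG : ∀ u, G u = -Real.log (∫ ω, Real.exp (-u * ξ ω) ∂P))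
    (G' : ℝ → ℝ)
    (hG' : ∀ u, G' u = (∫ ω, ξ ω * Real.exp (-u * ξ ω) ∂P) /
        (∫ ω, Real.exp (-u * ξ ω) ∂P))
    (d : ℕ) (hd : 1 ≤ d)
    (φ : (Fin d → ℝ) → (Fin d → ℝ)) (hφmeas : Measurable φ)
    (hφint : Integrable (fun x => ∑ k, (φ x k) ^ 2))
    (hφpos : 0 < ∫ x, ∑ k, (φ x k) ^ 2)
    (Γ : ℝ → ℝ) (hΓ : ∀ h, Γ h = ∫ x, G (h * ∑ k, (φ x k) ^ 2))
    (Γ' : ℝ → ℝ)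
    (hΓ' : ∀ h, Γ' h = ∫ x, (∑ k, (φ x k) ^ 2) * G' (h * ∑ k, (φ x k) ^ 2)) :
    (∀ h, 0 < h → HasDerivAt Γ (Γ' h) h ∧ 0 < Γ' h ∧
        Γ' h ≤ μ / p * ∫ x, ∑ k, (φ x k) ^ 2) ∧
      Tendsto Γ' (𝓝[>] (0 : ℝ)) (𝓝 (μ * ∫ x, ∑ k, (φ x k) ^ 2)) := by
  obtain ⟨f, hfdef⟩ : ∃ f : (Fin d → ℝ) → ℝ, f = fun x => ∑ k, (φ x k) ^ 2 := ⟨_, rfl⟩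
  have hfx : ∀ x, f x = ∑ k, (φ x k) ^ 2 := fun x => by rw [hfdef]
  simp only [← hfx] at hφint hφpos hΓ hΓ' ⊢
  have hfmeas : Measurable f := by
    rw [hfdef]
    exact Finset.measurable_sum _ fun k _ => ((measurable_pi_apply k).comp hφmeas).pow_const 2
  have hf0 : ∀ x, 0 ≤ f x := fun x => by
    rw [hfx]; exact Finset.sum_nonneg fun k _ => sq_nonneg _
  -- Ω side
  have hEp : ∀ u, p ≤ EE P ξ u := fun u => hp ▸ EE_ge hmeas hξ u
  have hEpos : ∀ u, 0 < EE P ξ u := fun u => lt_of_lt_of_le hp0 (hEp u)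
  have hGE : ∀ u, G u = -Real.log (EE P ξ u) := hG
  have hG'AE : ∀ u, G' u = AA P ξ u / EE P ξ u := hG'
  have hG'cont : Continuous G' := by
    rw [funext hG'AE]
    exact (AA_cont hmeas hξ).div (EE_cont hmeas hξ) fun u => (hEpos u).ne'
  have hG'pos : ∀ u, 0 ≤ u → 0 < G' u := by
    intro u hu
    rw [hG'AE]
    refine div_pos (lt_of_lt_of_le ?_ (AA_ge hmeas hξ hu)) (hEpos u)
    rw [← hμ]; positivity
  have hG'le : ∀ u, 0 ≤ u → G' u ≤ μ / p := by
    intro u hu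
    rw [hG'AE]
    exact div_le_div₀ hμpos.le (hμ ▸ AA_le_mu hmeas hξ hu) hp0 (hEp u)
  have hG'0 : G' 0 = μ := by
    rw [hG'AE, AA_zero, EE_zero, div_one, ← hμ]
  have hGderiv : ∀ u, HasDerivAt G (G' u) u := by
    intro u
    have h1 : HasDerivAt (fun v => Real.log (EE P ξ v)) ((EE P ξ u)⁻¹ * (-(AA P ξ u))) u :=
      (Real.hasDerivAt_log (hEpos u).ne').comp u (EE_hasDeriv hmeas hξ u)
    rw [funext hGE, hG'AE]
    have e : AA P ξ u / EE P ξ u = -((EE P ξ u)⁻¹ * -(AA P ξ u)) := by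
      rw [mul_neg, neg_neg, div_eq_inv_mul]
    rw [e]; exact h1.neg
  have hGcont : Continuous G := continuous_iff_continuousAt.mpr fun u => (hGderiv u).continuousAt
  have hG0 : G 0 = 0 := by rw [hGE, EE_zero, Real.log_one, neg_zero]
  have hGle : ∀ u, 0 ≤ u → G u ≤ μ / p * u := by
    intro u hu
    have hmono : MonotoneOn (fun v => μ / p * v - G v) (Set.Ici 0) := by
      apply monotoneOn_of_deriv_nonneg (convex_Ici 0)
      · exact ((continuous_const.mul continuous_id).sub hGcont).continuousOn
      · intro x _
        exact (((hasDerivAt_id x).const_mul (μ / p)).sub (hGderiv x)).differentiableAt.differentiableWithinAt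
      · intro x hx
        rw [interior_Ici] at hx
        have hd : HasDerivAt (fun v => μ / p * v - G v) (μ / p * 1 - G' x) x :=
          ((hasDerivAt_id x).const_mul (μ / p)).sub (hGderiv x)
        rw [hd.deriv]
        have := hG'le x (le_of_lt hx)
        linarith
    have := hmono Set.self_mem_Ici hu hu
    simp only [mul_zero, hG0, sub_zero] at this
    linarith
  have hGnonneg : ∀ u, 0 ≤ u → 0 ≤ G u := by
    intro u hu
    rw [hGE]
    simp only [neg_nonneg]
    exact Real.log_nonpos (hEpos u).le (EE_le_one hmeas hξ hu)
  -- ℝ^d side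
  have hmeasg : ∀ t : ℝ, AEStronglyMeasurable (fun x => f x * G' (t * f x)) volume :=
    fun t => (hfmeas.mul (hG'cont.measurable.comp (measurable_const.mul hfmeas))).aestronglyMeasurable
  have hgnn : ∀ t : ℝ, 0 ≤ t → ∀ x, 0 ≤ f x * G' (t * f x) := fun t ht x =>
    mul_nonneg (hf0 x) (hG'pos _ (mul_nonneg ht (hf0 x))).le
  have hgle : ∀ t : ℝ, 0 ≤ t → ∀ x, f x * G' (t * f x) ≤ μ / p * f x := by
    intro t ht x
    rw [mul_comm (μ / p)]
    exact mul_le_mul_of_nonneg_left (hG'le _ (mul_nonneg ht (hf0 x))) (hf0 x)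
  have hbint : Integrable (fun x => μ / p * f x) := hφint.const_mul _
  have hgint : ∀ t : ℝ, 0 ≤ t → Integrable (fun x => f x * G' (t * f x)) := by
    intro t ht
    refine hbint.mono' (hmeasg t) (ae_of_all _ fun x => ?_)
    rw [Real.norm_eq_abs, abs_of_nonneg (hgnn t ht x)]
    exact hgle t ht x
  constructor
  · intro h hh
    have hderiv : HasDerivAt Γ (Γ' h) h := by
      have key := hasDerivAt_integral_of_dominated_loc_of_deriv_le (μ := volume)
        (F := fun t x => G (t * f x)) (F' := fun t x => f x * G' (t * f x))
        (x₀ := h) (bound := fun x => μ / p * f x) (Metric.ball_mem_nhds h (half_pos hh))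
        (Eventually.of_forall fun t =>
          (hGcont.measurable.comp (measurable_const.mul hfmeas)).aestronglyMeasurable)
        ?_ (hmeasg h) ?_ hbint ?_
      · rw [funext hΓ, hΓ' h]
        exact key.2
      · refine (hφint.const_mul (μ / p * h)).mono'
          ((hGcont.measurable.comp (measurable_const.mul hfmeas)).aestronglyMeasurable)
          (ae_of_all _ fun x => ?_)
        rw [Real.norm_eq_abs, abs_of_nonneg (hGnonneg _ (mul_nonneg hh.le (hf0 x)))]
        calc G (h * f x) ≤ μ / p * (h * f x) := hGle _ (mul_nonneg hh.le (hf0 x))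
          _ = μ / p * h * f x := by ring
      · refine ae_of_all _ fun x t ht => ?_
        rw [Metric.mem_ball, Real.dist_eq] at ht
        have ht0 : 0 ≤ t := by
          cases abs_sub_lt_iff.mp ht with
          | intro h1 h2 => linarith
        rw [Real.norm_eq_abs, abs_of_nonneg (hgnn t ht0 x)]
        exact hgle t ht0 x
      · refine ae_of_all _ fun x t _ => ?_
        have h1 : HasDerivAt (fun t : ℝ => t * f x) (f x) t := hasDerivAt_mul_const _
        have h2 := (hGderiv (t * f x)).comp t h1
        have e : G' (t * f x) * f x = f x * G' (t * f x) := mul_comm _ _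
        rw [e] at h2; exact h2
    refine ⟨hderiv, ?_, ?_⟩
    · by_contra hle
      push_neg at hle
      have hz : (∫ x, f x * G' (h * f x)) = 0 := by
        refine le_antisymm ?_ (integral_nonneg (hgnn h hh.le))
        rw [← hΓ' h]; exact hle
      have hae := (integral_eq_zero_iff_of_nonneg (hgnn h hh.le) (hgint h hh.le)).mp hz
      have hfz : f =ᵐ[volume] 0 := by
        filter_upwards [hae] with x hx
        simp only [Pi.zero_apply] at hx ⊢
        rcases mul_eq_zero.mp hx with h1 | h1
        · exact h1
        · exact absurd h1 (hG'pos _ (mul_nonneg hh.le (hf0 x))).ne'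
      have : (∫ x, f x) = 0 := by
        rw [integral_congr_ae hfz]; simp
      linarith
    · rw [hΓ' h]
      calc (∫ x, f x * G' (h * f x)) ≤ ∫ x, μ / p * f x :=
            integral_mono (hgint h hh.le) hbint (hgle h hh.le)
        _ = μ / p * ∫ x, f x := integral_const_mul _ _
  · rw [funext hΓ']
    have htarget : μ * ∫ x, f x = ∫ x, f x * μ := by
      rw [integral_mul_const]; ring
    rw [htarget]
    refine tendsto_integral_filter_of_dominated_convergence (bound := fun x => μ / p * f x)
      (Eventually.of_forall fun t => hmeasg t) ?_ hbint (ae_of_all _ fun x => ?_)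
    · filter_upwards [self_mem_nhdsWithin] with t ht
      refine ae_of_all _ fun x => ?_
      rw [Real.norm_eq_abs, abs_of_nonneg (hgnn t (le_of_lt ht) x)]
      exact hgle t (le_of_lt ht) x
    · have h1 : Tendsto (fun t : ℝ => t * f x) (𝓝[>] 0) (𝓝 0) := by
        have := (continuous_id.mul (continuous_const (y := f x))).tendsto (0 : ℝ)
        have this : Tendsto (fun t : ℝ => t * f x) (𝓝 0) (𝓝 0) := by simp at this; exact this
        exact this.mono_left nhdsWithin_le_nhds
      have h2 : Tendsto (fun t : ℝ => G' (t * f x)) (𝓝[>] 0) (𝓝 μ) := by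
        have := (hG'cont.continuousAt (x := 0)).tendsto.comp h1
        rwa [hG'0] at this
      exact h2.const_mul (f x)
end

section
/- For every h > 0 one has Γ(h; φ) < D_∞; moreover lim_{h→∞} Γ(h; φ) = D_∞ and lim_{h→∞} h · Γ′(h; φ) = 0, where Γ′(h; φ) = ∫_{ℝ^d} |φ(x)|² G′(h |φ(x)|²) dx. -/
open MeasureTheory ProbabilityTheory Real Filter Topology

/-- If `|{φ ≠ 0}| < ∞` and `D_∞ = ν |{φ ≠ 0}|`, then `Γ(h; φ) < D_∞` for every
`h > 0`, `Γ(h; φ) → D_∞` as `h → ∞`, and `h Γ'(h; φ) → 0` as `h → ∞`. -/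
theorem Gamma_limits_at_top
    {Ω : Type*} [MeasurableSpace Ω] (P : Measure Ω) [IsProbabilityMeasure P]
    (ξ : Ω → ℝ) (hmeas : Measurable ξ)
    (hξ : ∀ᵐ ω ∂P, 0 ≤ ξ ω ∧ ξ ω ≤ 1)
    (p : ℝ) (hp : p = (P {ω | ξ ω = 0}).toReal) (hp0 : 0 < p) (hp1 : p < 1)
    (μ : ℝ) (hμ : μ = ∫ ω, ξ ω ∂P) (hμpos : 0 < μ)
    (ν : ℝ) (hν : ν = Real.log (1 / p))
    (G : ℝ → ℝ) (hG : ∀ u, G u = -Real.log (∫ ω, Real.exp (-u * ξ ω) ∂P))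
    (G' : ℝ → ℝ)
    (hG' : ∀ u, G' u = (∫ ω, ξ ω * Real.exp (-u * ξ ω) ∂P) /
        (∫ ω, Real.exp (-u * ξ ω) ∂P))
    (d : ℕ) (hd : 1 ≤ d)
    (φ : (Fin d → ℝ) → (Fin d → ℝ)) (hφmeas : Measurable φ)
    (hφint : Integrable (fun x => ∑ k, (φ x k) ^ 2))
    (hφpos : 0 < ∫ x, ∑ k, (φ x k) ^ 2)
    (hsupp : volume {x | φ x ≠ 0} < ⊤)
    (Dinf : ℝ) (hDinf : Dinf = ν * (volume {x | φ x ≠ 0}).toReal)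
    (Γ : ℝ → ℝ) (hΓ : ∀ h, Γ h = ∫ x, G (h * ∑ k, (φ x k) ^ 2))
    (Γ' : ℝ → ℝ)
    (hΓ' : ∀ h, Γ' h = ∫ x, (∑ k, (φ x k) ^ 2) * G' (h * ∑ k, (φ x k) ^ 2)) :
    (∀ h, 0 < h → Γ h < Dinf) ∧ Tendsto Γ atTop (𝓝 Dinf) ∧
      Tendsto (fun h => h * Γ' h) atTop (𝓝 0) := by
  -- notation
  set f : (Fin d → ℝ) → ℝ := fun x => ∑ k, (φ x k) ^ 2 with hf
  set S : Set (Fin d → ℝ) := {x | φ x ≠ 0} with hS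
  set S0 : Set Ω := {ω | ξ ω = 0} with hS0
  set L : ℝ → ℝ := fun u => ∫ ω, Real.exp (-u * ξ ω) ∂P with hL
  set N : ℝ → ℝ := fun u => ∫ ω, ξ ω * Real.exp (-u * ξ ω) ∂P with hN
  set K : ℝ → ℝ := fun u => u * G' u with hK
  have hfmeas : Measurable f := by
    apply Finset.measurable_sum
    intro k _
    exact ((measurable_pi_apply k).comp hφmeas).pow_const 2
  have hfnn : ∀ x, 0 ≤ f x := fun x => Finset.sum_nonneg fun k _ => sq_nonneg _
  have hfzero : ∀ x, f x = 0 ↔ φ x = 0 := by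
    intro x
    rw [hf]
    simp only [Finset.sum_eq_zero_iff_of_nonneg (fun k _ => sq_nonneg (φ x k))]
    constructor
    · intro hz; funext k; exact pow_eq_zero_iff (n := 2) (by norm_num) |>.mp (hz k (Finset.mem_univ k))
    · intro hz k _; rw [hz]; simp
  have hSmeas : MeasurableSet S := (hφmeas (measurableSet_singleton 0)).compl
  have hSsupp : Function.support f = S := by
    ext x; simp only [Function.mem_support, hS, Set.mem_setOf_eq, ne_eq]
    rw [hfzero]
  have hSpos : 0 < volume S := by
    rw [← hSsupp]
    exact (integral_pos_iff_support_of_nonneg hfnn hφint).mp hφpos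
  -- Ω side basics
  have hS0meas : MeasurableSet S0 := hmeas (measurableSet_singleton 0)
  have hPS0lt : P S0 < 1 := by
    rcases lt_or_ge (P S0) 1 with h | h
    · exact h
    · have h1 : P S0 = 1 := le_antisymm prob_le_one h
      rw [hp, hS0, ← hS0, h1] at hp1
      simp at hp1
  have hPcompl : P S0ᶜ ≠ 0 := by
    rw [prob_compl_eq_one_sub hS0meas]
    simp only [ne_eq, tsub_eq_zero_iff_le, not_le]
    exact hPS0lt
  have hintAll : ∀ u : ℝ, Integrable (fun ω => Real.exp (-u * ξ ω)) P := by
    intro u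
    apply Integrable.mono' (integrable_const (Real.exp |u|))
      ((hmeas.const_mul (-u)).exp.aestronglyMeasurable)
    filter_upwards [hξ] with ω ⟨h0, h1⟩
    rw [Real.norm_eq_abs, abs_of_pos (Real.exp_pos _)]
    apply Real.exp_le_exp.mpr
    nlinarith [abs_nonneg u, le_abs_self u, neg_abs_le u]
  have hintN : ∀ u : ℝ, Integrable (fun ω => ξ ω * Real.exp (-u * ξ ω)) P := by
    intro u
    apply Integrable.mono' (integrable_const (Real.exp |u|))
      ((hmeas.mul (hmeas.const_mul (-u)).exp).aestronglyMeasurable)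
    filter_upwards [hξ] with ω ⟨h0, h1⟩
    simp only [Real.norm_eq_abs, Pi.mul_apply]; rw [abs_of_nonneg (mul_nonneg h0 (Real.exp_pos _).le)]
    have : Real.exp (-u * ξ ω) ≤ Real.exp |u| := by
      apply Real.exp_le_exp.mpr
      nlinarith [abs_nonneg u, le_abs_self u, neg_abs_le u]
    nlinarith [Real.exp_pos (-u * ξ ω)]
  have hLanti : Antitone L := by
    intro u v huv
    apply integral_mono_ae (hintAll v) (hintAll u)
    filter_upwards [hξ] with ω ⟨h0, h1⟩
    apply Real.exp_le_exp.mpr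
    nlinarith
  have hNanti : Antitone N := by
    intro u v huv
    apply integral_mono_ae (hintN v) (hintN u)
    filter_upwards [hξ] with ω ⟨h0, h1⟩
    have : Real.exp (-v * ξ ω) ≤ Real.exp (-u * ξ ω) := by
      apply Real.exp_le_exp.mpr; nlinarith
    nlinarith
  have hLmeas : Measurable L := hLanti.measurable
  have hNmeas : Measurable N := hNanti.measurable
  have hGeq : G = fun u => -Real.log (L u) := funext hG
  have hG'eq : G' = fun u => N u / L u := funext hG'
  have hGmeas : Measurable G := by rw [hGeq]; exact (Real.measurable_log.comp hLmeas).neg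
  have hKmeas : Measurable K := by
    rw [hK, hG'eq]; exact measurable_id.mul (hNmeas.div hLmeas)
  -- L bounds
  have hL1 : ∀ u : ℝ, 0 ≤ u → L u ≤ 1 := by
    intro u hu
    calc L u ≤ ∫ _ω, (1:ℝ) ∂P := by
          apply integral_mono_ae (hintAll u) (integrable_const 1)
          filter_upwards [hξ] with ω ⟨h0, h1⟩
          rw [← Real.exp_zero]
          apply Real.exp_le_exp.mpr; nlinarith
      _ = 1 := by simp
  have hLp : ∀ u : ℝ, p < L u := by
    intro u
    have hsplit := integral_add_compl hS0meas (hintAll u)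
    have h1 : ∫ ω in S0, Real.exp (-u * ξ ω) ∂P = p := by
      rw [setIntegral_congr_fun hS0meas (g := fun _ => (1:ℝ))
        (fun ω hω => by simp only [hS0, Set.mem_setOf_eq] at hω; simp [hω]),
        setIntegral_const]
      rw [hp]; simp [hS0, measureReal_def]
    have h2 : 0 < ∫ ω in S0ᶜ, Real.exp (-u * ξ ω) ∂P := by
      haveI : NeZero (P.restrict S0ᶜ) := ⟨by
        rw [ne_eq, Measure.restrict_eq_zero]; exact hPcompl⟩
      exact integral_exp_pos ((hintAll u).restrict)
    rw [hL]
    simp only at hsplit ⊢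
    linarith
  have hLpos : ∀ u : ℝ, 0 < L u := fun u => lt_trans hp0 (hLp u)
  have hG0 : G 0 = 0 := by
    rw [hG]; simp
  have hνpos : 0 < ν := by
    rw [hν]; exact Real.log_pos (one_lt_one_div hp0 hp1)
  -- G bounds
  have hGnn : ∀ u : ℝ, 0 ≤ u → 0 ≤ G u := by
    intro u hu
    rw [hGeq]
    simp only [neg_nonneg]
    exact Real.log_nonpos (le_of_lt (hLpos u)) (hL1 u hu)
  have hGlt : ∀ u : ℝ, G u < ν := by
    intro u
    rw [hGeq, hν, Real.log_div one_ne_zero (ne_of_gt hp0), Real.log_one, zero_sub, neg_lt_neg_iff]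
    exact Real.log_lt_log hp0 (hLp u)
  -- K bounds
  have hMeq : ∀ u : ℝ, u * N u = ∫ ω, u * (ξ ω * Real.exp (-u * ξ ω)) ∂P := by
    intro u; rw [hN]; exact (integral_const_mul u _).symm
  have hMbound : ∀ u : ℝ, 0 ≤ u → 0 ≤ u * N u ∧ u * N u ≤ 1 := by
    intro u hu
    rw [hMeq]
    constructor
    · apply integral_nonneg_of_ae
      filter_upwards [hξ] with ω ⟨h0, h1⟩
      positivity
    · calc (∫ ω, u * (ξ ω * Real.exp (-u * ξ ω)) ∂P) ≤ ∫ _ω, (1:ℝ) ∂P := by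
            apply integral_mono_ae ((hintN u).const_mul u) (integrable_const 1)
            filter_upwards [hξ] with ω ⟨h0, h1⟩
            have ht : 0 ≤ u * ξ ω := mul_nonneg hu h0
            have hexp : u * ξ ω * Real.exp (-(u * ξ ω)) ≤ 1 := by
              rw [Real.exp_neg, mul_inv_le_iff₀ (Real.exp_pos _), one_mul]
              linarith [Real.add_one_le_exp (u * ξ ω)]
            calc u * (ξ ω * Real.exp (-u * ξ ω)) = u * ξ ω * Real.exp (-(u * ξ ω)) := by
                  rw [neg_mul]; ring
              _ ≤ 1 := hexp
        _ = 1 := by simp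
  have hKval : ∀ u : ℝ, K u = (u * N u) / L u := by
    intro u; rw [hK, hG'eq]; simp only; rw [mul_div_assoc']
  have hKnn : ∀ u : ℝ, 0 ≤ u → 0 ≤ K u := by
    intro u hu; rw [hKval]
    exact div_nonneg (hMbound u hu).1 (le_of_lt (hLpos u))
  have hKle : ∀ u : ℝ, 0 ≤ u → K u ≤ 1 / p := by
    intro u hu; rw [hKval]
    exact div_le_div₀ zero_le_one (hMbound u hu).2 hp0 (le_of_lt (hLp u))
  have hK0 : K 0 = 0 := by rw [hK]; simp
  -- limits on the Ω side
  have hLtend : Tendsto L atTop (𝓝 p) := by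
    have hp' : p = ∫ ω, S0.indicator (fun _ => (1:ℝ)) ω ∂P := by
      rw [integral_indicator_const _ hS0meas, hp]; simp [hS0, measureReal_def]
    rw [hp']
    apply tendsto_integral_filter_of_dominated_convergence (fun _ => (1:ℝ))
    · exact Eventually.of_forall fun u => ((hmeas.const_mul (-u)).exp.aestronglyMeasurable)
    · filter_upwards [eventually_ge_atTop (0:ℝ)] with u hu
      filter_upwards [hξ] with ω ⟨h0, h1⟩
      rw [Real.norm_eq_abs, abs_of_pos (Real.exp_pos _), ← Real.exp_zero]
      apply Real.exp_le_exp.mpr; nlinarith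
    · exact integrable_const 1
    · filter_upwards [hξ] with ω ⟨h0, h1⟩
      rcases eq_or_lt_of_le h0 with hz | hz
      · have : ξ ω = 0 := hz.symm
        simp only [this, mul_zero, Real.exp_zero]
        have : S0.indicator (fun _ => (1:ℝ)) ω = 1 := by
          apply Set.indicator_of_mem; simp [hS0, this]
        rw [this]; exact tendsto_const_nhds
      · have hmem : S0.indicator (fun _ => (1:ℝ)) ω = 0 := by
          apply Set.indicator_of_notMem; simp [hS0]; linarith
        rw [hmem]
        have h1' : Tendsto (fun u : ℝ => -u * ξ ω) atTop atBot := by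
          have := (tendsto_id (α := ℝ) (x := atTop)).atTop_mul_const hz
          exact tendsto_neg_atBot_iff.mpr this |>.congr (fun u => by simp only [id_eq]; ring)
        exact Real.tendsto_exp_atBot.comp h1'
  have hGtend : Tendsto G atTop (𝓝 ν) := by
    rw [hGeq, hν, Real.log_div one_ne_zero (ne_of_gt hp0), Real.log_one, zero_sub]
    exact ((Real.continuousAt_log (ne_of_gt hp0)).tendsto.comp hLtend).neg
  have hMtend : Tendsto (fun u => u * N u) atTop (𝓝 0) := by
    have h0 : (0:ℝ) = ∫ _ω, (0:ℝ) ∂P := by simp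
    rw [h0]
    have : ∀ u : ℝ, u * N u = ∫ ω, u * (ξ ω * Real.exp (-u * ξ ω)) ∂P := hMeq
    simp only [this]
    apply tendsto_integral_filter_of_dominated_convergence (fun _ => (1:ℝ))
    · exact Eventually.of_forall fun u =>
        ((hmeas.mul (hmeas.const_mul (-u)).exp).const_mul u).aestronglyMeasurable
    · filter_upwards [eventually_ge_atTop (0:ℝ)] with u hu
      filter_upwards [hξ] with ω ⟨h0', h1⟩
      rw [Real.norm_eq_abs, abs_of_nonneg (by positivity)]
      have : u * ξ ω * Real.exp (-(u * ξ ω)) ≤ 1 := by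
        rw [Real.exp_neg, mul_inv_le_iff₀ (Real.exp_pos _), one_mul]
        linarith [Real.add_one_le_exp (u * ξ ω)]
      calc u * (ξ ω * Real.exp (-u * ξ ω)) = u * ξ ω * Real.exp (-(u * ξ ω)) := by
            rw [neg_mul]; ring
        _ ≤ 1 := this
    · exact integrable_const 1
    · filter_upwards [hξ] with ω ⟨h0', h1⟩
      rcases eq_or_lt_of_le h0' with hz | hz
      · have hz' : ξ ω = 0 := hz.symm
        simp [hz']
      · have : Tendsto (fun u : ℝ => u * ξ ω) atTop atTop :=
          (tendsto_id (α := ℝ) (x := atTop)).atTop_mul_const hz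
        have h2 := (tendsto_pow_mul_exp_neg_atTop_nhds_zero 1).comp this
        have h3 : Tendsto (fun u : ℝ => u * ξ ω * Real.exp (-(u * ξ ω))) atTop (𝓝 0) := by
          simpa [Function.comp_def] using h2
        apply h3.congr
        intro u
        rw [neg_mul]
        ring
  have hKtend : Tendsto K atTop (𝓝 0) := by
    have := hMtend.div hLtend (ne_of_gt hp0)
    simp only [zero_div] at this
    apply this.congr
    intro u
    rw [hKval]
    rfl
  -- ℝ^d side
  have hcompmeas : ∀ h : ℝ, Measurable fun x => h * f x := fun h => hfmeas.const_mul h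
  have hIndInt : ∀ c : ℝ, Integrable (S.indicator fun _ => c) volume := by
    intro c
    exact (integrableOn_const hsupp.ne).integrable_indicator hSmeas
  have hGfbound : ∀ h : ℝ, 0 ≤ h → ∀ x, ‖G (h * f x)‖ ≤ S.indicator (fun _ => ν) x := by
    intro h hh x
    by_cases hx : x ∈ S
    · rw [Set.indicator_of_mem hx, Real.norm_eq_abs,
        abs_of_nonneg (hGnn _ (mul_nonneg hh (hfnn x)))]
      exact le_of_lt (hGlt _)
    · rw [Set.indicator_of_notMem hx]
      have hfx : f x = 0 := by
        rw [hfzero]; simpa [hS] using hx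
      simp [hfx, hG0]
  have hGfint : ∀ h : ℝ, 0 ≤ h → Integrable (fun x => G (h * f x)) volume := by
    intro h hh
    apply Integrable.mono' (hIndInt ν) ((hGmeas.comp (hcompmeas h)).aestronglyMeasurable)
    exact Eventually.of_forall (hGfbound h hh)
  have hDind : Dinf = ∫ x, S.indicator (fun _ => ν) x := by
    rw [integral_indicator_const _ hSmeas, hDinf, smul_eq_mul, mul_comm, measureReal_def]
  refine ⟨?_, ?_, ?_⟩
  · -- strict inequality
    intro h hh
    have hdiff : 0 < ∫ x, (S.indicator (fun _ => ν) x - G (h * f x)) := by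
      apply (integral_pos_iff_support_of_nonneg ?_ ?_).mpr
      · apply lt_of_lt_of_le hSpos
        apply measure_mono
        intro x hx
        simp only [Function.mem_support]
        rw [Set.indicator_of_mem hx]
        have := hGlt (h * f x)
        intro habs
        have : G (h * f x) = ν := by linarith [sub_eq_zero.mp habs]
        linarith [hGlt (h * f x)]
      · intro x
        simp only [Pi.zero_apply, sub_nonneg]
        by_cases hx : x ∈ S
        · rw [Set.indicator_of_mem hx]; exact le_of_lt (hGlt _)
        · rw [Set.indicator_of_notMem hx]
          have hfx : f x = 0 := by rw [hfzero]; simpa [hS] using hx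
          simp [hfx, hG0]
      · exact (hIndInt ν).sub (hGfint h (le_of_lt hh))
    rw [integral_sub (hIndInt ν) (hGfint h (le_of_lt hh))] at hdiff
    rw [hΓ, hDind]
    have hgoal : (∫ x, G (h * f x)) < ∫ x, S.indicator (fun _ => ν) x := by linarith
    exact hgoal
  · -- Tendsto Γ
    have : Tendsto (fun h => ∫ x, G (h * f x)) atTop (𝓝 (∫ x, S.indicator (fun _ => ν) x)) := by
      apply tendsto_integral_filter_of_dominated_convergence (S.indicator fun _ => ν)
      · exact Eventually.of_forall fun h => (hGmeas.comp (hcompmeas h)).aestronglyMeasurable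
      · filter_upwards [eventually_ge_atTop (0:ℝ)] with h hh
        exact Eventually.of_forall (hGfbound h hh)
      · exact hIndInt ν
      · apply Eventually.of_forall
        intro x
        by_cases hx : x ∈ S
        · rw [Set.indicator_of_mem hx]
          have hfx : 0 < f x := by
            rcases lt_or_eq_of_le (hfnn x) with h | h
            · exact h
            · exfalso; apply hx; rw [hS, Set.mem_setOf_eq] at *; simp [(hfzero x).mp h.symm] at hx
          have : Tendsto (fun h : ℝ => h * f x) atTop atTop :=
            (tendsto_id (α := ℝ) (x := atTop)).atTop_mul_const hfx
          exact hGtend.comp this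
        · rw [Set.indicator_of_notMem hx]
          have hfx : f x = 0 := by rw [hfzero]; simpa [hS] using hx
          simp only [hfx, mul_zero, hG0]
          exact tendsto_const_nhds
    rw [← hDind] at this
    apply this.congr'
    filter_upwards with h
    rw [hΓ]
  · -- Tendsto h * Γ' h
    have heq : ∀ h : ℝ, h * Γ' h = ∫ x, K (h * f x) := by
      intro h
      rw [hΓ' h, ← integral_const_mul]
      congr 1
      funext x
      rw [hK]
      simp only [← hf]
      ring
    have h00 : (0:ℝ) = ∫ _x : Fin d → ℝ, (0:ℝ) := by simp
    have : Tendsto (fun h => ∫ x, K (h * f x)) atTop (𝓝 0) := by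
      rw [h00]
      apply tendsto_integral_filter_of_dominated_convergence (S.indicator fun _ => 1 / p)
      · exact Eventually.of_forall fun h => (hKmeas.comp (hcompmeas h)).aestronglyMeasurable
      · filter_upwards [eventually_ge_atTop (0:ℝ)] with h hh
        apply Eventually.of_forall
        intro x
        by_cases hx : x ∈ S
        · rw [Set.indicator_of_mem hx, Real.norm_eq_abs,
            abs_of_nonneg (hKnn _ (mul_nonneg hh (hfnn x)))]
          exact hKle _ (mul_nonneg hh (hfnn x))
        · rw [Set.indicator_of_notMem hx]
          have hfx : f x = 0 := by rw [hfzero]; simpa [hS] using hx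
          simp [hfx, hK0]
      · exact hIndInt (1 / p)
      · apply Eventually.of_forall
        intro x
        by_cases hx : x ∈ S
        · have hfx : 0 < f x := by
            rcases lt_or_eq_of_le (hfnn x) with h | h
            · exact h
            · exfalso; apply hx; rw [hS, Set.mem_setOf_eq] at *; simp [(hfzero x).mp h.symm] at hx
          have : Tendsto (fun h : ℝ => h * f x) atTop atTop :=
            (tendsto_id (α := ℝ) (x := atTop)).atTop_mul_const hfx
          exact hKtend.comp this
        · have hfx : f x = 0 := by rw [hfzero]; simpa [hS] using hx
          simp only [hfx, mul_zero, hK0]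
          exact tendsto_const_nhds
    apply this.congr'
    filter_upwards with h
    rw [heq]
end

section
/- The function h ↦ Γ(h; φ) − h Γ′(h; φ) is strictly increasing on (0,∞); it tends to 0 as h → 0⁺ and tends to D_∞ as h → ∞. Here Γ′(h; φ) = ∫_{ℝ^d} |φ(x)|² G′(h |φ(x)|²) dx with G′(u) = E[ξ exp(−u ξ)]/E[exp(−u ξ)]. -/
set_option linter.unusedSectionVars false

open MeasureTheory ProbabilityTheory Real Filter Topology

namespace GammaAux

variable {Ω : Type*} [MeasurableSpace Ω] (P : Measure Ω) [IsProbabilityMeasure P]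
  (ξ : Ω → ℝ)

noncomputable def L (u : ℝ) : ℝ := ∫ ω, Real.exp (-u * ξ ω) ∂P
noncomputable def L1 (u : ℝ) : ℝ := ∫ ω, ξ ω * Real.exp (-u * ξ ω) ∂P
noncomputable def L2 (u : ℝ) : ℝ := ∫ ω, (ξ ω) ^ 2 * Real.exp (-u * ξ ω) ∂P
noncomputable def g (u : ℝ) : ℝ := -Real.log (L P ξ u) - u * (L1 P ξ u / L P ξ u)

variable {P ξ}
variable (hmeas : Measurable ξ) (hξ : ∀ᵐ ω ∂P, 0 ≤ ξ ω ∧ ξ ω ≤ 1)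

section basic
include hmeas

lemma meas_exp (u : ℝ) : Measurable fun ω => Real.exp (-u * ξ ω) :=
  (hmeas.const_mul (-u)).exp

include hξ

lemma int_exp (u : ℝ) : Integrable (fun ω => Real.exp (-u * ξ ω)) P := by
  refine Integrable.mono' (integrable_const (Real.exp |u|))
    (meas_exp hmeas u).aestronglyMeasurable ?_
  filter_upwards [hξ] with ω ⟨h0, h1⟩
  rw [Real.norm_eq_abs, abs_of_pos (Real.exp_pos _)]
  apply Real.exp_le_exp.2
  nlinarith [neg_le_abs u, abs_nonneg u]

lemma int_xi_exp (u : ℝ) : Integrable (fun ω => ξ ω * Real.exp (-u * ξ ω)) P := by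
  refine Integrable.mono' (integrable_const (Real.exp |u|))
    (hmeas.mul (meas_exp hmeas u)).aestronglyMeasurable ?_
  filter_upwards [hξ] with ω ⟨h0, h1⟩
  rw [Real.norm_eq_abs, abs_of_nonneg (mul_nonneg h0 (Real.exp_pos _).le)]
  have h2 : Real.exp (-u * ξ ω) ≤ Real.exp |u| := by
    apply Real.exp_le_exp.2; nlinarith [neg_le_abs u, abs_nonneg u]
  nlinarith [Real.exp_pos (-u * ξ ω)]

lemma int_xi2_exp (u : ℝ) : Integrable (fun ω => (ξ ω) ^ 2 * Real.exp (-u * ξ ω)) P := by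
  refine Integrable.mono' (integrable_const (Real.exp |u|))
    ((hmeas.pow_const 2).mul (meas_exp hmeas u)).aestronglyMeasurable ?_
  filter_upwards [hξ] with ω ⟨h0, h1⟩
  rw [Real.norm_eq_abs, abs_of_nonneg (mul_nonneg (sq_nonneg _) (Real.exp_pos _).le)]
  have h2 : Real.exp (-u * ξ ω) ≤ Real.exp |u| := by
    apply Real.exp_le_exp.2; nlinarith [neg_le_abs u, abs_nonneg u]
  have h3 : ξ ω ^ 2 ≤ 1 := by nlinarith
  nlinarith [Real.exp_pos (-u * ξ ω)]

lemma L_pos (u : ℝ) : 0 < L P ξ u := by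
  have h1 : Real.exp (-|u|) ≤ L P ξ u := by
    have := integral_mono_ae (integrable_const (Real.exp (-|u|))) (int_exp hmeas hξ u) ?_
    · have h2 : (∫ _ω : Ω, Real.exp (-|u|) ∂P) = Real.exp (-|u|) := by simp
      rw [L, ← h2]; exact this
    · filter_upwards [hξ] with ω ⟨h0, h1⟩
      apply Real.exp_le_exp.2
      nlinarith [neg_abs_le u, abs_nonneg u, le_abs_self u]
  exact lt_of_lt_of_le (Real.exp_pos _) h1

lemma L1_nonneg (u : ℝ) : 0 ≤ L1 P ξ u := by
  refine integral_nonneg_of_ae ?_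
  filter_upwards [hξ] with ω ⟨h0, h1⟩
  exact mul_nonneg h0 (Real.exp_pos _).le

lemma L1_le_L (u : ℝ) : L1 P ξ u ≤ L P ξ u := by
  refine integral_mono_ae (int_xi_exp hmeas hξ u) (int_exp hmeas hξ u) ?_
  filter_upwards [hξ] with ω ⟨h0, h1⟩
  exact mul_le_of_le_one_left (Real.exp_pos _).le h1

lemma L_ge_p (u : ℝ) : (P {ω | ξ ω = 0}).toReal ≤ L P ξ u := by
  have hA : MeasurableSet {ω | ξ ω = 0} := hmeas (measurableSet_singleton 0)
  have h1 : ∫ ω, ({ω | ξ ω = 0}).indicator (fun _ => (1:ℝ)) ω ∂P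
      = (P {ω | ξ ω = 0}).toReal := by
    rw [integral_indicator hA]; simp [Measure.real]
  rw [← h1]
  refine integral_mono_ae ((integrable_const (1:ℝ)).indicator hA) (int_exp hmeas hξ u) ?_
  filter_upwards [hξ] with ω ⟨h0, h1⟩
  by_cases h : ξ ω = 0
  · simp [Set.indicator_apply, h]
  · simp only [Set.indicator_apply, Set.mem_setOf_eq, h, if_false]
    exact (Real.exp_pos _).le

lemma L_le_one {u : ℝ} (hu : 0 ≤ u) : L P ξ u ≤ 1 := by
  have := integral_mono_ae (int_exp hmeas hξ u) (integrable_const (1:ℝ)) ?_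
  · have h2 : (∫ _ω : Ω, (1:ℝ) ∂P) = 1 := by simp
    rw [L, ← h2]; exact this
  · filter_upwards [hξ] with ω ⟨h0, h1⟩
    rw [← Real.exp_zero]
    apply Real.exp_le_exp.2
    nlinarith

lemma L2_pos (hne : P {ω | ξ ω ≠ 0} ≠ 0) (u : ℝ) : 0 < L2 P ξ u := by
  rw [L2, integral_pos_iff_support_of_nonneg_ae]
  · refine lt_of_lt_of_le (pos_iff_ne_zero.2 hne) (measure_mono ?_)
    intro ω hω
    simp only [Set.mem_setOf_eq] at hω
    simp only [Function.mem_support]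
    positivity
  · filter_upwards [hξ] with ω ⟨h0, h1⟩
    positivity
  · exact int_xi2_exp hmeas hξ u

end basic

section cs
include hmeas hξ

lemma cs_ineq (u : ℝ) :
    L1 P ξ u ^ 2 ≤ (L P ξ u - (P {ω | ξ ω = 0}).toReal) * L2 P ξ u := by
  classical
  have hA : MeasurableSet {ω | ξ ω = 0} := hmeas (measurableSet_singleton 0)
  set a : Ω → ℝ := fun ω => if ξ ω = 0 then 0 else Real.exp (-(u/2) * ξ ω) with ha
  set b : Ω → ℝ := fun ω => ξ ω * Real.exp (-(u/2) * ξ ω) with hb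
  have hE : ∀ ω, Real.exp (-(u/2) * ξ ω) * Real.exp (-(u/2) * ξ ω)
      = Real.exp (-u * ξ ω) := by
    intro ω; rw [← Real.exp_add]; congr 1; ring
  have hab : (fun ω => a ω * b ω) = fun ω => ξ ω * Real.exp (-u * ξ ω) := by
    funext ω
    by_cases h : ξ ω = 0
    · simp [ha, hb, h]
    · simp only [ha, hb, h, if_false]
      rw [show Real.exp (-(u/2) * ξ ω) * (ξ ω * Real.exp (-(u/2) * ξ ω))
        = ξ ω * (Real.exp (-(u/2) * ξ ω) * Real.exp (-(u/2) * ξ ω)) by ring, hE]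
  have haa : (fun ω => a ω ^ 2) = fun ω =>
      Real.exp (-u * ξ ω) - ({ω | ξ ω = 0}).indicator (fun _ => (1:ℝ)) ω := by
    funext ω
    by_cases h : ξ ω = 0
    · simp [ha, h, Set.indicator_apply]
    · simp only [ha, h, if_false, Set.indicator_apply, Set.mem_setOf_eq]
      rw [sq, hE]; simp [h]
  have hbb : (fun ω => b ω ^ 2) = fun ω => ξ ω ^ 2 * Real.exp (-u * ξ ω) := by
    funext ω
    simp only [hb]
    rw [show (ξ ω * Real.exp (-(u/2) * ξ ω)) ^ 2
      = ξ ω ^ 2 * (Real.exp (-(u/2) * ξ ω) * Real.exp (-(u/2) * ξ ω)) by ring, hE]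
  have iind : Integrable (({ω | ξ ω = 0}).indicator (fun _ => (1:ℝ))) P :=
    (integrable_const (1:ℝ)).indicator hA
  have iaa : Integrable (fun ω => a ω ^ 2) P := by
    rw [haa]; exact (int_exp hmeas hξ u).sub iind
  have iab : Integrable (fun ω => a ω * b ω) P := by
    rw [hab]; exact int_xi_exp hmeas hξ u
  have ibb : Integrable (fun ω => b ω ^ 2) P := by
    rw [hbb]; exact int_xi2_exp hmeas hξ u
  have Iaa : ∫ ω, a ω ^ 2 ∂P = L P ξ u - (P {ω | ξ ω = 0}).toReal := by
    rw [haa, integral_sub (int_exp hmeas hξ u) iind, integral_indicator hA]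
    simp [L, Measure.real]
  have Iab : ∫ ω, a ω * b ω ∂P = L1 P ξ u := by rw [hab]; rfl
  have Ibb : ∫ ω, b ω ^ 2 ∂P = L2 P ξ u := by rw [hbb]; rfl
  have hq : ∀ t : ℝ, 0 ≤ (L P ξ u - (P {ω | ξ ω = 0}).toReal) * (t * t)
      + (2 * L1 P ξ u) * t + L2 P ξ u := by
    intro t
    have h0 : 0 ≤ ∫ ω, (t * a ω + b ω) ^ 2 ∂P :=
      integral_nonneg fun ω => sq_nonneg _
    have hexp : (fun ω => (t * a ω + b ω) ^ 2)
        = fun ω => t ^ 2 * a ω ^ 2 + (2 * t * (a ω * b ω) + b ω ^ 2) := by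
      funext ω; ring
    have i1 : Integrable (fun ω => t ^ 2 * a ω ^ 2) P := iaa.const_mul _
    have i2 : Integrable (fun ω => 2 * t * (a ω * b ω)) P := iab.const_mul _
    have i23 : Integrable (fun ω => 2 * t * (a ω * b ω) + b ω ^ 2) P := i2.add ibb
    rw [hexp, integral_add i1 i23, integral_add i2 ibb, integral_const_mul _ _,
      integral_const_mul _ _, Iaa, Iab, Ibb] at h0
    nlinarith [h0]
  have := discrim_le_zero hq
  rw [discrim] at this
  nlinarith [this]

lemma key_pos (hne : P {ω | ξ ω ≠ 0} ≠ 0) (hppos : 0 < (P {ω | ξ ω = 0}).toReal)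
    (u : ℝ) : 0 < L P ξ u * L2 P ξ u - L1 P ξ u ^ 2 := by
  have h1 := cs_ineq hmeas hξ u
  have h2 := L2_pos hmeas hξ hne u
  nlinarith

end cs

section deriv
include hmeas hξ

lemma hasDerivAt_L (u : ℝ) : HasDerivAt (L P ξ) (-(L1 P ξ u)) u := by
  have h := hasDerivAt_integral_of_dominated_loc_of_deriv_le (μ := P)
    (F := fun (x : ℝ) ω => Real.exp (-x * ξ ω))
    (F' := fun (x : ℝ) ω => -(ξ ω * Real.exp (-x * ξ ω)))
    (x₀ := u) (bound := fun _ => Real.exp (|u| + 1)) (Metric.ball_mem_nhds u one_pos)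
    (Eventually.of_forall fun x => (meas_exp hmeas x).aestronglyMeasurable)
    (int_exp hmeas hξ u)
    ((hmeas.mul (meas_exp hmeas u)).neg.aestronglyMeasurable)
    ?_ (integrable_const _) ?_
  · have heq : (∫ ω, -(ξ ω * Real.exp (-u * ξ ω)) ∂P) = -(L1 P ξ u) := by
      rw [integral_neg]; rfl
    rw [← heq]; exact h.2
  · filter_upwards [hξ] with ω ⟨h0, h1⟩
    intro x hx
    rw [Real.norm_eq_abs, abs_neg, abs_of_nonneg (mul_nonneg h0 (Real.exp_pos _).le)]
    have hxu : |x| ≤ |u| + 1 := by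
      have := abs_sub_abs_le_abs_sub x u
      have h2 : |x - u| ≤ 1 := le_of_lt (by simpa [Real.dist_eq] using hx)
      linarith
    have h2 : Real.exp (-x * ξ ω) ≤ Real.exp (|u| + 1) := by
      apply Real.exp_le_exp.2
      nlinarith [neg_le_abs x, abs_nonneg x, le_abs_self x]
    nlinarith [Real.exp_pos (-x * ξ ω)]
  · filter_upwards [hξ] with ω ⟨h0, h1⟩
    intro x hx
    have h1 : HasDerivAt (fun x : ℝ => -x * ξ ω) (-(ξ ω)) x := by
      simpa using ((hasDerivAt_id x).neg.mul_const (ξ ω))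
    have := h1.exp
    refine this.congr_deriv ?_
    ring

lemma hasDerivAt_L1 (u : ℝ) : HasDerivAt (L1 P ξ) (-(L2 P ξ u)) u := by
  have h := hasDerivAt_integral_of_dominated_loc_of_deriv_le (μ := P)
    (F := fun (x : ℝ) ω => ξ ω * Real.exp (-x * ξ ω))
    (F' := fun (x : ℝ) ω => -(ξ ω ^ 2 * Real.exp (-x * ξ ω)))
    (x₀ := u) (bound := fun _ => Real.exp (|u| + 1)) (Metric.ball_mem_nhds u one_pos)
    (Eventually.of_forall fun x => (hmeas.mul (meas_exp hmeas x)).aestronglyMeasurable)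
    (int_xi_exp hmeas hξ u)
    (((hmeas.pow_const 2).mul (meas_exp hmeas u)).neg.aestronglyMeasurable)
    ?_ (integrable_const _) ?_
  · have heq : (∫ ω, -(ξ ω ^ 2 * Real.exp (-u * ξ ω)) ∂P) = -(L2 P ξ u) := by
      rw [integral_neg]; rfl
    rw [← heq]; exact h.2
  · filter_upwards [hξ] with ω ⟨h0, h1⟩
    intro x hx
    rw [Real.norm_eq_abs, abs_neg, abs_of_nonneg (mul_nonneg (sq_nonneg _) (Real.exp_pos _).le)]
    have hxu : |x| ≤ |u| + 1 := by
      have := abs_sub_abs_le_abs_sub x u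
      have h2 : |x - u| ≤ 1 := le_of_lt (by simpa [Real.dist_eq] using hx)
      linarith
    have h2 : Real.exp (-x * ξ ω) ≤ Real.exp (|u| + 1) := by
      apply Real.exp_le_exp.2
      nlinarith [neg_le_abs x, abs_nonneg x, le_abs_self x]
    have h3 : ξ ω ^ 2 ≤ 1 := by nlinarith
    nlinarith [Real.exp_pos (-x * ξ ω)]
  · filter_upwards [hξ] with ω ⟨h0, h1⟩
    intro x hx
    have h1 : HasDerivAt (fun x : ℝ => -x * ξ ω) (-(ξ ω)) x := by
      simpa using ((hasDerivAt_id x).neg.mul_const (ξ ω))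
    have := h1.exp.const_mul (ξ ω)
    refine this.congr_deriv ?_
    ring

lemma hasDerivAt_g (u : ℝ) :
    HasDerivAt (g P ξ) (u * (L P ξ u * L2 P ξ u - L1 P ξ u ^ 2) / (L P ξ u) ^ 2) u := by
  have hL := hasDerivAt_L hmeas hξ u
  have hL1 := hasDerivAt_L1 hmeas hξ u
  have hLpos := L_pos hmeas hξ u
  have hlog : HasDerivAt (fun v => Real.log (L P ξ v)) (-(L1 P ξ u) / L P ξ u) u :=
    hL.log hLpos.ne'
  have hq : HasDerivAt (fun v => L1 P ξ v / L P ξ v)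
      ((-(L2 P ξ u) * L P ξ u - L1 P ξ u * -(L1 P ξ u)) / (L P ξ u) ^ 2) u :=
    hL1.div hL hLpos.ne'
  have h2 : HasDerivAt (fun v => v * (L1 P ξ v / L P ξ v))
      (1 * (L1 P ξ u / L P ξ u) + u * ((-(L2 P ξ u) * L P ξ u
        - L1 P ξ u * -(L1 P ξ u)) / (L P ξ u) ^ 2)) u :=
    (hasDerivAt_id u).mul hq
  have h3 := hlog.neg.sub h2
  refine h3.congr_deriv ?_
  field_simp [hLpos.ne']
  ring

lemma cont_g : Continuous (g P ξ) :=
  Differentiable.continuous (fun u => (hasDerivAt_g hmeas hξ u).differentiableAt)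

lemma g_strictMono (hne : P {ω | ξ ω ≠ 0} ≠ 0) (hppos : 0 < (P {ω | ξ ω = 0}).toReal) :
    StrictMonoOn (g P ξ) (Set.Ici 0) := by
  apply strictMonoOn_of_deriv_pos (convex_Ici 0) (cont_g hmeas hξ).continuousOn
  intro u hu
  rw [interior_Ici] at hu
  rw [(hasDerivAt_g hmeas hξ u).deriv]
  have h1 := key_pos hmeas hξ hne hppos u
  have h2 := L_pos hmeas hξ u
  exact div_pos (mul_pos hu h1) (pow_pos h2 2)

omit hmeas hξ in
lemma g_zero : g P ξ 0 = 0 := by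
  have hL0 : L P ξ 0 = 1 := by
    rw [L]
    simp
  rw [g, hL0]
  simp

lemma g_nonneg (hne : P {ω | ξ ω ≠ 0} ≠ 0) (hppos : 0 < (P {ω | ξ ω = 0}).toReal)
    {u : ℝ} (hu : 0 ≤ u) : 0 ≤ g P ξ u := by
  rcases eq_or_lt_of_le hu with h | h
  · rw [← h, g_zero]
  · rw [← g_zero (P := P) (ξ := ξ)]
    exact (g_strictMono hmeas hξ hne hppos Set.self_mem_Ici (le_of_lt h) h).le

lemma g_le_nu (hppos : 0 < (P {ω | ξ ω = 0}).toReal) {u : ℝ} (hu : 0 ≤ u) :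
    g P ξ u ≤ Real.log (1 / (P {ω | ξ ω = 0}).toReal) := by
  have hLpos := L_pos hmeas hξ u
  have h1 : 0 ≤ u * (L1 P ξ u / L P ξ u) :=
    mul_nonneg hu (div_nonneg (L1_nonneg hmeas hξ u) hLpos.le)
  have h2 : Real.log (P {ω | ξ ω = 0}).toReal ≤ Real.log (L P ξ u) :=
    Real.log_le_log hppos (L_ge_p hmeas hξ u)
  rw [one_div, Real.log_inv]
  rw [g]
  linarith

end deriv

section limits
include hmeas hξ

lemma L_tendsto : Tendsto (L P ξ) atTop (𝓝 (P {ω | ξ ω = 0}).toReal) := by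
  have hA : MeasurableSet {ω | ξ ω = 0} := hmeas (measurableSet_singleton 0)
  have hind : (∫ ω, ({ω | ξ ω = 0}).indicator (fun _ => (1:ℝ)) ω ∂P)
      = (P {ω | ξ ω = 0}).toReal := by
    rw [integral_indicator hA]; simp [Measure.real]
  rw [← hind]
  apply tendsto_integral_filter_of_dominated_convergence (bound := fun _ => (1:ℝ))
  · exact Eventually.of_forall fun u => (meas_exp hmeas u).aestronglyMeasurable
  · filter_upwards [eventually_ge_atTop (0:ℝ)] with u hu
    filter_upwards [hξ] with ω ⟨h0, h1⟩
    rw [Real.norm_eq_abs, abs_of_pos (Real.exp_pos _), ← Real.exp_zero]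
    apply Real.exp_le_exp.2; nlinarith
  · exact integrable_const _
  · filter_upwards [hξ] with ω ⟨h0, h1⟩
    by_cases h : ξ ω = 0
    · simp only [h, mul_zero, Real.exp_zero, Set.indicator_apply, Set.mem_setOf_eq, if_pos]
      exact tendsto_const_nhds
    · have hpos : 0 < ξ ω := lt_of_le_of_ne h0 (Ne.symm h)
      simp only [Set.indicator_apply, Set.mem_setOf_eq, h, if_false]
      have h2 : Tendsto (fun u : ℝ => -u * ξ ω) atTop atBot := by
        have h2' : Tendsto (fun u : ℝ => u * ξ ω) atTop atTop :=
          (tendsto_id (α := ℝ)).atTop_mul_const hpos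
        exact (tendsto_neg_atTop_atBot.comp h2').congr fun u => by
          simp [Function.comp_apply, neg_mul]
      exact Real.tendsto_exp_atBot.comp h2

lemma uL1_tendsto : Tendsto (fun u => u * L1 P ξ u) atTop (𝓝 0) := by
  have heq : ∀ u : ℝ, u * L1 P ξ u = ∫ ω, u * (ξ ω * Real.exp (-u * ξ ω)) ∂P := by
    intro u; rw [integral_const_mul]; rfl
  have h0 : (∫ ω, (0:ℝ) ∂P) = 0 := by simp
  rw [← h0]
  apply Tendsto.congr (fun u => (heq u).symm)
  apply tendsto_integral_filter_of_dominated_convergence (bound := fun _ => (1:ℝ))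
  · exact Eventually.of_forall fun u =>
      ((hmeas.mul (meas_exp hmeas u)).const_mul u).aestronglyMeasurable
  · filter_upwards [eventually_ge_atTop (0:ℝ)] with u hu
    filter_upwards [hξ] with ω ⟨h0, h1⟩
    have hnn : 0 ≤ u * (ξ ω * Real.exp (-u * ξ ω)) :=
      mul_nonneg hu (mul_nonneg h0 (Real.exp_pos _).le)
    rw [Real.norm_eq_abs, abs_of_nonneg hnn]
    have key : u * ξ ω ≤ Real.exp (u * ξ ω) := by
      have := Real.add_one_le_exp (u * ξ ω)
      linarith
    have h2 : u * (ξ ω * Real.exp (-u * ξ ω)) ≤ Real.exp (u * ξ ω) * Real.exp (-u * ξ ω) := by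
      have h3 : 0 < Real.exp (-u * ξ ω) := Real.exp_pos _
      nlinarith
    rw [← Real.exp_add] at h2
    simpa using h2
  · exact integrable_const _
  · filter_upwards [hξ] with ω ⟨h0, h1⟩
    by_cases h : ξ ω = 0
    · simp only [h, mul_zero, zero_mul]
      exact tendsto_const_nhds
    · have hpos : 0 < ξ ω := lt_of_le_of_ne h0 (Ne.symm h)
      have h2 : Tendsto (fun u : ℝ => u * ξ ω) atTop atTop :=
        (tendsto_id (α := ℝ)).atTop_mul_const hpos
      have h3 : Tendsto (fun t : ℝ => t * Real.exp (-t)) atTop (𝓝 0) := by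
        simpa using tendsto_pow_mul_exp_neg_atTop_nhds_zero 1
      have := h3.comp h2
      apply this.congr
      intro u
      simp only [Function.comp_apply]
      ring_nf

lemma g_tendsto (hppos : 0 < (P {ω | ξ ω = 0}).toReal) :
    Tendsto (g P ξ) atTop (𝓝 (Real.log (1 / (P {ω | ξ ω = 0}).toReal))) := by
  set p := (P {ω | ξ ω = 0}).toReal with hpdef
  have h1 : Tendsto (fun u => -Real.log (L P ξ u)) atTop (𝓝 (-Real.log p)) :=
    (((Real.continuousAt_log hppos.ne').tendsto).comp (L_tendsto hmeas hξ)).neg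
  have h2 : Tendsto (fun u => u * (L1 P ξ u / L P ξ u)) atTop (𝓝 0) := by
    have h3 : Tendsto (fun u => (u * L1 P ξ u) / L P ξ u) atTop (𝓝 (0 / p)) :=
      (uL1_tendsto hmeas hξ).div (L_tendsto hmeas hξ) hppos.ne'
    rw [zero_div] at h3
    apply h3.congr
    intro u; rw [mul_div_assoc]
  have h4 := h1.sub h2
  rw [sub_zero] at h4
  have h5 : -Real.log p = Real.log (1 / p) := by rw [one_div, Real.log_inv]
  rw [← h5]
  exact h4

end limits

end GammaAux

/-- `h ↦ Γ(h; φ) - h Γ'(h; φ)` is strictly increasing on `(0,∞)`, tends to `0`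
as `h → 0⁺` and tends to `D_∞` as `h → ∞`. -/
theorem Gamma_legendre_strict_mono
    {Ω : Type*} [MeasurableSpace Ω] (P : Measure Ω) [IsProbabilityMeasure P]
    (ξ : Ω → ℝ) (hmeas : Measurable ξ)
    (hξ : ∀ᵐ ω ∂P, 0 ≤ ξ ω ∧ ξ ω ≤ 1)
    (p : ℝ) (hp : p = (P {ω | ξ ω = 0}).toReal) (hp0 : 0 < p) (hp1 : p < 1)
    (μ : ℝ) (hμ : μ = ∫ ω, ξ ω ∂P) (hμpos : 0 < μ)
    (ν : ℝ) (hν : ν = Real.log (1 / p))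
    (G : ℝ → ℝ) (hG : ∀ u, G u = -Real.log (∫ ω, Real.exp (-u * ξ ω) ∂P))
    (G' : ℝ → ℝ)
    (hG' : ∀ u, G' u = (∫ ω, ξ ω * Real.exp (-u * ξ ω) ∂P) /
        (∫ ω, Real.exp (-u * ξ ω) ∂P))
    (d : ℕ) (hd : 1 ≤ d)
    (φ : (Fin d → ℝ) → (Fin d → ℝ)) (hφmeas : Measurable φ)
    (hφint : Integrable (fun x => ∑ k, (φ x k) ^ 2))
    (hφpos : 0 < ∫ x, ∑ k, (φ x k) ^ 2)
    (hsupp : volume {x | φ x ≠ 0} < ⊤)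
    (Dinf : ℝ) (hDinf : Dinf = ν * (volume {x | φ x ≠ 0}).toReal)
    (Γ : ℝ → ℝ) (hΓ : ∀ h, Γ h = ∫ x, G (h * ∑ k, (φ x k) ^ 2))
    (Γ' : ℝ → ℝ)
    (hΓ' : ∀ h, Γ' h = ∫ x, (∑ k, (φ x k) ^ 2) * G' (h * ∑ k, (φ x k) ^ 2)) :
    StrictMonoOn (fun h => Γ h - h * Γ' h) (Set.Ioi 0) ∧
      Tendsto (fun h => Γ h - h * Γ' h) (𝓝[>] (0 : ℝ)) (𝓝 0) ∧
      Tendsto (fun h => Γ h - h * Γ' h) atTop (𝓝 Dinf) := by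
  classical
  -- basic facts about the probability side
  have hppos : 0 < (P {ω | ξ ω = 0}).toReal := hp ▸ hp0
  have hAmeas : MeasurableSet {ω | ξ ω = 0} := hmeas (measurableSet_singleton 0)
  have hne : P {ω | ξ ω ≠ 0} ≠ 0 := by
    intro h
    have hcompl : {ω | ξ ω ≠ 0} = {ω | ξ ω = 0}ᶜ := by ext ω; simp
    rw [hcompl, prob_compl_eq_one_sub hAmeas] at h
    have h2 : P {ω | ξ ω = 0} = 1 :=
      le_antisymm prob_le_one (tsub_eq_zero_iff_le.mp h)
    rw [h2] at hp
    simp at hp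
    linarith
  have hnu : Real.log (1 / (P {ω | ξ ω = 0}).toReal) = ν := by rw [hν, hp]
  have hnu0 : 0 ≤ ν := by
    rw [hν, one_div, Real.log_inv]
    have : Real.log p ≤ 0 := Real.log_nonpos hp0.le hp1.le
    linarith
  -- abbreviations
  set g : ℝ → ℝ := GammaAux.g P ξ with hgdef0
  have hGg : ∀ u, G u = -Real.log (GammaAux.L P ξ u) := hG
  have hG'g : ∀ u, G' u = GammaAux.L1 P ξ u / GammaAux.L P ξ u := hG'
  have hgdef : ∀ u, g u = G u - u * G' u := by
    intro u
    rw [hgdef0, GammaAux.g, hGg, hG'g]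
  have hg0 : g 0 = 0 := GammaAux.g_zero
  have hmono : StrictMonoOn g (Set.Ici 0) := GammaAux.g_strictMono hmeas hξ hne hppos
  have hcontg : Continuous g := GammaAux.cont_g hmeas hξ
  have hgnonneg : ∀ {u : ℝ}, 0 ≤ u → 0 ≤ g u :=
    fun hu => GammaAux.g_nonneg hmeas hξ hne hppos hu
  have hgle : ∀ {u : ℝ}, 0 ≤ u → g u ≤ ν := by
    intro u hu
    rw [← hnu]
    exact GammaAux.g_le_nu hmeas hξ hppos hu
  have hgtend : Tendsto g atTop (𝓝 ν) := by
    rw [← hnu]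
    exact GammaAux.g_tendsto hmeas hξ hppos
  -- the spatial density
  set f : (Fin d → ℝ) → ℝ := fun x => ∑ k, (φ x k) ^ 2 with hfdef
  have hfmeas : Measurable f := by
    rw [hfdef]
    exact Finset.measurable_sum _ fun k _ =>
      ((measurable_pi_apply k).comp hφmeas).pow_const 2
  have hf0 : ∀ x, 0 ≤ f x := fun x => Finset.sum_nonneg fun k _ => sq_nonneg _
  have hfint : Integrable f := hφint
  have hSeq : {x | φ x ≠ 0} = {x | f x ≠ 0} := by
    ext x
    simp only [Set.mem_setOf_eq, hfdef, not_iff_not]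
    constructor
    · intro h; rw [h]; simp
    · intro h
      funext k
      have := (Finset.sum_eq_zero_iff_of_nonneg
        (fun i _ => sq_nonneg (φ x i))).mp h k (Finset.mem_univ k)
      exact (pow_eq_zero_iff two_ne_zero).mp this
  have hSmeas : MeasurableSet {x | f x ≠ 0} :=
    (hfmeas (measurableSet_singleton 0)).compl
  have hSfin : volume {x | f x ≠ 0} < ⊤ := hSeq ▸ hsupp
  have hSpos : 0 < volume {x | f x ≠ 0} :=
    (integral_pos_iff_support_of_nonneg hf0 hfint).1 hφpos
  have hΓ2 : ∀ h, Γ h = ∫ x, G (h * f x) := hΓ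
  have hΓ'2 : ∀ h, Γ' h = ∫ x, f x * G' (h * f x) := hΓ'
  -- integrable bound
  have hbnd : Integrable (({x | f x ≠ 0}).indicator (fun _ => ν)) := by
    rw [integrable_indicator_iff hSmeas]
    exact integrableOn_const hSfin.ne
  have hgm : ∀ h : ℝ, AEStronglyMeasurable (fun x => g (h * f x)) volume :=
    fun h => (hcontg.measurable.comp (hfmeas.const_mul h)).aestronglyMeasurable
  have normbnd : ∀ h : ℝ, 0 ≤ h → ∀ x,
      ‖g (h * f x)‖ ≤ ({x | f x ≠ 0}).indicator (fun _ => ν) x := by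
    intro h hh x
    by_cases hx : f x = 0
    · have : x ∉ {x | f x ≠ 0} := by simp [hx]
      rw [Set.indicator_of_notMem this]
      simp [hx, hg0]
    · have hfx : 0 ≤ h * f x := mul_nonneg hh (hf0 x)
      rw [Set.indicator_of_mem (by simpa using hx), Real.norm_eq_abs,
        abs_of_nonneg (hgnonneg hfx)]
      exact hgle hfx
  have ig : ∀ h : ℝ, 0 ≤ h → Integrable (fun x => g (h * f x)) := by
    intro h hh
    exact Integrable.mono' hbnd (hgm h) (Eventually.of_forall (normbnd h hh))
  -- integrability of the two pieces
  have iG : ∀ h : ℝ, 0 ≤ h → Integrable (fun x => G (h * f x)) := by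
    intro h hh
    refine Integrable.mono' hbnd ?_ (Eventually.of_forall ?_)
    · have : Continuous fun u => -Real.log (GammaAux.L P ξ u) := by
        have hc : Continuous (GammaAux.L P ξ) :=
          Differentiable.continuous fun u =>
            (GammaAux.hasDerivAt_L hmeas hξ u).differentiableAt
        exact (Real.continuousOn_log.comp_continuous hc fun u =>
          (GammaAux.L_pos hmeas hξ u).ne').neg
      have : Continuous G := by
        have he : G = fun u => -Real.log (GammaAux.L P ξ u) := funext hGg
        rw [he]; exact this
      exact (this.measurable.comp (hfmeas.const_mul h)).aestronglyMeasurable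
    · intro x
      have hfx : 0 ≤ h * f x := mul_nonneg hh (hf0 x)
      have hLpos := GammaAux.L_pos hmeas hξ (h * f x)
      have hG0 : 0 ≤ G (h * f x) := by
        rw [hGg]
        have := GammaAux.L_le_one hmeas hξ hfx
        simpa using Real.log_nonpos hLpos.le this
      have hGle : G (h * f x) ≤ ν := by
        rw [hGg, ← hnu, one_div, Real.log_inv]
        have := Real.log_le_log hppos (GammaAux.L_ge_p hmeas hξ (h * f x))
        linarith
      by_cases hx : f x = 0
      · have hx0 : h * f x = 0 := by rw [hx, mul_zero]
        have : G (h * f x) = 0 := by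
          rw [hGg, hx0]
          have : GammaAux.L P ξ 0 = 1 := by rw [GammaAux.L]; simp
          rw [this]; simp
        rw [this]
        have hxx : x ∉ {x | f x ≠ 0} := by simp [hx]
        rw [Set.indicator_of_notMem hxx]
        simp
      · rw [Set.indicator_of_mem (by simpa using hx), Real.norm_eq_abs,
          abs_of_nonneg hG0]
        exact hGle
  have iG' : ∀ h : ℝ, 0 ≤ h → Integrable (fun x => f x * G' (h * f x)) := by
    intro h hh
    refine Integrable.mono' hfint ?_ (Eventually.of_forall ?_)
    · have hc : Continuous (GammaAux.L P ξ) :=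
        Differentiable.continuous fun u =>
          (GammaAux.hasDerivAt_L hmeas hξ u).differentiableAt
      have hc1 : Continuous (GammaAux.L1 P ξ) :=
        Differentiable.continuous fun u =>
          (GammaAux.hasDerivAt_L1 hmeas hξ u).differentiableAt
      have hcq : Continuous fun u => GammaAux.L1 P ξ u / GammaAux.L P ξ u :=
        hc1.div hc fun u => (GammaAux.L_pos hmeas hξ u).ne'
      have he : G' = fun u => GammaAux.L1 P ξ u / GammaAux.L P ξ u := funext hG'g
      have hcq' : Continuous G' := by rw [he]; exact hcq
      exact (hfmeas.mul (hcq'.measurable.comp (hfmeas.const_mul h))).aestronglyMeasurable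
    · intro x
      have hLpos := GammaAux.L_pos hmeas hξ (h * f x)
      have h1 : 0 ≤ G' (h * f x) := by
        rw [hG'g]
        exact div_nonneg (GammaAux.L1_nonneg hmeas hξ _) hLpos.le
      have h2 : G' (h * f x) ≤ 1 := by
        rw [hG'g]
        exact (div_le_one hLpos).2 (GammaAux.L1_le_L hmeas hξ _)
      rw [Real.norm_eq_abs, abs_of_nonneg (mul_nonneg (hf0 x) h1)]
      nlinarith [hf0 x]
  -- key representation
  have key : ∀ h : ℝ, 0 ≤ h → Γ h - h * Γ' h = ∫ x, g (h * f x) := by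
    intro h hh
    rw [hΓ2 h, hΓ'2 h, ← integral_const_mul h,
      ← integral_sub (iG h hh) ((iG' h hh).const_mul h)]
    congr 1
    funext x
    rw [hgdef (h * f x)]
    ring
  refine ⟨?_, ?_, ?_⟩
  · -- strict monotonicity
    intro a ha b hb hab
    have ha' : (0:ℝ) < a := ha
    have hb' : (0:ℝ) < b := hb
    have isub : Integrable (fun x => g (b * f x) - g (a * f x)) :=
      (ig b hb'.le).sub (ig a ha'.le)
    have hdiff : 0 < ∫ x, (g (b * f x) - g (a * f x)) := by
      rw [integral_pos_iff_support_of_nonneg_ae ?_ isub]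
      · refine lt_of_lt_of_le hSpos (measure_mono ?_)
        intro x hx
        have hx' : f x ≠ 0 := hx
        have hfx : 0 < f x := lt_of_le_of_ne (hf0 x) (Ne.symm hx')
        have hlt : g (a * f x) < g (b * f x) :=
          hmono (mul_nonneg ha'.le (hf0 x)) (mul_nonneg hb'.le (hf0 x))
            (by nlinarith)
        exact ne_of_gt (sub_pos.2 hlt)
      · refine Eventually.of_forall fun x => ?_
        show (0:ℝ) ≤ g (b * f x) - g (a * f x)
        by_cases hx : f x = 0
        · simp [hx, hg0]
        · have hfx : 0 < f x := lt_of_le_of_ne (hf0 x) (Ne.symm hx)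
          have hle' : g (a * f x) ≤ g (b * f x) :=
            (hmono (mul_nonneg ha'.le (hf0 x)) (mul_nonneg hb'.le (hf0 x))
              (by nlinarith)).le
          show (0:ℝ) ≤ g (b * f x) - g (a * f x)
          linarith
    rw [integral_sub (ig b hb'.le) (ig a ha'.le)] at hdiff
    simp only
    rw [key a ha'.le, key b hb'.le]
    linarith
  · -- limit at 0⁺
    have hcongr : (fun h => Γ h - h * Γ' h) =ᶠ[𝓝[>] (0:ℝ)]
        fun h => ∫ x, g (h * f x) := by
      filter_upwards [self_mem_nhdsWithin] with h hh
      exact key h (le_of_lt hh)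
    rw [tendsto_congr' hcongr]
    have main : Tendsto (fun h => ∫ x, g (h * f x)) (𝓝[>] (0:ℝ))
        (𝓝 (∫ _x : Fin d → ℝ, (0:ℝ))) := by
      apply tendsto_integral_filter_of_dominated_convergence
        (bound := ({x | f x ≠ 0}).indicator (fun _ => ν))
      · exact Eventually.of_forall fun h => hgm h
      · filter_upwards [self_mem_nhdsWithin] with h hh
        exact Eventually.of_forall (normbnd h (le_of_lt hh))
      · exact hbnd
      · refine Eventually.of_forall fun x => ?_
        have t1 : Tendsto (fun h : ℝ => h * f x) (𝓝[>] (0:ℝ)) (𝓝 0) := by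
          have t0 : Tendsto (fun h : ℝ => h * f x) (𝓝 0) (𝓝 (0 * f x)) :=
            (continuous_mul_right (f x)).tendsto 0
          rw [zero_mul] at t0
          exact t0.mono_left nhdsWithin_le_nhds
        have t2 := (hcontg.tendsto 0).comp t1
        rw [hg0] at t2
        exact t2
    simpa using main
  · -- limit at ∞
    have hcongr : (fun h => Γ h - h * Γ' h) =ᶠ[atTop]
        fun h => ∫ x, g (h * f x) := by
      filter_upwards [eventually_ge_atTop (0:ℝ)] with h hh
      exact key h hh
    rw [tendsto_congr' hcongr]
    have hDeq : (∫ x, ({x | f x ≠ 0}).indicator (fun _ => ν) x) = Dinf := by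
      rw [integral_indicator hSmeas, hDinf, hSeq]
      simp [mul_comm, Measure.real]
    have main : Tendsto (fun h => ∫ x, g (h * f x)) atTop
        (𝓝 (∫ x, ({x | f x ≠ 0}).indicator (fun _ => ν) x)) := by
      apply tendsto_integral_filter_of_dominated_convergence
        (bound := ({x | f x ≠ 0}).indicator (fun _ => ν))
      · exact Eventually.of_forall fun h => hgm h
      · filter_upwards [eventually_ge_atTop (0:ℝ)] with h hh
        exact Eventually.of_forall (normbnd h hh)
      · exact hbnd
      · refine Eventually.of_forall fun x => ?_
        by_cases hx : f x = 0
        · have hxx : x ∉ {x | f x ≠ 0} := by simp [hx]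
          rw [Set.indicator_of_notMem hxx]
          have heq : (fun h : ℝ => g (h * f x)) = fun _ => (0:ℝ) := by
            funext h; rw [hx, mul_zero, hg0]
          rw [heq]
          exact tendsto_const_nhds
        · have hfx : 0 < f x := lt_of_le_of_ne (hf0 x) (Ne.symm hx)
          rw [Set.indicator_of_mem (by simpa using hx)]
          have t1 : Tendsto (fun h : ℝ => h * f x) atTop atTop :=
            (tendsto_id (α := ℝ)).atTop_mul_const hfx
          have t2 := hgtend.comp t1
          exact t2
    exact hDeq ▸ main
end

section
/- The function D ↦ 𝒢(φ; D) is finite, continuous and non-increasing on [0,∞); moreover 𝒢(φ; D) > 0 for every D with 0 ≤ D < D_∞, and 𝒢(φ; D) = 0 for every D ≥ D_∞. -/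
open MeasureTheory ProbabilityTheory Real Filter Topology

lemma aux_G
    {Ω : Type*} [MeasurableSpace Ω] (P : Measure Ω) [IsProbabilityMeasure P]
    (ξ : Ω → ℝ) (hmeas : Measurable ξ)
    (hξ : ∀ᵐ ω ∂P, 0 ≤ ξ ω ∧ ξ ω ≤ 1)
    (p : ℝ) (hp : p = (P {ω | ξ ω = 0}).toReal) (hp0 : 0 < p) (hp1 : p < 1)
    (μ : ℝ) (hμ : μ = ∫ ω, ξ ω ∂P) (hμpos : 0 < μ)
    (ν : ℝ) (hν : ν = Real.log (1 / p))
    (G : ℝ → ℝ) (hG : ∀ u, G u = -Real.log (∫ ω, Real.exp (-u * ξ ω) ∂P)) :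
    Continuous G ∧ G 0 = 0 ∧ (∀ u, 0 ≤ u → 0 ≤ G u) ∧ (∀ u, 0 ≤ u → G u ≤ ν) ∧
    (∀ u, 0 ≤ u → G u ≤ (2 * μ * max 1 ν) * u) ∧ Tendsto G atTop (𝓝 ν) := by
  have hνpos : 0 < ν := by
    rw [hν]
    apply Real.log_pos
    rw [lt_div_iff₀ hp0]; linarith
  set I : ℝ → ℝ := fun u => ∫ ω, Real.exp (-u * ξ ω) ∂P with hI
  have hFmeas : ∀ u : ℝ, Measurable fun ω => Real.exp (-u * ξ ω) :=
    fun u => (Real.measurable_exp.comp (measurable_const.mul hmeas))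
  have hint : ∀ u : ℝ, Integrable (fun ω => Real.exp (-u * ξ ω)) P := by
    intro u
    refine Integrable.mono' (integrable_const (Real.exp |u|)) (hFmeas u).aestronglyMeasurable ?_
    filter_upwards [hξ] with ω ⟨h0, h1⟩
    rw [Real.norm_eq_abs, abs_of_nonneg (Real.exp_nonneg _)]
    apply Real.exp_le_exp.2
    nlinarith [le_abs_self u, neg_abs_le u]
  have hsmeas : MeasurableSet {ω | ξ ω = 0} := hmeas (measurableSet_singleton 0)
  have hξint : Integrable ξ P := by
    refine Integrable.mono' (integrable_const (1 : ℝ)) hmeas.aestronglyMeasurable ?_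
    filter_upwards [hξ] with ω ⟨h0, h1⟩
    rw [Real.norm_eq_abs, abs_of_nonneg h0]; exact h1
  have Ipos : ∀ u : ℝ, 0 < I u := by
    intro u
    have hlb : Real.exp (-|u|) ≤ I u := by
      rw [show Real.exp (-|u|) = ∫ _ : Ω, Real.exp (-|u|) ∂P by simp]
      refine integral_mono_ae (integrable_const _) (hint u) ?_
      filter_upwards [hξ] with ω ⟨h0, h1⟩
      apply Real.exp_le_exp.2
      nlinarith [le_abs_self u, neg_abs_le u]
    exact lt_of_lt_of_le (Real.exp_pos _) hlb
  have Iub : ∀ u : ℝ, 0 ≤ u → I u ≤ 1 := by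
    intro u hu
    rw [show (1 : ℝ) = ∫ _ : Ω, (1 : ℝ) ∂P by simp]
    refine integral_mono_ae (hint u) (integrable_const _) ?_
    filter_upwards [hξ] with ω ⟨h0, h1⟩
    rw [Real.exp_le_one_iff]
    nlinarith
  have Ilb : ∀ u : ℝ, p ≤ I u := by
    intro u
    have h1 : ∫ ω in {ω | ξ ω = 0}, Real.exp (-u * ξ ω) ∂P = p := by
      rw [setIntegral_congr_fun hsmeas (g := fun _ => (1 : ℝ))
        (fun ω hω => by simp only [Set.mem_setOf_eq] at hω; simp [hω]), setIntegral_const, hp, smul_eq_mul, mul_one]; rfl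
    rw [← h1]
    refine setIntegral_le_integral (hint u) ?_
    filter_upwards with ω using Real.exp_nonneg _
  have Icont : Continuous I := by
    rw [continuous_iff_continuousAt]
    intro u₀
    apply continuousAt_of_dominated (bound := fun _ => Real.exp (|u₀| + 1))
    · exact Eventually.of_forall fun u => (hFmeas u).aestronglyMeasurable
    · filter_upwards [Metric.ball_mem_nhds u₀ one_pos] with u hu
      filter_upwards [hξ] with ω ⟨h0, h1⟩
      rw [Real.norm_eq_abs, abs_of_nonneg (Real.exp_nonneg _)]
      apply Real.exp_le_exp.2
      have : |u| ≤ |u₀| + 1 := by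
        have := abs_sub_abs_le_abs_sub u u₀
        rw [Metric.mem_ball, Real.dist_eq] at hu
        linarith
      nlinarith [le_abs_self u, neg_abs_le u]
    · exact integrable_const _
    · filter_upwards with ω
      exact (Real.continuous_exp.comp ((continuous_neg.mul continuous_const))).continuousAt
  have hGI : ∀ u, G u = -Real.log (I u) := hG
  have Gcont : Continuous G := by
    have : Continuous fun u => -Real.log (I u) :=
      (Icont.log fun u => (Ipos u).ne').neg
    exact (funext hGI : G = _) ▸ this
  have hI0 : I 0 = 1 := by simp [hI]
  have hG0 : G 0 = 0 := by rw [hGI, hI0, Real.log_one, neg_zero]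
  have Gnonneg : ∀ u, 0 ≤ u → 0 ≤ G u := by
    intro u hu
    rw [hGI]
    simp only [Left.nonneg_neg_iff]
    exact Real.log_nonpos (Ipos u).le (Iub u hu)
  have Gle : ∀ u, 0 ≤ u → G u ≤ ν := by
    intro u hu
    rw [hGI, hν, one_div, Real.log_inv, neg_le_neg_iff]
    exact Real.log_le_log hp0 (Ilb u)
  have Ilin : ∀ u : ℝ, 0 ≤ u → 1 - u * μ ≤ I u := by
    intro u hu
    have : ∫ ω, (1 - u * ξ ω) ∂P = 1 - u * μ := by
      rw [integral_sub (integrable_const _) (hξint.const_mul u), integral_const_mul, hμ]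
      simp
    rw [← this]
    refine integral_mono_ae (by exact (integrable_const (1:ℝ)).sub (hξint.const_mul u)) (hint u) ?_
    filter_upwards with ω
    have := Real.add_one_le_exp (-u * ξ ω)
    linarith
  have Glin : ∀ u, 0 ≤ u → G u ≤ (2 * μ * max 1 ν) * u := by
    intro u hu
    rcases le_or_gt (u * μ) (1 / 2) with hc | hc
    · have h2 : (0 : ℝ) < 1 - u * μ := by nlinarith
      have h3 : G u ≤ -Real.log (1 - u * μ) := by
        rw [hGI, neg_le_neg_iff]
        exact Real.log_le_log h2 (Ilin u hu)
      have h4 : -Real.log (1 - u * μ) = Real.log (1 - u * μ)⁻¹ := (Real.log_inv _).symm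
      have h5 : Real.log (1 - u * μ)⁻¹ ≤ (1 - u * μ)⁻¹ - 1 :=
        Real.log_le_sub_one_of_pos (by positivity)
      have h6 : (1 - u * μ)⁻¹ ≤ 1 + 2 * (u * μ) := by
        rw [inv_eq_one_div, div_le_iff₀ h2]
        nlinarith [mul_nonneg hu hμpos.le]
      have h7 : 2 * (u * μ) ≤ (2 * μ * max 1 ν) * u := by
        nlinarith [le_max_left (1:ℝ) ν, mul_nonneg hu hμpos.le]
      linarith
    · have h1 : G u ≤ ν := Gle u hu
      have h2 : ν ≤ (2 * μ * max 1 ν) * u := by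
        nlinarith [le_max_right (1:ℝ) ν, hνpos]
      linarith
  refine ⟨Gcont, hG0, Gnonneg, Gle, Glin, ?_⟩
  -- Tendsto G atTop (𝓝 ν)
  have Itend : Tendsto I atTop (𝓝 p) := by
    have hpeq : p = ∫ ω, Set.indicator {ω | ξ ω = 0} (fun _ => (1:ℝ)) ω ∂P := by
      rw [integral_indicator_const _ hsmeas, smul_eq_mul, mul_one, hp]; rfl
    rw [hpeq]
    apply tendsto_integral_filter_of_dominated_convergence (bound := fun _ => (1 : ℝ))
    · exact Eventually.of_forall fun u => (hFmeas u).aestronglyMeasurable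
    · filter_upwards [eventually_ge_atTop (0:ℝ)] with u hu
      filter_upwards [hξ] with ω ⟨h0, h1⟩
      rw [Real.norm_eq_abs, abs_of_nonneg (Real.exp_nonneg _), Real.exp_le_one_iff]
      nlinarith
    · exact integrable_const _
    · filter_upwards [hξ] with ω ⟨h0, h1⟩
      rcases eq_or_lt_of_le h0 with h | h
      · have hmem : ω ∈ {ω | ξ ω = 0} := by simp [← h]
        rw [Set.indicator_of_mem hmem]
        simp [← h]
      · have hmem : ω ∉ {ω | ξ ω = 0} := by simp [h.ne']
        rw [Set.indicator_of_notMem hmem]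
        have h2 : Tendsto (fun u : ℝ => -u * ξ ω) atTop atBot := by
          have h3 := (tendsto_id.atTop_mul_const h : Tendsto (fun u : ℝ => u * ξ ω) atTop atTop)
          have h4 := tendsto_neg_atTop_atBot.comp h3
          simpa only [Function.comp_def, neg_mul] using h4
        exact Real.tendsto_exp_atBot.comp h2
  have : Tendsto (fun u => -Real.log (I u)) atTop (𝓝 (-Real.log p)) :=
    (((Real.continuousAt_log hp0.ne').tendsto).comp Itend).neg
  rw [show ν = -Real.log p by rw [hν, one_div, Real.log_inv]]
  exact (funext hGI : G = _) ▸ this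


lemma aux_Gamma
    (ν : ℝ) (hνpos : 0 < ν) (K : ℝ)
    (G : ℝ → ℝ) (Gcont : Continuous G) (hG0 : G 0 = 0)
    (Gnonneg : ∀ u, 0 ≤ u → 0 ≤ G u) (Gle : ∀ u, 0 ≤ u → G u ≤ ν)
    (Glin : ∀ u, 0 ≤ u → G u ≤ K * u) (Glim : Tendsto G atTop (𝓝 ν))
    (d : ℕ)
    (φ : (Fin d → ℝ) → (Fin d → ℝ)) (hφmeas : Measurable φ)
    (hφint : Integrable (fun x => ∑ k, (φ x k) ^ 2))
    (hsupp : volume {x | φ x ≠ 0} < ⊤)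
    (Dinf : ℝ) (hDinf : Dinf = ν * (volume {x | φ x ≠ 0}).toReal)
    (Γ : ℝ → ℝ) (hΓ : ∀ h, Γ h = ∫ x, G (h * ∑ k, (φ x k) ^ 2)) :
    (∀ h, 0 ≤ h → 0 ≤ Γ h) ∧ (∀ h, 0 ≤ h → Γ h ≤ Dinf) ∧
    (∀ h, 0 ≤ h → Γ h ≤ (K * ∫ x, ∑ k, (φ x k) ^ 2) * h) ∧
    Tendsto Γ atTop (𝓝 Dinf) := by
  set s : (Fin d → ℝ) → ℝ := fun x => ∑ k, (φ x k) ^ 2 with hs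
  have hsmeas : Measurable s :=
    Finset.measurable_sum _ fun k _ => ((measurable_pi_apply k).comp hφmeas).pow_const 2
  have hs0 : ∀ x, 0 ≤ s x := fun x => Finset.sum_nonneg fun k _ => sq_nonneg _
  have hsiff : ∀ x, s x = 0 ↔ φ x = 0 := by
    intro x
    constructor
    · intro h
      funext k
      have hk := (Finset.sum_eq_zero_iff_of_nonneg (fun k _ => sq_nonneg (φ x k))).1 h k
        (Finset.mem_univ k)
      have : φ x k = 0 := by nlinarith [sq_nonneg (φ x k), sq_abs (φ x k)]
      simpa using this
    · intro h
      have : ∀ k, φ x k = 0 := fun k => by rw [h]; rfl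
      simp [hs, this]
  set A : Set (Fin d → ℝ) := {x | φ x ≠ 0} with hA
  have hAmeas : MeasurableSet A := (hφmeas (measurableSet_singleton 0)).compl
  set ind : (Fin d → ℝ) → ℝ := A.indicator (fun _ => ν) with hind
  have indInt : Integrable ind := by
    rw [hind, integrable_indicator_iff hAmeas]
    exact integrableOn_const hsupp.ne
  have indInteg : ∫ x, ind x = Dinf := by
    rw [hind, integral_indicator_const _ hAmeas, smul_eq_mul, hDinf, mul_comm]; rfl
  have gbound : ∀ h : ℝ, 0 ≤ h → ∀ x, G (h * s x) ≤ ind x := by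
    intro h hh x
    by_cases hx : φ x = 0
    · rw [(hsiff x).2 hx, mul_zero, hG0, hind, Set.indicator_of_notMem (by simp [hA, hx])]
    · rw [hind, Set.indicator_of_mem (by simp [hA, hx])]
      exact Gle _ (mul_nonneg hh (hs0 x))
  have gnonneg : ∀ h : ℝ, 0 ≤ h → ∀ x, 0 ≤ G (h * s x) := fun h hh x =>
    Gnonneg _ (mul_nonneg hh (hs0 x))
  have gmeas : ∀ h : ℝ, AEStronglyMeasurable (fun x => G (h * s x)) volume :=
    fun h => (Gcont.measurable.comp (measurable_const.mul hsmeas)).aestronglyMeasurable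
  have gInt : ∀ h : ℝ, 0 ≤ h → Integrable (fun x => G (h * s x)) := by
    intro h hh
    refine Integrable.mono' indInt (gmeas h) ?_
    filter_upwards with x
    rw [Real.norm_eq_abs, abs_of_nonneg (gnonneg h hh x)]
    exact gbound h hh x
  have Γnonneg : ∀ h, 0 ≤ h → 0 ≤ Γ h := by
    intro h hh
    rw [hΓ]
    exact integral_nonneg (gnonneg h hh)
  have ΓleD : ∀ h, 0 ≤ h → Γ h ≤ Dinf := by
    intro h hh
    rw [hΓ, ← indInteg]
    exact integral_mono (gInt h hh) indInt (gbound h hh)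
  have Γlin : ∀ h, 0 ≤ h → Γ h ≤ (K * ∫ x, s x) * h := by
    intro h hh
    rw [hΓ]
    calc ∫ x, G (h * s x) ≤ ∫ x, (K * h) * s x := by
          refine integral_mono (gInt h hh) (hφint.const_mul _) ?_
          intro x
          have := Glin (h * s x) (mul_nonneg hh (hs0 x))
          calc G (h * s x) ≤ K * (h * s x) := this
            _ = (K * h) * s x := by ring
      _ = (K * h) * ∫ x, s x := integral_const_mul _ _
      _ = (K * ∫ x, s x) * h := by ring
  refine ⟨Γnonneg, ΓleD, Γlin, ?_⟩
  have : Tendsto (fun h => ∫ x, G (h * s x)) atTop (𝓝 (∫ x, ind x)) := by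
    apply tendsto_integral_filter_of_dominated_convergence (bound := ind)
    · exact Eventually.of_forall gmeas
    · filter_upwards [eventually_ge_atTop (0:ℝ)] with h hh
      filter_upwards with x
      rw [Real.norm_eq_abs, abs_of_nonneg (gnonneg h hh x)]
      exact gbound h hh x
    · exact indInt
    · filter_upwards with x
      by_cases hx : φ x = 0
      · have hsx : s x = 0 := (hsiff x).2 hx
        have hiz : ind x = 0 := by rw [hind, Set.indicator_of_notMem (by simp [hA, hx])]
        rw [hiz]
        simp only [hsx, mul_zero, hG0]
        exact tendsto_const_nhds
      · have hsx : 0 < s x := lt_of_le_of_ne (hs0 x) (Ne.symm (fun hq => hx ((hsiff x).1 hq)))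
        rw [hind, Set.indicator_of_mem (by simp [hA, hx])]
        have h2 : Tendsto (fun h : ℝ => h * s x) atTop atTop :=
          tendsto_id.atTop_mul_const hsx
        exact Glim.comp h2
  rw [show Γ = fun h => ∫ x, G (h * s x) from funext hΓ, ← indInteg]
  exact this


set_option maxHeartbeats 1000000 in
/-- `D ↦ 𝒢(φ; D) = sup_{h>0} h⁻¹ (Γ(h; φ) - D)` is finite (the defining set is
bounded above), continuous and non-increasing on `[0,∞)`; it is positive for
`0 ≤ D < D_∞` and vanishes for `D ≥ D_∞`. -/
theorem calG_properties
    {Ω : Type*} [MeasurableSpace Ω] (P : Measure Ω) [IsProbabilityMeasure P]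
    (ξ : Ω → ℝ) (hmeas : Measurable ξ)
    (hξ : ∀ᵐ ω ∂P, 0 ≤ ξ ω ∧ ξ ω ≤ 1)
    (p : ℝ) (hp : p = (P {ω | ξ ω = 0}).toReal) (hp0 : 0 < p) (hp1 : p < 1)
    (μ : ℝ) (hμ : μ = ∫ ω, ξ ω ∂P) (hμpos : 0 < μ)
    (ν : ℝ) (hν : ν = Real.log (1 / p))
    (G : ℝ → ℝ) (hG : ∀ u, G u = -Real.log (∫ ω, Real.exp (-u * ξ ω) ∂P))
    (d : ℕ) (hd : 1 ≤ d)
    (φ : (Fin d → ℝ) → (Fin d → ℝ)) (hφmeas : Measurable φ)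
    (hφint : Integrable (fun x => ∑ k, (φ x k) ^ 2))
    (hφpos : 0 < ∫ x, ∑ k, (φ x k) ^ 2)
    (hsupp : volume {x | φ x ≠ 0} < ⊤)
    (Dinf : ℝ) (hDinf : Dinf = ν * (volume {x | φ x ≠ 0}).toReal)
    (Γ : ℝ → ℝ) (hΓ : ∀ h, Γ h = ∫ x, G (h * ∑ k, (φ x k) ^ 2))
    (𝒢 : ℝ → ℝ)
    (h𝒢 : ∀ D, 𝒢 D = sSup {y : ℝ | ∃ h > (0 : ℝ), y = h⁻¹ * (Γ h - D)}) :
    (∀ D, 0 ≤ D → BddAbove {y : ℝ | ∃ h > (0 : ℝ), y = h⁻¹ * (Γ h - D)}) ∧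
      ContinuousOn 𝒢 (Set.Ici 0) ∧ AntitoneOn 𝒢 (Set.Ici 0) ∧
      (∀ D, 0 ≤ D → D < Dinf → 0 < 𝒢 D) ∧
      (∀ D, Dinf ≤ D → 𝒢 D = 0) := by
  obtain ⟨Gcont, hG0, Gnonneg, Gle, Glin, Glim⟩ :=
    aux_G P ξ hmeas hξ p hp hp0 hp1 μ hμ hμpos ν hν G hG
  have hνpos : 0 < ν := by
    rw [hν]; apply Real.log_pos; rw [lt_div_iff₀ hp0]; linarith
  have hKpos : 0 < 2 * μ * max 1 ν := by
    have := le_max_left (1:ℝ) ν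
    nlinarith
  obtain ⟨Γnonneg, ΓleD, Γlin, Γtend⟩ :=
    aux_Gamma ν hνpos (2 * μ * max 1 ν) G Gcont hG0 Gnonneg Gle Glin Glim d φ hφmeas hφint
      hsupp Dinf hDinf Γ hΓ
  obtain ⟨M, hKC, Γlin⟩ : ∃ M : ℝ, 0 < M ∧ ∀ h, 0 ≤ h → Γ h ≤ M * h :=
    ⟨_, mul_pos hKpos hφpos, Γlin⟩
  clear Glin hKpos
  set S : ℝ → Set ℝ := fun D => {y : ℝ | ∃ h > (0 : ℝ), y = h⁻¹ * (Γ h - D)} with hS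
  have hub : ∀ D, 0 ≤ D → ∀ y ∈ S D, y ≤ M := by
    rintro D hD y ⟨h, hh, rfl⟩
    have h2 : h⁻¹ * (Γ h - D) ≤ h⁻¹ * Γ h :=
      mul_le_mul_of_nonneg_left (by linarith) (inv_nonneg.2 hh.le)
    have h4 : h⁻¹ * Γ h ≤ h⁻¹ * ((M) * h) :=
      mul_le_mul_of_nonneg_left (Γlin h hh.le) (inv_nonneg.2 hh.le)
    have h5 : h⁻¹ * ((M) * h) = M := by field_simp
    linarith
  have hbdd : ∀ D, 0 ≤ D → BddAbove (S D) := fun D hD => ⟨M, fun y hy => hub D hD y hy⟩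
  have hne : ∀ D, (S D).Nonempty := fun D => ⟨1⁻¹ * (Γ 1 - D), 1, one_pos, rfl⟩
  have hle : ∀ D, 0 ≤ D → ∀ h : ℝ, 0 < h → h⁻¹ * (Γ h - D) ≤ 𝒢 D := by
    intro D hD h hh
    rw [h𝒢 D]
    exact le_csSup (hbdd D hD) ⟨h, hh, rfl⟩
  have 𝒢nonneg : ∀ D, 0 ≤ D → 0 ≤ 𝒢 D := by
    intro D hD
    by_contra hc
    push_neg at hc
    set t := 𝒢 D with ht
    set h : ℝ := (D + 1) / (-t) with hhdef
    have hh : 0 < h := div_pos (by linarith) (by linarith)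
    have h2 := hle D hD h hh
    have h3 : h⁻¹ * (-D) ≤ h⁻¹ * (Γ h - D) :=
      mul_le_mul_of_nonneg_left (by linarith [Γnonneg h hh.le]) (inv_nonneg.2 hh.le)
    have h4 : h⁻¹ = (-t) / (D + 1) := by rw [hhdef, inv_div]
    have h5 : (-t) / (D + 1) * (-D) ≤ t := by
      rw [← h4]; linarith
    rw [div_mul_eq_mul_div, div_le_iff₀ (by linarith : (0:ℝ) < D + 1)] at h5
    nlinarith
  have hanti : AntitoneOn 𝒢 (Set.Ici 0) := by
    intro D hD D' hD' hDD'
    rw [h𝒢 D']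
    apply csSup_le (hne D')
    rintro y ⟨h, hh, rfl⟩
    calc h⁻¹ * (Γ h - D') ≤ h⁻¹ * (Γ h - D) :=
          mul_le_mul_of_nonneg_left (by linarith) (inv_nonneg.2 hh.le)
      _ ≤ 𝒢 D := hle D hD h hh
  have hpos : ∀ D, 0 ≤ D → D < Dinf → 0 < 𝒢 D := by
    intro D hD hDD
    have hev : ∀ᶠ h in atTop, D < Γ h := Γtend.eventually (eventually_gt_nhds hDD)
    obtain ⟨h, hΓh, hh⟩ := (hev.and (eventually_gt_atTop 0)).exists
    calc (0:ℝ) < h⁻¹ * (Γ h - D) := mul_pos (inv_pos.2 hh) (by linarith)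
      _ ≤ 𝒢 D := hle D hD h hh
  have hDinf0 : 0 ≤ Dinf := by
    rw [hDinf]; exact mul_nonneg hνpos.le ENNReal.toReal_nonneg
  have hzero : ∀ D, Dinf ≤ D → 𝒢 D = 0 := by
    intro D hDD
    have hD : 0 ≤ D := le_trans hDinf0 hDD
    have hle0 : 𝒢 D ≤ 0 := by
      rw [h𝒢 D]
      apply csSup_le (hne D)
      rintro y ⟨h, hh, rfl⟩
      have := ΓleD h hh.le
      exact mul_nonpos_iff.2 (Or.inl ⟨inv_nonneg.2 hh.le, by linarith⟩)
    linarith [𝒢nonneg D hD]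
  have hcont : ContinuousOn 𝒢 (Set.Ici 0) := by
    intro D₀ hD₀mem
    have hD₀ : 0 ≤ D₀ := hD₀mem
    rw [Metric.continuousWithinAt_iff]
    intro ε hε
    obtain ⟨y, hy, hylt⟩ := exists_lt_of_lt_csSup (hne D₀)
      (show 𝒢 D₀ - ε/2 < sSup (S D₀) by rw [← h𝒢 D₀]; linarith)
    obtain ⟨h₀, hh₀, rfl⟩ := hy
    -- two-sided lower estimate
    have hlow : ∀ D, 0 ≤ D → |D - D₀| < h₀ * ε / 2 → 𝒢 D₀ - ε < 𝒢 D := by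
      intro D hD hd
      have l1 : h₀⁻¹ * (Γ h₀ - D) ≤ 𝒢 D := hle D hD h₀ hh₀
      have l6 : -|D₀ - D| ≤ D₀ - D := neg_abs_le _
      have l7 : h₀⁻¹ * (-|D₀ - D|) ≤ h₀⁻¹ * (D₀ - D) :=
        mul_le_mul_of_nonneg_left l6 (inv_nonneg.2 hh₀.le)
      have l8 : |D₀ - D| < h₀ * ε / 2 := by rw [abs_sub_comm]; exact hd
      have l9 : h₀⁻¹ * |D₀ - D| < h₀⁻¹ * (h₀ * ε / 2) :=
        mul_lt_mul_of_pos_left l8 (inv_pos.2 hh₀)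
      have l10 : h₀⁻¹ * (h₀ * ε / 2) = ε / 2 := by field_simp
      have l2 : h₀⁻¹ * (Γ h₀ - D) = h₀⁻¹ * (Γ h₀ - D₀) + h₀⁻¹ * (D₀ - D) := by ring
      nlinarith
    rcases eq_or_lt_of_le hD₀ with hD₀eq | hD₀pos
    · -- D₀ = 0
      refine ⟨h₀ * ε / 2, by positivity, ?_⟩
      intro D hD hdist
      rw [Real.dist_eq] at hdist ⊢
      have hDmem : (0:ℝ) ≤ D := hD
      have hD₀D : D₀ ≤ D := by rw [← hD₀eq]; exact hDmem
      have hupper : 𝒢 D ≤ 𝒢 D₀ := hanti hD₀mem hD hD₀D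
      have hlower : 𝒢 D₀ - ε < 𝒢 D := hlow D hDmem hdist
      rw [abs_lt]; constructor <;> linarith
    · -- D₀ > 0
      obtain ⟨h₁, hh₁, hh₁inv⟩ : ∃ h₁ : ℝ, 0 < h₁ ∧ h₁⁻¹ = 2 * (M + 1) / D₀ :=
        ⟨D₀ / (2 * (M + 1)), div_pos hD₀pos (by linarith), by rw [inv_div]⟩
      refine ⟨min (h₀ * ε / 2) (min (D₀ / 2) (h₁ * (ε/2))), by positivity, ?_⟩
      intro D hD hdist
      rw [Real.dist_eq] at hdist ⊢
      have hDmem : (0:ℝ) ≤ D := hD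
      have hd1 : |D - D₀| < h₀ * ε / 2 := lt_of_lt_of_le hdist (min_le_left _ _)
      have hd2 : |D - D₀| < D₀ / 2 :=
        lt_of_lt_of_le hdist ((min_le_right _ _).trans (min_le_left _ _))
      have hd3 : |D - D₀| < h₁ * (ε/2) :=
        lt_of_lt_of_le hdist ((min_le_right _ _).trans (min_le_right _ _))
      have hlower : 𝒢 D₀ - ε < 𝒢 D := hlow D hDmem hd1
      have hupper : 𝒢 D < 𝒢 D₀ + ε := by
        rcases le_or_gt D₀ D with hcase | hcase
        · have := hanti hD₀mem hD hcase
          linarith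
        · -- D < D₀
          have hDlarge : D₀ / 2 < D := by
            have := abs_lt.1 hd2
            linarith
          have hDclose : D₀ - D < h₁ * (ε/2) := by
            have := abs_lt.1 hd3
            linarith
          have : 𝒢 D ≤ 𝒢 D₀ + ε/2 := by
            rw [h𝒢 D]
            apply csSup_le (hne D)
            rintro y ⟨h, hh, rfl⟩
            rcases le_or_gt h₁ h with hc | hc
            · have e2 : h⁻¹ * (Γ h - D₀) ≤ 𝒢 D₀ := hle D₀ hD₀ h hh
              have e3 : h⁻¹ * (D₀ - D) ≤ h₁⁻¹ * (D₀ - D) :=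
                mul_le_mul_of_nonneg_right (inv_anti₀ hh₁ hc) (by linarith)
              have e4 : h₁⁻¹ * (D₀ - D) < h₁⁻¹ * (h₁ * (ε/2)) :=
                mul_lt_mul_of_pos_left hDclose (inv_pos.2 hh₁)
              have e5 : h₁⁻¹ * (h₁ * (ε/2)) = ε/2 := by field_simp
              have e1 : h⁻¹ * (Γ h - D) = h⁻¹ * (Γ h - D₀) + h⁻¹ * (D₀ - D) := by ring
              linarith
            · have e1 : Γ h ≤ M * h := Γlin h hh.le
              have e2 : h⁻¹ * (Γ h - D) ≤ h⁻¹ * (M * h - D) :=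
                mul_le_mul_of_nonneg_left (by linarith) (inv_nonneg.2 hh.le)
              have e3 : h⁻¹ * (M * h) = M := by field_simp
              have e3' : h⁻¹ * (M * h - D) = M - h⁻¹ * D := by
                rw [mul_sub, e3]
              have e4 : h₁⁻¹ * D ≤ h⁻¹ * D :=
                mul_le_mul_of_nonneg_right (inv_anti₀ hh hc.le) hDmem
              have e5 : M + 1 ≤ h₁⁻¹ * D := by
                rw [hh₁inv, div_mul_eq_mul_div, le_div_iff₀ hD₀pos]
                nlinarith [hDlarge, hKC]
              have e7 : 0 ≤ 𝒢 D₀ := 𝒢nonneg D₀ hD₀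
              linarith
          linarith
      rw [abs_lt]; constructor <;> linarith
  refine ⟨?_, hcont, hanti, hpos, hzero⟩
  intro D hD
  exact hbdd D hD
end

section
/- For every D with 0 < D < D_∞ there exists h > 0 such that Γ(h; φ) − h Γ′(h; φ) = D and 𝒢(φ; D) = h⁻¹ (Γ(h; φ) − D) = Γ′(h; φ) > 0, where Γ′(h; φ) = ∫_{ℝ^d} |φ(x)|² G′(h |φ(x)|²) dx with G′(u) = E[ξ exp(−u ξ)]/E[exp(−u ξ)]. -/
open MeasureTheory ProbabilityTheory Real Filter Topology

set_option maxHeartbeats 3200000 in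
/-- For every `D` with `0 < D < D_∞` there exists `h > 0` such that
`Γ(h; φ) - h Γ'(h; φ) = D` and `𝒢(φ; D) = h⁻¹ (Γ(h; φ) - D) = Γ'(h; φ) > 0`. -/
theorem calG_attained
    {Ω : Type*} [MeasurableSpace Ω] (P : Measure Ω) [IsProbabilityMeasure P]
    (ξ : Ω → ℝ) (hmeas : Measurable ξ)
    (hξ : ∀ᵐ ω ∂P, 0 ≤ ξ ω ∧ ξ ω ≤ 1)
    (p : ℝ) (hp : p = (P {ω | ξ ω = 0}).toReal) (hp0 : 0 < p) (hp1 : p < 1)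
    (μ : ℝ) (hμ : μ = ∫ ω, ξ ω ∂P) (hμpos : 0 < μ)
    (ν : ℝ) (hν : ν = Real.log (1 / p))
    (G : ℝ → ℝ) (hG : ∀ u, G u = -Real.log (∫ ω, Real.exp (-u * ξ ω) ∂P))
    (G' : ℝ → ℝ)
    (hG' : ∀ u, G' u = (∫ ω, ξ ω * Real.exp (-u * ξ ω) ∂P) /
        (∫ ω, Real.exp (-u * ξ ω) ∂P))
    (d : ℕ) (hd : 1 ≤ d)
    (φ : (Fin d → ℝ) → (Fin d → ℝ)) (hφmeas : Measurable φ)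
    (hφint : Integrable (fun x => ∑ k, (φ x k) ^ 2))
    (hφpos : 0 < ∫ x, ∑ k, (φ x k) ^ 2)
    (hsupp : volume {x | φ x ≠ 0} < ⊤)
    (Dinf : ℝ) (hDinf : Dinf = ν * (volume {x | φ x ≠ 0}).toReal)
    (Γ : ℝ → ℝ) (hΓ : ∀ h, Γ h = ∫ x, G (h * ∑ k, (φ x k) ^ 2))
    (Γ' : ℝ → ℝ)
    (hΓ' : ∀ h, Γ' h = ∫ x, (∑ k, (φ x k) ^ 2) * G' (h * ∑ k, (φ x k) ^ 2))
    (𝒢 : ℝ → ℝ)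
    (h𝒢 : ∀ D, 𝒢 D = sSup {y : ℝ | ∃ h > (0 : ℝ), y = h⁻¹ * (Γ h - D)}) :
    ∀ D, 0 < D → D < Dinf → ∃ h > (0 : ℝ),
      Γ h - h * Γ' h = D ∧ 𝒢 D = h⁻¹ * (Γ h - D) ∧ 𝒢 D = Γ' h ∧ 0 < Γ' h := by
  classical
  -- abbreviations
  set ψ : (Fin d → ℝ) → ℝ := fun x => ∑ k, (φ x k) ^ 2 with hψdef
  set L : ℝ → ℝ := fun u => ∫ ω, Real.exp (-u * ξ ω) ∂P with hLdef
  set M : ℝ → ℝ := fun u => ∫ ω, ξ ω * Real.exp (-u * ξ ω) ∂P with hMdef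
  have hGL : ∀ u, G u = -Real.log (L u) := hG
  have hG'L : ∀ u, G' u = M u / L u := hG'
  have hΓL : ∀ h, Γ h = ∫ x, G (h * ψ x) := hΓ
  have hΓ'L : ∀ h, Γ' h = ∫ x, ψ x * G' (h * ψ x) := hΓ'
  have hψnn : ∀ x, 0 ≤ ψ x := fun x => Finset.sum_nonneg fun k _ => sq_nonneg _
  have hψmeas : Measurable ψ := by
    apply Finset.measurable_sum
    intro k _
    exact ((measurable_pi_apply k).comp hφmeas).pow_const 2
  have hψint : Integrable ψ := hφint
  have hψpos : 0 < ∫ x, ψ x := hφpos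
  have hψzero : ∀ x, ψ x = 0 ↔ φ x = 0 := by
    intro x
    constructor
    · intro h
      funext k
      have hk := (Finset.sum_eq_zero_iff_of_nonneg
        (fun k _ => sq_nonneg (φ x k))).mp h k (Finset.mem_univ k)
      exact pow_eq_zero_iff two_ne_zero |>.mp hk
    · intro h
      simp [hψdef, h]
  have hψsupp : {x | φ x ≠ 0} = {x | ψ x ≠ 0} := by
    ext x; simp [hψzero x]
  have hψne_meas : MeasurableSet {x : Fin d → ℝ | ψ x ≠ 0} :=
    (hψmeas (measurableSet_singleton 0)).compl
  have hψvol : volume {x | ψ x ≠ 0} < ⊤ := hψsupp ▸ hsupp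
  -- Ω-side integrability
  have hexp_meas : ∀ u : ℝ, Measurable fun ω => Real.exp (-u * ξ ω) :=
    fun u => Real.measurable_exp.comp (hmeas.const_mul (-u))
  have habs : ∀ u t : ℝ, 0 ≤ t → t ≤ 1 → -|u| ≤ -u * t ∧ -u * t ≤ |u| := by
    intro u t h0 h1
    rcases le_or_gt 0 u with hu | hu
    · rw [abs_of_nonneg hu]; constructor <;> nlinarith
    · rw [abs_of_neg hu]; constructor <;> nlinarith
  have hLint : ∀ u : ℝ, Integrable (fun ω => Real.exp (-u * ξ ω)) P := by
    intro u
    refine (integrable_const (Real.exp |u|)).mono' (hexp_meas u).aestronglyMeasurable ?_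
    filter_upwards [hξ] with ω hω
    obtain ⟨h0, h1⟩ := hω
    rw [Real.norm_eq_abs, abs_of_pos (Real.exp_pos _)]
    apply Real.exp_le_exp.mpr
    exact (habs u (ξ ω) h0 h1).2
  have hMint : ∀ u : ℝ, Integrable (fun ω => ξ ω * Real.exp (-u * ξ ω)) P := by
    intro u
    refine (hLint u).mono' (hmeas.mul (hexp_meas u)).aestronglyMeasurable ?_
    filter_upwards [hξ] with ω hω
    obtain ⟨h0, h1⟩ := hω
    rw [Real.norm_eq_abs, abs_of_nonneg (by positivity)]
    nlinarith [Real.exp_pos (-u * ξ ω)]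
  have hξint : Integrable ξ P := by
    refine (integrable_const (1:ℝ)).mono' hmeas.aestronglyMeasurable ?_
    filter_upwards [hξ] with ω hω
    rw [Real.norm_eq_abs, abs_of_nonneg hω.1]; exact hω.2
  -- L bounds
  have hLlb : ∀ u : ℝ, Real.exp (-|u|) ≤ L u := by
    intro u
    have h1 : ∫ (_ : Ω), Real.exp (-|u|) ∂P = Real.exp (-|u|) := by simp
    rw [← h1, hLdef]
    refine integral_mono_ae (integrable_const _) (hLint u) ?_
    filter_upwards [hξ] with ω hω
    obtain ⟨h0, h1⟩ := hω
    apply Real.exp_le_exp.mpr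
    exact (habs u (ξ ω) h0 h1).1
  have hLpos : ∀ u : ℝ, 0 < L u := fun u => lt_of_lt_of_le (Real.exp_pos _) (hLlb u)
  have hLle1 : ∀ u : ℝ, 0 ≤ u → L u ≤ 1 := by
    intro u hu
    have h1 : ∫ (_ : Ω), (1:ℝ) ∂P = 1 := by simp
    rw [← h1, hLdef]
    refine integral_mono_ae (hLint u) (integrable_const _) ?_
    filter_upwards [hξ] with ω hω
    obtain ⟨h0, h1⟩ := hω
    calc Real.exp (-u * ξ ω) ≤ Real.exp 0 := Real.exp_le_exp.mpr (by nlinarith)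
    _ = 1 := Real.exp_zero
  have hMnn : ∀ u : ℝ, 0 ≤ M u := by
    intro u
    rw [hMdef]
    refine integral_nonneg_of_ae ?_
    filter_upwards [hξ] with ω hω
    exact mul_nonneg hω.1 (Real.exp_pos _).le
  have hMleL : ∀ u : ℝ, M u ≤ L u := by
    intro u
    rw [hMdef, hLdef]
    refine integral_mono_ae (hMint u) (hLint u) ?_
    filter_upwards [hξ] with ω hω
    nlinarith [Real.exp_pos (-u * ξ ω), hω.1, hω.2]
  have hMpos : ∀ u : ℝ, 0 ≤ u → 0 < M u := by
    intro u hu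
    have h1 : Real.exp (-u) * μ ≤ M u := by
      rw [hμ, ← integral_const_mul, hMdef]
      refine integral_mono_ae (hξint.const_mul _) (hMint u) ?_
      filter_upwards [hξ] with ω hω
      obtain ⟨h0, h1⟩ := hω
      have : Real.exp (-u) ≤ Real.exp (-u * ξ ω) := Real.exp_le_exp.mpr (by nlinarith)
      nlinarith
    nlinarith [Real.exp_pos (-u)]
  -- continuity of L and M
  have hLcont : Continuous L := by
    rw [continuous_iff_continuousAt]
    intro u₀
    rw [hLdef]
    refine continuousAt_of_dominated (bound := fun _ => Real.exp (|u₀| + 1)) ?_ ?_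
      (integrable_const _) ?_
    · filter_upwards with u using (hexp_meas u).aestronglyMeasurable
    · filter_upwards [Metric.ball_mem_nhds u₀ one_pos] with u hu
      rw [Metric.mem_ball, Real.dist_eq] at hu
      filter_upwards [hξ] with ω hω
      obtain ⟨h0, h1⟩ := hω
      rw [Real.norm_eq_abs, abs_of_pos (Real.exp_pos _)]
      apply Real.exp_le_exp.mpr
      have habs2 : |u| ≤ |u₀| + 1 := by
        have := abs_sub_abs_le_abs_sub u u₀; linarith
      linarith [(habs u (ξ ω) h0 h1).2]
    · filter_upwards with ω
      exact (Real.continuous_exp.comp ((continuous_neg.mul continuous_const))).continuousAt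
  have hMcont : Continuous M := by
    rw [continuous_iff_continuousAt]
    intro u₀
    rw [hMdef]
    refine continuousAt_of_dominated (bound := fun _ => Real.exp (|u₀| + 1)) ?_ ?_
      (integrable_const _) ?_
    · filter_upwards with u using (hmeas.mul (hexp_meas u)).aestronglyMeasurable
    · filter_upwards [Metric.ball_mem_nhds u₀ one_pos] with u hu
      rw [Metric.mem_ball, Real.dist_eq] at hu
      filter_upwards [hξ] with ω hω
      obtain ⟨h0, h1⟩ := hω
      rw [Real.norm_eq_abs, abs_of_nonneg (by positivity)]
      have habs2 : |u| ≤ |u₀| + 1 := by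
        have := abs_sub_abs_le_abs_sub u u₀; linarith
      have hle : Real.exp (-u * ξ ω) ≤ Real.exp (|u₀| + 1) := by
        apply Real.exp_le_exp.mpr
        linarith [(habs u (ξ ω) h0 h1).2]
      nlinarith [Real.exp_pos (-u * ξ ω)]
    · filter_upwards with ω
      exact (continuous_const.mul
        (Real.continuous_exp.comp (continuous_neg.mul continuous_const))).continuousAt
  -- G and G' basic facts
  have hGcont : Continuous G :=
    ((hLcont.log fun u => (hLpos u).ne').neg).congr fun u => (hGL u).symm
  have hG'cont : Continuous G' :=
    (hMcont.div hLcont fun u => (hLpos u).ne').congr fun u => (hG'L u).symm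
  have hL0 : L 0 = 1 := by simp [hLdef]
  have hG0 : G 0 = 0 := by rw [hGL, hL0, Real.log_one, neg_zero]
  have hGnn : ∀ u : ℝ, 0 ≤ u → 0 ≤ G u := by
    intro u hu
    rw [hGL]
    simpa using Real.log_nonpos (hLpos u).le (hLle1 u hu)
  have hνeq : ν = -Real.log p := by rw [hν, one_div, Real.log_inv]
  have hνpos : 0 < ν := by
    rw [hνeq]
    simpa using Real.log_neg hp0 hp1
  -- indicator of the zero set
  have hs0 : MeasurableSet {ω | ξ ω = 0} := hmeas (measurableSet_singleton 0)
  have hindint : Integrable ({ω | ξ ω = 0}.indicator fun _ => (1:ℝ)) P :=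
    (integrable_const (1:ℝ)).indicator hs0
  have hindeq : ∫ ω, ({ω | ξ ω = 0}.indicator fun _ => (1:ℝ)) ω ∂P = p := by
    rw [hp]
    simpa [measureReal_def, Pi.one_def] using integral_indicator_one (μ := P) hs0
  have hLgep : ∀ u : ℝ, 0 ≤ u → p ≤ L u := by
    intro u hu
    rw [← hindeq, hLdef]
    refine integral_mono_ae hindint (hLint u) ?_
    filter_upwards [hξ] with ω hω
    by_cases hz : ξ ω = 0
    · rw [Set.indicator_of_mem (show ω ∈ {ω | ξ ω = 0} from hz), hz]
      simp
    · rw [Set.indicator_of_notMem (show ω ∉ {ω | ξ ω = 0} from hz)]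
      exact (Real.exp_pos _).le
  have hGν : ∀ u : ℝ, 0 ≤ u → G u ≤ ν := by
    intro u hu
    rw [hGL, hνeq]
    have := Real.log_le_log hp0 (hLgep u hu)
    linarith
  have hG'nn : ∀ u : ℝ, 0 ≤ G' u := fun u => by
    rw [hG'L]; exact div_nonneg (hMnn u) (hLpos u).le
  have hG'le1 : ∀ u : ℝ, G' u ≤ 1 := fun u => by
    rw [hG'L]; exact (div_le_one (hLpos u)).mpr (hMleL u)
  have hG'pos : ∀ u : ℝ, 0 ≤ u → 0 < G' u := fun u hu => by
    rw [hG'L]; exact div_pos (hMpos u hu) (hLpos u)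
  -- the tangent-line inequality for G
  have tangent : ∀ u v : ℝ, G v ≤ G u + G' u * (v - u) := by
    intro u v
    set s : ℝ := -(v - u) * G' u with hsdef
    have key : Real.exp s * L u ≤ L v := by
      have hpt : (fun ω => Real.exp s * ((1 - s) * Real.exp (-u * ξ ω)
          - (v - u) * (ξ ω * Real.exp (-u * ξ ω)))) ≤ᵐ[P]
          fun ω => Real.exp (-v * ξ ω) := by
        filter_upwards with ω
        have h1 : Real.exp s * ((-(v - u) * ξ ω - s) + 1) ≤ Real.exp (-(v - u) * ξ ω) := by
          calc Real.exp s * ((-(v - u) * ξ ω - s) + 1)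
              ≤ Real.exp s * Real.exp (-(v - u) * ξ ω - s) := by
                exact mul_le_mul_of_nonneg_left
                  (Real.add_one_le_exp _) (Real.exp_pos s).le
          _ = Real.exp (-(v - u) * ξ ω) := by rw [← Real.exp_add]; ring_nf
        have h2 : Real.exp (-v * ξ ω) = Real.exp (-u * ξ ω) * Real.exp (-(v - u) * ξ ω) := by
          rw [← Real.exp_add]; ring_nf
        have e0 : (0:ℝ) ≤ Real.exp (-u * ξ ω) := (Real.exp_pos _).le
        have h3 := mul_le_mul_of_nonneg_left h1 e0
        rw [h2]
        calc Real.exp s * ((1 - s) * Real.exp (-u * ξ ω)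
              - (v - u) * (ξ ω * Real.exp (-u * ξ ω)))
            = Real.exp (-u * ξ ω) * (Real.exp s * ((-(v - u) * ξ ω - s) + 1)) := by ring
        _ ≤ Real.exp (-u * ξ ω) * Real.exp (-(v - u) * ξ ω) := h3
      have hint : Integrable (fun ω => Real.exp s * ((1 - s) * Real.exp (-u * ξ ω)
          - (v - u) * (ξ ω * Real.exp (-u * ξ ω)))) P :=
        (((hLint u).const_mul (1 - s)).sub ((hMint u).const_mul (v - u))).const_mul _
      have hI := integral_mono_ae hint (hLint v) hpt
      rw [integral_const_mul,
        integral_sub ((hLint u).const_mul _) ((hMint u).const_mul _),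
        integral_const_mul, integral_const_mul] at hI
      have hsL : s * L u = -(v - u) * M u := by
        have hc : M u / L u * L u = M u := div_mul_cancel₀ _ (hLpos u).ne'
        calc s * L u = -(v - u) * (M u / L u * L u) := by rw [hsdef, hG'L u]; ring
        _ = -(v - u) * M u := by rw [hc]
      have hrw : Real.exp s * L u
          = Real.exp s * ((1 - s) * L u - (v - u) * M u) := by
        have : (1 - s) * L u - (v - u) * M u = L u - (s * L u + -(-(v - u) * M u)) := by ring
        rw [this, hsL]; ring_nf
      rw [hrw]
      exact hI
    have hlog := Real.log_le_log (mul_pos (Real.exp_pos s) (hLpos u)) key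
    rw [Real.log_mul (Real.exp_pos s).ne' (hLpos u).ne', Real.log_exp] at hlog
    rw [hGL v, hGL u]
    have hsval : G' u * (v - u) = -s := by rw [hsdef]; ring
    linarith
  have hKnn : ∀ u : ℝ, 0 ≤ u → 0 ≤ G u - u * G' u := by
    intro u _
    have := tangent u 0
    rw [hG0] at this
    nlinarith
  -- L tends to p at infinity
  have hLtend : Tendsto L atTop (𝓝 p) := by
    rw [← hindeq, hLdef]
    refine tendsto_integral_filter_of_dominated_convergence (fun _ => (1:ℝ))
      ?_ ?_ (integrable_const _) ?_
    · filter_upwards with u using (hexp_meas u).aestronglyMeasurable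
    · filter_upwards [eventually_ge_atTop (0:ℝ)] with u hu
      filter_upwards [hξ] with ω hω
      obtain ⟨h0, h1⟩ := hω
      rw [Real.norm_eq_abs, abs_of_pos (Real.exp_pos _)]
      calc Real.exp (-u * ξ ω) ≤ Real.exp 0 := Real.exp_le_exp.mpr (by nlinarith)
      _ = 1 := Real.exp_zero
    · filter_upwards [hξ] with ω hω
      obtain ⟨h0, h1⟩ := hω
      rcases eq_or_lt_of_le h0 with hz | hz
      · have hmem : ω ∈ {ω | ξ ω = 0} := hz.symm
        rw [Set.indicator_of_mem hmem]
        have : (fun u : ℝ => Real.exp (-u * ξ ω)) = fun _ => (1:ℝ) := by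
          funext u; rw [← hz]; simp
        rw [this]
        exact tendsto_const_nhds
      · have hmem : ω ∉ {ω | ξ ω = 0} := by simp [hz.ne']
        rw [Set.indicator_of_notMem hmem]
        have h2 : Tendsto (fun u : ℝ => -u * ξ ω) atTop atBot := by
          have h3 : Tendsto (fun u : ℝ => u * ξ ω) atTop atTop :=
            tendsto_id.atTop_mul_const hz
          have h4 := tendsto_neg_atBot_iff.mpr h3
          exact h4.congr fun u => by ring
        exact Real.tendsto_exp_atBot.comp h2
  have hGtend : Tendsto G atTop (𝓝 ν) := by
    have h1 : Tendsto (fun u => Real.log (L u)) atTop (𝓝 (Real.log p)) :=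
      ((Real.continuousAt_log hp0.ne').tendsto).comp hLtend
    have h2 := h1.neg
    rw [← hνeq] at h2
    exact h2.congr fun u => (hGL u).symm
  -- u * G' u tends to 0
  have hMtend0 : Tendsto (fun u => u * M u) atTop (𝓝 0) := by
    have h0 : (0:ℝ) = ∫ (_ : Ω), (0:ℝ) ∂P := by simp
    rw [h0]
    have := tendsto_integral_filter_of_dominated_convergence (μ := P)
      (F := fun (u : ℝ) ω => u * (ξ ω * Real.exp (-u * ξ ω))) (f := fun _ => (0:ℝ))
      (l := atTop) (fun _ => (1:ℝ)) ?_ ?_ (integrable_const _) ?_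
    · refine this.congr fun u => ?_
      rw [hMdef, ← integral_const_mul]
    · filter_upwards with u
      exact ((measurable_const.mul (hmeas.mul (hexp_meas u)))).aestronglyMeasurable
    · filter_upwards [eventually_ge_atTop (0:ℝ)] with u hu
      filter_upwards [hξ] with ω hω
      obtain ⟨h0', h1'⟩ := hω
      rw [Real.norm_eq_abs, abs_of_nonneg (by positivity)]
      have ht : u * ξ ω ≤ Real.exp (u * ξ ω) := by
        nlinarith [Real.add_one_le_exp (u * ξ ω)]
      have hne : -u * ξ ω = -(u * ξ ω) := by ring
      have h2 : u * ξ ω * Real.exp (-(u * ξ ω)) ≤ 1 := by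
        rw [Real.exp_neg, mul_inv_le_iff₀ (Real.exp_pos _), one_mul]
        linarith
      calc u * (ξ ω * Real.exp (-u * ξ ω))
          = u * ξ ω * Real.exp (-(u * ξ ω)) := by rw [hne]; ring
      _ ≤ 1 := h2
    · filter_upwards [hξ] with ω hω
      obtain ⟨h0', h1'⟩ := hω
      rcases eq_or_lt_of_le h0' with hz | hz
      · have : (fun u : ℝ => u * (ξ ω * Real.exp (-u * ξ ω))) = fun _ => (0:ℝ) := by
          funext u; rw [← hz]; ring
        rw [this]; exact tendsto_const_nhds
      · have h1 : Tendsto (fun t : ℝ => t * Real.exp (-t)) atTop (𝓝 0) := by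
          simpa using Real.tendsto_pow_mul_exp_neg_atTop_nhds_zero 1
        have h2 : Tendsto (fun u : ℝ => u * ξ ω) atTop atTop :=
          tendsto_id.atTop_mul_const hz
        refine (h1.comp h2).congr fun u => ?_
        show u * ξ ω * Real.exp (-(u * ξ ω)) = u * (ξ ω * Real.exp (-u * ξ ω))
        rw [neg_mul]; ring
  have hKtend : Tendsto (fun u => u * G' u) atTop (𝓝 0) := by
    have h1 : Tendsto (fun u => (u * M u) / L u) atTop (𝓝 (0 / p)) :=
      hMtend0.div hLtend hp0.ne'
    rw [zero_div] at h1
    refine h1.congr fun u => ?_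
    rw [hG'L, mul_div_assoc]
  -- ℝ^d-side integrability
  have hGψmeas : ∀ h : ℝ, Measurable fun x => G (h * ψ x) := fun h =>
    hGcont.measurable.comp (hψmeas.const_mul h)
  have hbound : Integrable ({x : Fin d → ℝ | ψ x ≠ 0}.indicator fun _ => ν) := by
    rw [integrable_indicator_iff hψne_meas]
    exact integrableOn_const hψvol.ne
  have hboundnn : ∀ x, 0 ≤ ({x : Fin d → ℝ | ψ x ≠ 0}.indicator fun _ => ν) x := by
    intro x
    exact Set.indicator_nonneg (fun _ _ => hνpos.le) x
  have hΓint : ∀ h : ℝ, 0 ≤ h → Integrable (fun x => G (h * ψ x)) := by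
    intro h hh
    refine hbound.mono' (hGψmeas h).aestronglyMeasurable ?_
    filter_upwards with x
    by_cases hx : ψ x = 0
    · rw [hx, mul_zero, hG0, norm_zero]
      exact hboundnn x
    · rw [Set.indicator_of_mem (show x ∈ {x | ψ x ≠ 0} from hx), Real.norm_eq_abs,
        abs_of_nonneg (hGnn _ (mul_nonneg hh (hψnn x)))]
      exact hGν _ (mul_nonneg hh (hψnn x))
  have hΓ'int : ∀ h : ℝ, Integrable fun x => ψ x * G' (h * ψ x) := by
    intro h
    refine hψint.mono' ((hψmeas.mul
      (hG'cont.measurable.comp (hψmeas.const_mul h)))).aestronglyMeasurable ?_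
    filter_upwards with x
    rw [Real.norm_eq_abs, abs_of_nonneg (mul_nonneg (hψnn x) (hG'nn _))]
    nlinarith [hψnn x, hG'nn (h * ψ x), hG'le1 (h * ψ x)]
  have hΓ'nn : ∀ h : ℝ, 0 ≤ Γ' h := by
    intro h
    rw [hΓ'L]
    exact integral_nonneg fun x => mul_nonneg (hψnn x) (hG'nn _)
  -- tangent inequality for Γ
  have tangentΓ : ∀ g h : ℝ, 0 ≤ g → 0 ≤ h → Γ g ≤ Γ h + (g - h) * Γ' h := by
    intro g h hg hh
    have hpt : (fun x => G (g * ψ x)) ≤ fun x =>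
        G (h * ψ x) + (g - h) * (ψ x * G' (h * ψ x)) := by
      intro x
      have htan := tangent (h * ψ x) (g * ψ x)
      show G (g * ψ x) ≤ G (h * ψ x) + (g - h) * (ψ x * G' (h * ψ x))
      have heq : (g - h) * (ψ x * G' (h * ψ x)) = G' (h * ψ x) * (g * ψ x - h * ψ x) := by
        ring
      rw [heq]
      linarith
    have h1 := integral_mono (hΓint g hg)
      ((hΓint h hh).add ((hΓ'int h).const_mul (g - h))) hpt
    simp only [Pi.add_apply] at h1
    rw [integral_add (hΓint h hh) ((hΓ'int h).const_mul (g - h)),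
      integral_const_mul (g - h) (fun x => ψ x * G' (h * ψ x))] at h1
    rw [hΓL g, hΓL h, hΓ'L h]
    exact h1
  -- the function F h = Γ h - h * Γ' h as a single integral
  have hFform : ∀ h : ℝ, 0 ≤ h → Γ h - h * Γ' h
      = ∫ x, (G (h * ψ x) - h * (ψ x * G' (h * ψ x))) := by
    intro h hh
    rw [integral_sub (hΓint h hh) ((hΓ'int h).const_mul h), integral_const_mul,
      hΓL, hΓ'L]
  -- pointwise bounds for the integrand of F
  have hKpt : ∀ (h : ℝ) (x : Fin d → ℝ), 0 ≤ h →
      |G (h * ψ x) - h * (ψ x * G' (h * ψ x))|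
        ≤ ({x : Fin d → ℝ | ψ x ≠ 0}.indicator fun _ => ν) x := by
    intro h x hh
    by_cases hx : ψ x = 0
    · rw [hx]
      simp only [mul_zero, zero_mul, hG0, sub_zero, abs_zero]
      exact hboundnn x
    · rw [Set.indicator_of_mem (show x ∈ {x | ψ x ≠ 0} from hx)]
      have h1 : h * (ψ x * G' (h * ψ x)) = (h * ψ x) * G' (h * ψ x) := by ring
      have h2 := hKnn (h * ψ x) (mul_nonneg hh (hψnn x))
      have h3 := hGν (h * ψ x) (mul_nonneg hh (hψnn x))
      have h4 : 0 ≤ (h * ψ x) * G' (h * ψ x) :=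
        mul_nonneg (mul_nonneg hh (hψnn x)) (hG'nn _)
      rw [h1, abs_of_nonneg (by linarith)]
      linarith
  -- continuity of F on [0, ∞)
  have hFcont : ContinuousOn (fun h => Γ h - h * Γ' h) (Set.Ici (0:ℝ)) := by
    have hcont2 : ContinuousOn (fun h : ℝ =>
        ∫ x, (G (h * ψ x) - h * (ψ x * G' (h * ψ x)))) (Set.Ici (0:ℝ)) := by
      refine continuousOn_of_dominated ?_ ?_ hbound ?_
      · intro h _
        exact ((hGψmeas h).sub (measurable_const.mul (hψmeas.mul
          (hG'cont.measurable.comp (hψmeas.const_mul h))))).aestronglyMeasurable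
      · intro h hh
        filter_upwards with x
        exact hKpt h x hh
      · filter_upwards with x
        apply Continuous.continuousOn
        have hc1 : Continuous fun h : ℝ => h * ψ x := continuous_id.mul continuous_const
        exact (hGcont.comp hc1).sub
          (continuous_id.mul (continuous_const.mul (hG'cont.comp hc1)))
    exact hcont2.congr fun h hh => hFform h hh
  -- F tends to Dinf at infinity
  have hDinfψ : Dinf = ν * (volume {x | ψ x ≠ 0}).toReal := by rw [hDinf, hψsupp]
  have hFtend : Tendsto (fun h => Γ h - h * Γ' h) atTop (𝓝 Dinf) := by
    have hlim : Tendsto (fun h : ℝ =>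
        ∫ x, (G (h * ψ x) - h * (ψ x * G' (h * ψ x)))) atTop
        (𝓝 (∫ x, ({x : Fin d → ℝ | ψ x ≠ 0}.indicator fun _ => ν) x)) := by
      refine tendsto_integral_filter_of_dominated_convergence _ ?_ ?_ hbound ?_
      · filter_upwards with h
        exact ((hGψmeas h).sub (measurable_const.mul (hψmeas.mul
          (hG'cont.measurable.comp (hψmeas.const_mul h))))).aestronglyMeasurable
      · filter_upwards [eventually_ge_atTop (0:ℝ)] with h hh
        filter_upwards with x
        exact hKpt h x hh
      · filter_upwards with x
        by_cases hx : ψ x = 0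
        · have : (fun h : ℝ => G (h * ψ x) - h * (ψ x * G' (h * ψ x)))
              = fun _ => (0:ℝ) := by
            funext h; rw [hx]; simp [hG0]
          rw [this, Set.indicator_of_notMem (show x ∉ {x | ψ x ≠ 0} from fun hc => hc hx)]
          exact tendsto_const_nhds
        · rw [Set.indicator_of_mem (show x ∈ {x | ψ x ≠ 0} from hx)]
          have hxpos : 0 < ψ x := lt_of_le_of_ne (hψnn x) (Ne.symm hx)
          have h2 : Tendsto (fun h : ℝ => h * ψ x) atTop atTop :=
            tendsto_id.atTop_mul_const hxpos
          have h3 : Tendsto (fun h : ℝ => G (h * ψ x)) atTop (𝓝 ν) := hGtend.comp h2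
          have h4 : Tendsto (fun h : ℝ => (h * ψ x) * G' (h * ψ x)) atTop (𝓝 0) :=
            hKtend.comp h2
          have h5 := h3.sub h4
          rw [sub_zero] at h5
          refine h5.congr fun h => ?_
          ring_nf
    have hval : ∫ x, ({x : Fin d → ℝ | ψ x ≠ 0}.indicator fun _ => ν) x = Dinf := by
      rw [integral_indicator_const (ν:ℝ) hψne_meas, hDinfψ, smul_eq_mul, mul_comm, measureReal_def]
    rw [hval] at hlim
    have hev : ∀ᶠ h in atTop, (fun h : ℝ =>
        ∫ x, (G (h * ψ x) - h * (ψ x * G' (h * ψ x)))) h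
        = Γ h - h * Γ' h := by
      filter_upwards [eventually_ge_atTop (0:ℝ)] with h hh
      exact (hFform h hh).symm
    exact Tendsto.congr' hev hlim
  have hF0 : Γ 0 - 0 * Γ' 0 = 0 := by
    rw [zero_mul, sub_zero, hΓL]
    have : (fun x => G (0 * ψ x)) = fun _ => (0:ℝ) := by
      funext x; rw [zero_mul, hG0]
    rw [this, integral_zero]
  -- the main argument
  intro D hD0 hDDinf
  obtain ⟨h1, hh1pos, hFh1⟩ : ∃ h1 : ℝ, 0 < h1 ∧ D < Γ h1 - h1 * Γ' h1 := by
    have hev := hFtend.eventually (eventually_gt_nhds hDDinf)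
    rcases (hev.and (eventually_gt_atTop (0:ℝ))).exists with ⟨h1, hF, hpos⟩
    exact ⟨h1, hpos, hF⟩
  have hsub := intermediate_value_Icc hh1pos.le
    (hFcont.mono (Set.Icc_subset_Ici_self))
  have hDmem : D ∈ Set.Icc (Γ 0 - 0 * Γ' 0) (Γ h1 - h1 * Γ' h1) := by
    rw [hF0]
    exact ⟨hD0.le, hFh1.le⟩
  obtain ⟨h, hmem, hFh'⟩ := hsub hDmem
  have hFh : Γ h - h * Γ' h = D := hFh'
  have hhpos : 0 < h := by
    rcases lt_or_eq_of_le hmem.1 with hlt | heq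
    · exact hlt
    · exfalso
      rw [← heq, hF0] at hFh
      exact hD0.ne hFh
  have key : Γ h - D = h * Γ' h := by linarith [hFh]
  have hub : ∀ y ∈ {y : ℝ | ∃ g > (0:ℝ), y = g⁻¹ * (Γ g - D)}, y ≤ Γ' h := by
    rintro y ⟨g, hgpos, rfl⟩
    rw [inv_mul_le_iff₀ hgpos]
    have := tangentΓ g h hgpos.le hhpos.le
    nlinarith [this, key]
  have hmemS : h⁻¹ * (Γ h - D) ∈ {y : ℝ | ∃ g > (0:ℝ), y = g⁻¹ * (Γ g - D)} :=
    ⟨h, hhpos, rfl⟩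
  have hval : h⁻¹ * (Γ h - D) = Γ' h := by
    rw [key, inv_mul_cancel_left₀ hhpos.ne']
  have hsSup : sSup {y : ℝ | ∃ g > (0:ℝ), y = g⁻¹ * (Γ g - D)} = h⁻¹ * (Γ h - D) := by
    apply le_antisymm
    · apply csSup_le ⟨_, hmemS⟩
      intro y hy
      rw [hval]
      exact hub y hy
    · exact le_csSup ⟨Γ' h, hub⟩ hmemS
  have hΓ'pos : 0 < Γ' h := by
    rcases lt_or_eq_of_le (hΓ'nn h) with hlt | heq
    · exact hlt
    · exfalso
      have hzero : ∫ x, ψ x * G' (h * ψ x) = 0 := by rw [← hΓ'L]; exact heq.symm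
      have hae := (integral_eq_zero_iff_of_nonneg
        (fun x => mul_nonneg (hψnn x) (hG'nn _)) (hΓ'int h)).mp hzero
      have hψae : ψ =ᵐ[volume] 0 := by
        filter_upwards [hae] with x hx
        have := hG'pos (h * ψ x) (mul_nonneg hhpos.le (hψnn x))
        by_contra hne
        exact hne (by
          have := mul_eq_zero.mp hx
          rcases this with h' | h'
          · exact h'
          · exact absurd h' (hG'pos (h * ψ x) (mul_nonneg hhpos.le (hψnn x))).ne')
      have : ∫ x, ψ x = 0 := by
        rw [integral_congr_ae hψae]
        simp
      linarith [hψpos]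
  refine ⟨h, hhpos, hFh, ?_, ?_, hΓ'pos⟩
  · rw [h𝒢 D]
    exact hsSup
  · rw [h𝒢 D, hsSup, hval]
end

section
/- For every D with 0 < D ≤ D_∞ and arbitrary ε > 0 and δ > 0, there exists a finite h > 0 such that 0 ≤ 𝒢(φ; D) − h⁻¹ (Γ(h; φ) − D) ≤ δ and D − ε ≤ Γ(h; φ) − h Γ′(h; φ) ≤ D, where Γ′(h; φ) = ∫_{ℝ^d} |φ(x)|² G′(h |φ(x)|²) dx with G′(u) = E[ξ exp(−u ξ)]/E[exp(−u ξ)]. -/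
open MeasureTheory ProbabilityTheory Real Filter Topology


lemma aux_int_weight_exp {Ω : Type*} [MeasurableSpace Ω] (P : Measure Ω)
    [IsProbabilityMeasure P] (ξ : Ω → ℝ) (hmeas : Measurable ξ)
    (hξ : ∀ᵐ ω ∂P, 0 ≤ ξ ω ∧ ξ ω ≤ 1)
    (w : Ω → ℝ) (hw : Measurable w) (hwb : ∀ᵐ ω ∂P, 0 ≤ w ω ∧ w ω ≤ 1) (u : ℝ) :
    Integrable (fun ω => w ω * Real.exp (-u * ξ ω)) P := by
  refine Integrable.mono' (integrable_const (Real.exp |u|))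
    ((hw.mul ((hmeas.const_mul (-u)).exp)).aestronglyMeasurable) ?_
  filter_upwards [hξ, hwb] with ω hω hwω
  have h1 : -u * ξ ω ≤ |u| := by
    have : |(-u) * ξ ω| ≤ |u| := by
      rw [abs_mul, abs_neg]
      calc |u| * |ξ ω| ≤ |u| * 1 := by
            apply mul_le_mul_of_nonneg_left _ (abs_nonneg u)
            rw [abs_le]; constructor <;> linarith [hω.1, hω.2]
        _ = |u| := mul_one _
    linarith [le_abs_self ((-u) * ξ ω), this]
  have h2 : Real.exp (-u * ξ ω) ≤ Real.exp |u| := Real.exp_le_exp.2 h1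
  rw [Real.norm_eq_abs, abs_mul, abs_of_nonneg hwω.1, abs_of_pos (Real.exp_pos _)]
  calc w ω * Real.exp (-u * ξ ω) ≤ 1 * Real.exp |u| := by
        apply mul_le_mul hwω.2 h2 (le_of_lt (Real.exp_pos _)) zero_le_one
    _ = Real.exp |u| := one_mul _

lemma aux_hasDerivAt_weight_exp {Ω : Type*} [MeasurableSpace Ω] (P : Measure Ω)
    [IsProbabilityMeasure P] (ξ : Ω → ℝ) (hmeas : Measurable ξ)
    (hξ : ∀ᵐ ω ∂P, 0 ≤ ξ ω ∧ ξ ω ≤ 1)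
    (w : Ω → ℝ) (hw : Measurable w) (hwb : ∀ᵐ ω ∂P, 0 ≤ w ω ∧ w ω ≤ 1) (u : ℝ) :
    HasDerivAt (fun v => ∫ ω, w ω * Real.exp (-v * ξ ω) ∂P)
      (-∫ ω, w ω * ξ ω * Real.exp (-u * ξ ω) ∂P) u := by
  have key := hasDerivAt_integral_of_dominated_loc_of_deriv_le (μ := P)
      (F := fun v ω => w ω * Real.exp (-v * ξ ω))
      (F' := fun v ω => -(w ω * ξ ω * Real.exp (-v * ξ ω)))
      (x₀ := u) (bound := fun _ => Real.exp (|u| + 1)) (s := Metric.ball u 1) (Metric.ball_mem_nhds u one_pos)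
      (Eventually.of_forall fun v =>
        ((hw.mul ((hmeas.const_mul (-v)).exp)).aestronglyMeasurable))
      (aux_int_weight_exp P ξ hmeas hξ w hw hwb u)
      (((hw.mul hmeas).mul ((hmeas.const_mul (-u)).exp)).aestronglyMeasurable.neg)
      ?_ (integrable_const _) ?_
  · have := key.2
    rw [integral_neg] at this
    simpa using this
  · filter_upwards [hξ, hwb] with ω hω hwω
    intro v hv
    have hd : dist v u < 1 := by simpa [Metric.mem_ball] using hv
    have hvu : |v| ≤ |u| + 1 := by
      have := abs_sub_abs_le_abs_sub v u
      rw [Real.dist_eq] at hd; linarith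
    have h1 : -v * ξ ω ≤ |u| + 1 := by
      have h2 : |(-v) * ξ ω| ≤ |v| := by
        rw [abs_mul, abs_neg]
        calc |v| * |ξ ω| ≤ |v| * 1 := by
              apply mul_le_mul_of_nonneg_left _ (abs_nonneg v)
              rw [abs_le]; constructor <;> linarith [hω.1, hω.2]
          _ = |v| := mul_one _
      linarith [le_abs_self ((-v) * ξ ω)]
    rw [norm_neg, Real.norm_eq_abs, abs_mul, abs_mul, abs_of_nonneg hwω.1,
      abs_of_nonneg hω.1, abs_of_pos (Real.exp_pos _)]
    calc w ω * ξ ω * Real.exp (-v * ξ ω) ≤ 1 * 1 * Real.exp (|u| + 1) := by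
          apply mul_le_mul (by
            apply mul_le_mul hwω.2 hω.2 hω.1 zero_le_one)
            (Real.exp_le_exp.2 h1) (le_of_lt (Real.exp_pos _)) (by norm_num)
      _ = Real.exp (|u| + 1) := by ring
  · filter_upwards [] with ω
    intro v _
    have h1 : HasDerivAt (fun t : ℝ => -t * ξ ω) (-ξ ω) v := by
      have := ((hasDerivAt_mul_const (ξ ω)).neg (x := v))
      simp only [neg_mul] at this ⊢
      exact this
    have h2 : HasDerivAt (fun t : ℝ => Real.exp (-t * ξ ω))
        (Real.exp (-v * ξ ω) * (-ξ ω)) v := h1.exp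
    have h3 := h2.const_mul (w ω)
    refine h3.congr_deriv ?_
    ring

section
variable {Ω : Type*} [MeasurableSpace Ω] (P : Measure Ω) [IsProbabilityMeasure P]
  (ξ : Ω → ℝ) (hmeas : Measurable ξ) (hξ : ∀ᵐ ω ∂P, 0 ≤ ξ ω ∧ ξ ω ≤ 1)

include hmeas hξ

lemma aux_int_exp (u : ℝ) : Integrable (fun ω => Real.exp (-u * ξ ω)) P := by
  refine Integrable.mono' (integrable_const (Real.exp |u|))
    ((hmeas.const_mul (-u)).exp).aestronglyMeasurable ?_
  filter_upwards [hξ] with ω hω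
  rw [Real.norm_eq_abs, abs_of_pos (Real.exp_pos _)]
  apply Real.exp_le_exp.2
  nlinarith [le_abs_self u, neg_abs_le u, hω.1, hω.2]

lemma aux_int_xi_exp (u : ℝ) : Integrable (fun ω => ξ ω * Real.exp (-u * ξ ω)) P :=
  aux_int_weight_exp P ξ hmeas hξ ξ hmeas hξ u

lemma aux_L_lb (u : ℝ) : Real.exp (-|u|) ≤ ∫ ω, Real.exp (-u * ξ ω) ∂P := by
  have : ∫ _ω, Real.exp (-|u|) ∂P = Real.exp (-|u|) := by simp
  rw [← this]
  refine integral_mono_ae (integrable_const _) (aux_int_exp P ξ hmeas hξ u) ?_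
  filter_upwards [hξ] with ω hω
  apply Real.exp_le_exp.2
  nlinarith [le_abs_self u, neg_abs_le u, hω.1, hω.2]

lemma aux_L_pos (u : ℝ) : 0 < ∫ ω, Real.exp (-u * ξ ω) ∂P :=
  lt_of_lt_of_le (Real.exp_pos _) (aux_L_lb P ξ hmeas hξ u)

lemma aux_L_le_one (u : ℝ) (hu : 0 ≤ u) : ∫ ω, Real.exp (-u * ξ ω) ∂P ≤ 1 := by
  have : ∫ _ω, (1 : ℝ) ∂P = 1 := by simp
  rw [← this]
  refine integral_mono_ae (aux_int_exp P ξ hmeas hξ u) (integrable_const _) ?_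
  filter_upwards [hξ] with ω hω
  rw [← Real.exp_zero]
  apply Real.exp_le_exp.2
  nlinarith [hω.1, hω.2]

lemma aux_L_le (u : ℝ) : ∫ ω, Real.exp (-u * ξ ω) ∂P ≤ Real.exp |u| := by
  have : ∫ _ω, Real.exp |u| ∂P = Real.exp |u| := by simp
  rw [← this]
  refine integral_mono_ae (aux_int_exp P ξ hmeas hξ u) (integrable_const _) ?_
  filter_upwards [hξ] with ω hω
  apply Real.exp_le_exp.2
  nlinarith [le_abs_self u, neg_abs_le u, hω.1, hω.2]

lemma aux_p_le_L (u : ℝ) (hu : 0 ≤ u) :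
    (P {ω | ξ ω = 0}).toReal ≤ ∫ ω, Real.exp (-u * ξ ω) ∂P := by
  have hms : MeasurableSet {ω | ξ ω = 0} := hmeas (measurableSet_singleton 0)
  have h1 : ∫ ω, Set.indicator {ω | ξ ω = 0} (fun _ => (1:ℝ)) ω ∂P
      = (P {ω | ξ ω = 0}).toReal := by
    rw [integral_indicator_const (1:ℝ) hms, smul_eq_mul, mul_one, measureReal_def]
  rw [← h1]
  refine integral_mono_ae ((integrable_const (1:ℝ)).indicator hms)
    (aux_int_exp P ξ hmeas hξ u) ?_
  filter_upwards [hξ] with ω hω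
  by_cases h : ξ ω = 0
  · simp [Set.indicator_apply, Set.mem_setOf_eq, h]
  · simp only [Set.indicator_apply, Set.mem_setOf_eq, h, if_false]
    positivity

lemma aux_M_nonneg (u : ℝ) : 0 ≤ ∫ ω, ξ ω * Real.exp (-u * ξ ω) ∂P := by
  refine integral_nonneg_of_ae ?_
  filter_upwards [hξ] with ω hω
  exact mul_nonneg hω.1 (le_of_lt (Real.exp_pos _))

lemma aux_M_le_L (u : ℝ) :
    ∫ ω, ξ ω * Real.exp (-u * ξ ω) ∂P ≤ ∫ ω, Real.exp (-u * ξ ω) ∂P := by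
  refine integral_mono_ae (aux_int_xi_exp P ξ hmeas hξ u) (aux_int_exp P ξ hmeas hξ u) ?_
  filter_upwards [hξ] with ω hω
  nlinarith [Real.exp_pos (-u * ξ ω), hω.1, hω.2]

lemma aux_CS (u : ℝ) :
    (∫ ω, ξ ω * Real.exp (-u * ξ ω) ∂P)^2 ≤
      (∫ ω, Real.exp (-u * ξ ω) ∂P) * (∫ ω, ξ ω * ξ ω * Real.exp (-u * ξ ω) ∂P) := by
  set f : Ω → ℝ := fun ω => Real.exp (-u * ξ ω / 2) with hf
  set g : Ω → ℝ := fun ω => ξ ω * Real.exp (-u * ξ ω / 2) with hg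
  have hfm : Measurable f := ((hmeas.const_mul (-u)).div_const 2).exp
  have hgm : Measurable g := hmeas.mul hfm
  have hpq : Real.HolderConjugate 2 2 := ⟨by norm_num, by norm_num, by norm_num⟩
  have hmemf : MemLp f (ENNReal.ofReal 2) P := by
    refine memLp_of_bounded (a := 0) (b := Real.exp |u|) ?_ hfm.aestronglyMeasurable _
    filter_upwards [hξ] with ω hω
    constructor
    · positivity
    · apply Real.exp_le_exp.2
      nlinarith [le_abs_self u, neg_abs_le u, hω.1, hω.2]
  have hmemg : MemLp g (ENNReal.ofReal 2) P := by
    refine memLp_of_bounded (a := 0) (b := Real.exp |u|) ?_ hgm.aestronglyMeasurable _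
    filter_upwards [hξ] with ω hω
    have hle : Real.exp (-u * ξ ω / 2) ≤ Real.exp |u| := by
      apply Real.exp_le_exp.2
      nlinarith [le_abs_self u, neg_abs_le u, hω.1, hω.2]
    have hE := Real.exp_pos (-u * ξ ω / 2)
    constructor
    · exact mul_nonneg hω.1 hE.le
    · calc ξ ω * Real.exp (-u * ξ ω / 2) ≤ 1 * Real.exp (-u * ξ ω / 2) :=
          mul_le_mul_of_nonneg_right hω.2 hE.le
        _ = Real.exp (-u * ξ ω / 2) := one_mul _
        _ ≤ Real.exp |u| := hle
  have hH := integral_mul_le_Lp_mul_Lq_of_nonneg hpq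
    (Eventually.of_forall fun ω => le_of_lt (Real.exp_pos _))
    (by filter_upwards [hξ] with ω hω
        exact mul_nonneg hω.1 (le_of_lt (Real.exp_pos _)))
    hmemf hmemg
  have hexp2 : ∀ ω, f ω * f ω = Real.exp (-u * ξ ω) := by
    intro ω; rw [hf, ← Real.exp_add]; ring_nf
  have e1 : ∫ ω, f ω * g ω ∂P = ∫ ω, ξ ω * Real.exp (-u * ξ ω) ∂P := by
    refine integral_congr_ae (Eventually.of_forall fun ω => ?_)
    show f ω * g ω = ξ ω * Real.exp (-u * ξ ω)
    rw [← hexp2 ω]; simp only [hf, hg]; ring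
  have e2 : ∫ ω, f ω ^ (2:ℝ) ∂P = ∫ ω, Real.exp (-u * ξ ω) ∂P := by
    refine integral_congr_ae (Eventually.of_forall fun ω => ?_)
    show f ω ^ (2:ℝ) = Real.exp (-u * ξ ω)
    rw [Real.rpow_two, sq, hexp2 ω]
  have e3 : ∫ ω, g ω ^ (2:ℝ) ∂P = ∫ ω, ξ ω * ξ ω * Real.exp (-u * ξ ω) ∂P := by
    refine integral_congr_ae (Eventually.of_forall fun ω => ?_)
    show g ω ^ (2:ℝ) = ξ ω * ξ ω * Real.exp (-u * ξ ω)
    rw [Real.rpow_two, sq, ← hexp2 ω]; simp only [hf, hg]; ring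
  rw [e1, e2, e3] at hH
  set A := ∫ ω, Real.exp (-u * ξ ω) ∂P
  set B := ∫ ω, ξ ω * ξ ω * Real.exp (-u * ξ ω) ∂P
  have hA : 0 ≤ A := le_of_lt (aux_L_pos P ξ hmeas hξ u)
  have hB : 0 ≤ B := by
    refine integral_nonneg_of_ae ?_
    filter_upwards [hξ] with ω hω
    exact mul_nonneg (mul_self_nonneg _) (Real.exp_pos _).le
  have hM : 0 ≤ ∫ ω, ξ ω * Real.exp (-u * ξ ω) ∂P := aux_M_nonneg P ξ hmeas hξ u
  have h2 : ∀ C : ℝ, 0 ≤ C → (C ^ (1/(2:ℝ)))^2 = C := by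
    intro C hC
    rw [← Real.rpow_natCast (C ^ (1/(2:ℝ))) 2, ← Real.rpow_mul hC]
    norm_num
  have hsq : (A ^ (1/(2:ℝ)) * B ^ (1/(2:ℝ)))^2 = A * B := by
    rw [mul_pow, h2 A hA, h2 B hB]
  calc (∫ ω, ξ ω * Real.exp (-u * ξ ω) ∂P)^2
      ≤ (A ^ (1/(2:ℝ)) * B ^ (1/(2:ℝ)))^2 := pow_le_pow_left₀ hM hH 2
    _ = A * B := hsq

end
section
variable {Ω : Type*} [MeasurableSpace Ω] (P : Measure Ω) [IsProbabilityMeasure P]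
  (ξ : Ω → ℝ) (hmeas : Measurable ξ) (hξ : ∀ᵐ ω ∂P, 0 ≤ ξ ω ∧ ξ ω ≤ 1)

include hmeas hξ

lemma aux_L_hasDeriv (u : ℝ) :
    HasDerivAt (fun v => ∫ ω, Real.exp (-v * ξ ω) ∂P)
      (-∫ ω, ξ ω * Real.exp (-u * ξ ω) ∂P) u := by
  have := aux_hasDerivAt_weight_exp P ξ hmeas hξ (fun _ => 1) measurable_const
    (Eventually.of_forall fun ω => ⟨zero_le_one, le_refl 1⟩) u
  simpa only [one_mul] using this

lemma aux_M_hasDeriv (u : ℝ) :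
    HasDerivAt (fun v => ∫ ω, ξ ω * Real.exp (-v * ξ ω) ∂P)
      (-∫ ω, ξ ω * ξ ω * Real.exp (-u * ξ ω) ∂P) u :=
  aux_hasDerivAt_weight_exp P ξ hmeas hξ ξ hmeas hξ u

lemma aux_G'_antitone :
    Antitone (fun u => (∫ ω, ξ ω * Real.exp (-u * ξ ω) ∂P) /
      (∫ ω, Real.exp (-u * ξ ω) ∂P)) := by
  have hd : ∀ u : ℝ, HasDerivAt (fun u => (∫ ω, ξ ω * Real.exp (-u * ξ ω) ∂P) /
      (∫ ω, Real.exp (-u * ξ ω) ∂P))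
      (((-∫ ω, ξ ω * ξ ω * Real.exp (-u * ξ ω) ∂P) * (∫ ω, Real.exp (-u * ξ ω) ∂P)
        - (∫ ω, ξ ω * Real.exp (-u * ξ ω) ∂P) * (-∫ ω, ξ ω * Real.exp (-u * ξ ω) ∂P))
        / (∫ ω, Real.exp (-u * ξ ω) ∂P) ^ 2) u := by
    intro u
    exact (aux_M_hasDeriv P ξ hmeas hξ u).div (aux_L_hasDeriv P ξ hmeas hξ u)
      (ne_of_gt (aux_L_pos P ξ hmeas hξ u))
  apply antitone_of_deriv_nonpos
  · exact fun u => (hd u).differentiableAt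
  · intro u
    rw [(hd u).deriv]
    apply div_nonpos_of_nonpos_of_nonneg _ (sq_nonneg _)
    have := aux_CS P ξ hmeas hξ u
    nlinarith [this]

lemma aux_L_tendsto :
    Tendsto (fun u => ∫ ω, Real.exp (-u * ξ ω) ∂P) atTop
      (𝓝 ((P {ω | ξ ω = 0}).toReal)) := by
  have hms : MeasurableSet {ω | ξ ω = 0} := hmeas (measurableSet_singleton 0)
  have h1 : (P {ω | ξ ω = 0}).toReal
      = ∫ ω, Set.indicator {ω | ξ ω = 0} (fun _ => (1:ℝ)) ω ∂P := by
    rw [integral_indicator_const (1:ℝ) hms, smul_eq_mul, mul_one, measureReal_def]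
  rw [h1]
  refine tendsto_integral_filter_of_dominated_convergence (fun _ => (1:ℝ))
    (Eventually.of_forall fun u => ((hmeas.const_mul (-u)).exp).aestronglyMeasurable)
    ?_ (integrable_const _) ?_
  · filter_upwards [eventually_ge_atTop (0:ℝ)] with u hu
    filter_upwards [hξ] with ω hω
    rw [Real.norm_eq_abs, abs_of_pos (Real.exp_pos _), ← Real.exp_zero]
    exact Real.exp_le_exp.2 (by nlinarith [hω.1, hω.2])
  · filter_upwards [hξ] with ω hω
    by_cases h : ξ ω = 0
    · have : ω ∈ {ω | ξ ω = 0} := h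
      simp only [Set.indicator_of_mem this, h, mul_zero, Real.exp_zero]
      exact tendsto_const_nhds
    · have hnm : ω ∉ {ω | ξ ω = 0} := h
      simp only [Set.indicator_of_notMem hnm]
      have hpos : 0 < ξ ω := lt_of_le_of_ne hω.1 (Ne.symm h)
      have h2 : Tendsto (fun u : ℝ => u * ξ ω) atTop atTop :=
        tendsto_id.atTop_mul_const hpos
      have h3 : Tendsto (fun u : ℝ => -u * ξ ω) atTop atBot := by
        simp only [neg_mul]
        exact tendsto_neg_atBot_iff.mpr h2
      exact Real.tendsto_exp_atBot.comp h3

end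

set_option maxHeartbeats 1000000

/-- For every `D` with `0 < D ≤ D_∞` and arbitrary `ε, δ > 0` there exists a
finite `h > 0` such that `0 ≤ 𝒢(φ; D) - h⁻¹ (Γ(h; φ) - D) ≤ δ` and
`D - ε ≤ Γ(h; φ) - h Γ'(h; φ) ≤ D`. -/
theorem calG_approx_attained
    {Ω : Type*} [MeasurableSpace Ω] (P : Measure Ω) [IsProbabilityMeasure P]
    (ξ : Ω → ℝ) (hmeas : Measurable ξ)
    (hξ : ∀ᵐ ω ∂P, 0 ≤ ξ ω ∧ ξ ω ≤ 1)
    (p : ℝ) (hp : p = (P {ω | ξ ω = 0}).toReal) (hp0 : 0 < p) (hp1 : p < 1)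
    (μ : ℝ) (hμ : μ = ∫ ω, ξ ω ∂P) (hμpos : 0 < μ)
    (ν : ℝ) (hν : ν = Real.log (1 / p))
    (G : ℝ → ℝ) (hG : ∀ u, G u = -Real.log (∫ ω, Real.exp (-u * ξ ω) ∂P))
    (G' : ℝ → ℝ)
    (hG' : ∀ u, G' u = (∫ ω, ξ ω * Real.exp (-u * ξ ω) ∂P) /
        (∫ ω, Real.exp (-u * ξ ω) ∂P))
    (d : ℕ) (hd : 1 ≤ d)
    (φ : (Fin d → ℝ) → (Fin d → ℝ)) (hφmeas : Measurable φ)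
    (hφint : Integrable (fun x => ∑ k, (φ x k) ^ 2))
    (hφpos : 0 < ∫ x, ∑ k, (φ x k) ^ 2)
    (hsupp : volume {x | φ x ≠ 0} < ⊤)
    (Dinf : ℝ) (hDinf : Dinf = ν * (volume {x | φ x ≠ 0}).toReal)
    (Γ : ℝ → ℝ) (hΓ : ∀ h, Γ h = ∫ x, G (h * ∑ k, (φ x k) ^ 2))
    (Γ' : ℝ → ℝ)
    (hΓ' : ∀ h, Γ' h = ∫ x, (∑ k, (φ x k) ^ 2) * G' (h * ∑ k, (φ x k) ^ 2))
    (𝒢 : ℝ → ℝ)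
    (h𝒢 : ∀ D, 𝒢 D = sSup {y : ℝ | ∃ h > (0 : ℝ), y = h⁻¹ * (Γ h - D)}) :
    ∀ D, 0 < D → D ≤ Dinf → ∀ ε > (0 : ℝ), ∀ δ > (0 : ℝ), ∃ h > (0 : ℝ),
      0 ≤ 𝒢 D - h⁻¹ * (Γ h - D) ∧ 𝒢 D - h⁻¹ * (Γ h - D) ≤ δ ∧
      D - ε ≤ Γ h - h * Γ' h ∧ Γ h - h * Γ' h ≤ D := by
  intro D hD0 hDle ε hε δ hδ
  classical
  -- basic object: s
  set s : (Fin d → ℝ) → ℝ := fun x => ∑ k, (φ x k) ^ 2 with hs_def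
  have hs_meas : Measurable s := by
    apply Finset.measurable_sum
    intro k _
    exact ((measurable_pi_apply k).comp hφmeas).pow_const 2
  have hs_nonneg : ∀ x, 0 ≤ s x := fun x => Finset.sum_nonneg fun k _ => sq_nonneg _
  have hs_int : Integrable s := hφint
  have hIpos : 0 < ∫ x, s x := hφpos
  have hΓs : ∀ h, Γ h = ∫ x, G (h * s x) := hΓ
  have hΓ's : ∀ h, Γ' h = ∫ x, s x * G' (h * s x) := hΓ'
  have hsupp_eq : {x | s x ≠ 0} = {x | φ x ≠ 0} := by
    ext x
    simp only [Set.mem_setOf_eq, hs_def, not_iff_not]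
    rw [Finset.sum_eq_zero_iff_of_nonneg (fun k _ => sq_nonneg _)]
    constructor
    · intro h
      funext k
      have := h k (Finset.mem_univ k)
      exact pow_eq_zero_iff (two_ne_zero) |>.1 this
    · intro h k _
      rw [h]
      simp
  have hms : MeasurableSet {x | s x ≠ 0} := (hs_meas (measurableSet_singleton 0)).compl
  -- G facts
  have hLpos : ∀ u : ℝ, 0 < ∫ ω, Real.exp (-u * ξ ω) ∂P := aux_L_pos P ξ hmeas hξ
  have hGd : ∀ u, HasDerivAt G (G' u) u := by
    intro u
    have h1 := aux_L_hasDeriv P ξ hmeas hξ u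
    have h2 := (h1.log (ne_of_gt (hLpos u))).neg
    have h3 : G = fun v => -Real.log (∫ ω, Real.exp (-v * ξ ω) ∂P) := funext hG
    rw [hG' u, h3]
    refine h2.congr_deriv ?_
    rw [neg_div, neg_neg]
  have hGdiff : Differentiable ℝ G := fun u => (hGd u).differentiableAt
  have hGcont : Continuous G := hGdiff.continuous
  have hG'nonneg : ∀ u, 0 ≤ G' u := by
    intro u
    rw [hG' u]
    exact div_nonneg (aux_M_nonneg P ξ hmeas hξ u) (hLpos u).le
  have hG'le1 : ∀ u, G' u ≤ 1 := by
    intro u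
    rw [hG' u]
    exact (div_le_one (hLpos u)).2 (aux_M_le_L P ξ hmeas hξ u)
  have hG'anti : Antitone G' := by
    have h3 : G' = fun u => (∫ ω, ξ ω * Real.exp (-u * ξ ω) ∂P) /
      (∫ ω, Real.exp (-u * ξ ω) ∂P) := funext hG'
    rw [h3]
    exact aux_G'_antitone P ξ hmeas hξ
  have hG'cont : Continuous G' := by
    have h3 : G' = fun u => (∫ ω, ξ ω * Real.exp (-u * ξ ω) ∂P) /
      (∫ ω, Real.exp (-u * ξ ω) ∂P) := funext hG'
    rw [h3]
    exact Continuous.div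
      (continuous_iff_continuousAt.2 fun u => ((aux_M_hasDeriv P ξ hmeas hξ u).differentiableAt).continuousAt)
      (continuous_iff_continuousAt.2 fun u => ((aux_L_hasDeriv P ξ hmeas hξ u).differentiableAt).continuousAt)
      fun u => ne_of_gt (hLpos u)
  have hGabs : ∀ u, |G u| ≤ |u| := by
    intro u
    rw [hG u, abs_le]
    constructor
    · rw [neg_le, neg_neg]
      exact (Real.log_le_iff_le_exp (hLpos u)).2 (aux_L_le P ξ hmeas hξ u)
    · rw [neg_le]
      exact (Real.le_log_iff_exp_le (hLpos u)).2 (aux_L_lb P ξ hmeas hξ u)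
  have hGnonneg : ∀ u, 0 ≤ u → 0 ≤ G u := by
    intro u hu
    rw [hG u]
    have := Real.log_nonpos (hLpos u).le (aux_L_le_one P ξ hmeas hξ u hu)
    linarith
  have hGle : ∀ u, 0 ≤ u → G u ≤ u := by
    intro u hu
    have := hGabs u
    rw [abs_le] at this
    calc G u ≤ |G u| := le_abs_self _
      _ ≤ |u| := hGabs u
      _ = u := abs_of_nonneg hu
  have hν0 : 0 < ν := by
    rw [hν]
    apply Real.log_pos
    rw [lt_div_iff₀ hp0, one_mul]
    exact hp1
  have hGν : ∀ u, 0 ≤ u → G u ≤ ν := by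
    intro u hu
    rw [hG u, hν, neg_le, one_div, Real.log_inv, neg_neg]
    apply Real.log_le_log hp0
    rw [hp]
    exact aux_p_le_L P ξ hmeas hξ u hu
  have hG0 : G 0 = 0 := by
    rw [hG 0]
    simp
  have hGtend : Tendsto G atTop (𝓝 ν) := by
    have h1 := aux_L_tendsto P ξ hmeas hξ
    rw [← hp] at h1
    have h2 := ((Real.continuousAt_log (ne_of_gt hp0)).tendsto.comp h1).neg
    have h3 : G = fun v => -Real.log (∫ ω, Real.exp (-v * ξ ω) ∂P) := funext hG
    rw [h3, hν, one_div, Real.log_inv]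
    exact h2
  -- Γ facts
  have hΓint : ∀ h : ℝ, Integrable (fun x => G (h * s x)) := by
    intro h
    refine Integrable.mono' (hs_int.const_mul |h|)
      ((hGcont.measurable.comp (hs_meas.const_mul h)).aestronglyMeasurable) ?_
    filter_upwards [] with x
    rw [Real.norm_eq_abs]
    calc |G (h * s x)| ≤ |h * s x| := hGabs _
      _ = |h| * |s x| := abs_mul _ _
      _ = |h| * s x := by rw [abs_of_nonneg (hs_nonneg x)]
  have hΓ'int : ∀ h : ℝ, Integrable (fun x => s x * G' (h * s x)) := by
    intro h
    refine Integrable.mono' hs_int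
      ((hs_meas.mul (hG'cont.measurable.comp (hs_meas.const_mul h))).aestronglyMeasurable) ?_
    filter_upwards [] with x
    rw [Real.norm_eq_abs, abs_mul, abs_of_nonneg (hs_nonneg x)]
    calc s x * |G' (h * s x)| ≤ s x * 1 := by
          apply mul_le_mul_of_nonneg_left _ (hs_nonneg x)
          rw [abs_le]
          exact ⟨by linarith [hG'nonneg (h * s x)], hG'le1 _⟩
      _ = s x := mul_one _
  have hΓd : ∀ h : ℝ, HasDerivAt Γ (Γ' h) h := by
    intro h₀
    have key := hasDerivAt_integral_of_dominated_loc_of_deriv_le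
      (μ := (volume : Measure (Fin d → ℝ)))
      (F := fun h x => G (h * s x)) (F' := fun h x => s x * G' (h * s x))
      (x₀ := h₀) (bound := s) (s := Metric.ball h₀ 1) (Metric.ball_mem_nhds h₀ one_pos)
      (Eventually.of_forall fun h =>
        (hGcont.measurable.comp (hs_meas.const_mul h)).aestronglyMeasurable)
      (hΓint h₀)
      ((hs_meas.mul (hG'cont.measurable.comp (hs_meas.const_mul h₀))).aestronglyMeasurable)
      ?_ hs_int ?_
    · have h2 := key.2
      have h3 : Γ = fun h => ∫ x, G (h * s x) := funext hΓs
      rw [hΓ's h₀, h3]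
      exact h2
    · filter_upwards [] with x
      intro h _
      rw [Real.norm_eq_abs, abs_mul, abs_of_nonneg (hs_nonneg x)]
      calc s x * |G' (h * s x)| ≤ s x * 1 := by
            apply mul_le_mul_of_nonneg_left _ (hs_nonneg x)
            rw [abs_le]
            exact ⟨by linarith [hG'nonneg (h * s x)], hG'le1 _⟩
        _ = s x := mul_one _
    · filter_upwards [] with x
      intro h _
      have h1 : HasDerivAt (fun t : ℝ => t * s x) (s x) h := hasDerivAt_mul_const _
      have h2 := (hGd (h * s x)).comp h h1
      exact h2.congr_deriv (mul_comm _ _)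
  have hΓdiff : Differentiable ℝ Γ := fun h => (hΓd h).differentiableAt
  have hΓcont : Continuous Γ := hΓdiff.continuous
  have hΓ'cont : Continuous Γ' := by
    have h3 : Γ' = fun h => ∫ x, s x * G' (h * s x) := funext hΓ's
    rw [h3]
    refine continuous_of_dominated
      (fun h => (hs_meas.mul (hG'cont.measurable.comp (hs_meas.const_mul h))).aestronglyMeasurable)
      (fun h => ?_) hs_int ?_
    · filter_upwards [] with x
      rw [Real.norm_eq_abs, abs_mul, abs_of_nonneg (hs_nonneg x)]
      calc s x * |G' (h * s x)| ≤ s x * 1 := by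
            apply mul_le_mul_of_nonneg_left _ (hs_nonneg x)
            rw [abs_le]
            exact ⟨by linarith [hG'nonneg (h * s x)], hG'le1 _⟩
        _ = s x := mul_one _
    · filter_upwards [] with x
      exact continuous_const.mul (hG'cont.comp ((continuous_id.mul continuous_const)))
  have hΓ'nonneg : ∀ h, 0 ≤ Γ' h := by
    intro h
    rw [hΓ's h]
    exact integral_nonneg fun x => mul_nonneg (hs_nonneg x) (hG'nonneg _)
  have hΓ'anti : Antitone Γ' := by
    intro a b hab
    rw [hΓ's a, hΓ's b]
    refine integral_mono (hΓ'int b) (hΓ'int a) fun x => ?_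
    exact mul_le_mul_of_nonneg_left
      (hG'anti (mul_le_mul_of_nonneg_right hab (hs_nonneg x))) (hs_nonneg x)
  have hΓmono : Monotone Γ :=
    monotone_of_deriv_nonneg hΓdiff (fun h => by rw [(hΓd h).deriv]; exact hΓ'nonneg h)
  have hΓnonneg : ∀ h : ℝ, 0 ≤ h → 0 ≤ Γ h := by
    intro h hh
    rw [hΓs h]
    exact integral_nonneg fun x => hGnonneg _ (mul_nonneg hh (hs_nonneg x))
  have hΓlin : ∀ h : ℝ, 0 ≤ h → Γ h ≤ h * ∫ x, s x := by
    intro h hh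
    rw [hΓs h, ← integral_const_mul]
    refine integral_mono (hΓint h) (hs_int.const_mul h) fun x => ?_
    exact hGle _ (mul_nonneg hh (hs_nonneg x))
  -- gradient inequality
  have hgrad : ∀ a b : ℝ, a ≤ b → (b - a) * Γ' b ≤ Γ b - Γ a := by
    intro a b hab
    have hψd : ∀ t : ℝ, HasDerivAt (fun t => Γ t - Γ' b * t) (Γ' t - Γ' b) t := by
      intro t
      have h1 : HasDerivAt (fun t : ℝ => Γ' b * t) (Γ' b) t := by
        simpa using (hasDerivAt_id t).const_mul (Γ' b)
      exact (hΓd t).sub h1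
    have hmono : MonotoneOn (fun t => Γ t - Γ' b * t) (Set.Icc a b) := by
      apply monotoneOn_of_deriv_nonneg (convex_Icc a b)
      · exact (hΓcont.sub (continuous_const.mul continuous_id)).continuousOn
      · intro t _
        exact ((hψd t).differentiableAt).differentiableWithinAt
      · intro t ht
        rw [(hψd t).deriv]
        rw [interior_Icc] at ht
        exact sub_nonneg.2 (hΓ'anti ht.2.le)
    have h2 := hmono (Set.left_mem_Icc.2 hab) (Set.right_mem_Icc.2 hab) hab
    simp only at h2
    nlinarith [h2]
  -- monotonicity of g(h) = Γ h - h Γ' h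
  have hgmono : ∀ a b : ℝ, 0 ≤ a → a ≤ b → Γ a - a * Γ' a ≤ Γ b - b * Γ' b := by
    intro a b ha hab
    have h1 := hgrad a b hab
    have h2 : 0 ≤ a * (Γ' a - Γ' b) := mul_nonneg ha (sub_nonneg.2 (hΓ'anti hab))
    nlinarith [h1, h2]
  -- limits at infinity
  have hΓtend : Tendsto Γ atTop (𝓝 Dinf) := by
    have hbnd_int : Integrable (Set.indicator {x | s x ≠ 0} (fun _ => ν)) := by
      rw [integrable_indicator_iff hms]
      refine integrableOn_const ?_
      rw [hsupp_eq]
      exact hsupp.ne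
    have hDinf' : Dinf = ∫ x, Set.indicator {x | s x ≠ 0} (fun _ => ν) x := by
      rw [integral_indicator_const ν hms, smul_eq_mul, hDinf, hsupp_eq, mul_comm, measureReal_def]
    have h3 : Γ = fun h => ∫ x, G (h * s x) := funext hΓs
    rw [h3, hDinf']
    refine tendsto_integral_filter_of_dominated_convergence _
      (Eventually.of_forall fun h =>
        (hGcont.measurable.comp (hs_meas.const_mul h)).aestronglyMeasurable)
      ?_ hbnd_int ?_
    · filter_upwards [eventually_ge_atTop (0:ℝ)] with h hh
      filter_upwards [] with x
      by_cases hx : s x ≠ 0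
      · have hxm : x ∈ {x | s x ≠ 0} := hx
        rw [Set.indicator_of_mem hxm, Real.norm_eq_abs,
          abs_of_nonneg (hGnonneg _ (mul_nonneg hh (hs_nonneg x)))]
        exact hGν _ (mul_nonneg hh (hs_nonneg x))
      · have hxm : x ∉ {x | s x ≠ 0} := hx
        rw [Set.indicator_of_notMem hxm]
        push_neg at hx
        rw [hx, mul_zero, hG0]
        simp
    · filter_upwards [] with x
      by_cases hx : s x ≠ 0
      · have hxm : x ∈ {x | s x ≠ 0} := hx
        rw [Set.indicator_of_mem hxm]
        have hpos : 0 < s x := lt_of_le_of_ne (hs_nonneg x) (Ne.symm hx)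
        exact hGtend.comp (tendsto_id.atTop_mul_const hpos)
      · have hxm : x ∉ {x | s x ≠ 0} := hx
        rw [Set.indicator_of_notMem hxm]
        push_neg at hx
        simp only [hx, mul_zero, hG0]
        exact tendsto_const_nhds
  have hγ : Tendsto (fun h => h * Γ' h) atTop (𝓝 0) := by
    have hup : Tendsto (fun h => 2 * (Γ h - Γ (h / 2))) atTop (𝓝 0) := by
      have h1 : Tendsto (fun h : ℝ => Γ (h / 2)) atTop (𝓝 Dinf) :=
        hΓtend.comp (tendsto_id.atTop_div_const two_pos)
      have h2 := (hΓtend.sub h1).const_mul 2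
      simpa using h2
    refine tendsto_of_tendsto_of_tendsto_of_le_of_le' tendsto_const_nhds hup ?_ ?_
    · filter_upwards [eventually_ge_atTop (0:ℝ)] with h hh
      exact mul_nonneg hh (hΓ'nonneg h)
    · filter_upwards [eventually_ge_atTop (0:ℝ)] with h hh
      have := hgrad (h / 2) h (by linarith)
      nlinarith [this]
  have hgtend : Tendsto (fun h => Γ h - h * Γ' h) atTop (𝓝 Dinf) := by
    simpa using hΓtend.sub hγ
  -- derivative of f
  have hfd : ∀ h : ℝ, 0 < h →
      HasDerivAt (fun t => t⁻¹ * (Γ t - D)) ((D - (Γ h - h * Γ' h)) / h ^ 2) h := by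
    intro h hh
    have h1 : HasDerivAt (fun t : ℝ => t⁻¹) (-(h ^ 2)⁻¹) h := hasDerivAt_inv (ne_of_gt hh)
    have h2 := h1.mul ((hΓd h).sub_const D)
    refine h2.congr_deriv ?_
    field_simp
    ring
  -- case split
  by_cases hA : ∃ h₁, 0 < h₁ ∧ D ≤ Γ h₁ - h₁ * Γ' h₁
  · -- Case A: the supremum is attained
    obtain ⟨h₁, hh₁, hA₁⟩ := hA
    set c := D / (2 * ∫ x, s x) with hc_def
    have hcpos : 0 < c := div_pos hD0 (by linarith)
    set h₀ := min h₁ c with hh₀_def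
    have hh₀ : 0 < h₀ := lt_min hh₁ hcpos
    have hg₀ : Γ h₀ - h₀ * Γ' h₀ < D := by
      have e1 : Γ h₀ - h₀ * Γ' h₀ ≤ Γ h₀ := by
        nlinarith [mul_nonneg hh₀.le (hΓ'nonneg h₀)]
      have e2 : Γ h₀ ≤ h₀ * ∫ x, s x := hΓlin h₀ hh₀.le
      have e3 : h₀ * ∫ x, s x ≤ c * ∫ x, s x :=
        mul_le_mul_of_nonneg_right (min_le_right _ _) hIpos.le
      have e4 : c * ∫ x, s x = D / 2 := by
        rw [hc_def]
        field_simp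
      linarith
    have hgcont : Continuous (fun h => Γ h - h * Γ' h) :=
      hΓcont.sub (continuous_id.mul hΓ'cont)
    have hIVT := intermediate_value_Icc (min_le_left h₁ c) hgcont.continuousOn
    have hDmem : D ∈ Set.Icc (Γ h₀ - h₀ * Γ' h₀) (Γ h₁ - h₁ * Γ' h₁) := ⟨hg₀.le, hA₁⟩
    obtain ⟨hstar, hsmem, hgs0⟩ := hIVT hDmem
    have hgs : Γ hstar - hstar * Γ' hstar = D := hgs0
    have hspos : 0 < hstar := lt_of_lt_of_le hh₀ hsmem.1
    -- f attains its max at hstar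
    have hfmax : ∀ h : ℝ, 0 < h → h⁻¹ * (Γ h - D) ≤ hstar⁻¹ * (Γ hstar - D) := by
      intro h hh
      rcases le_total h hstar with hle | hle
      · have hmono : MonotoneOn (fun t => t⁻¹ * (Γ t - D)) (Set.Icc h hstar) := by
          apply monotoneOn_of_deriv_nonneg (convex_Icc h hstar)
          · intro t ht
            exact ((hfd t (lt_of_lt_of_le hh ht.1)).differentiableAt).continuousAt.continuousWithinAt
          · intro t ht
            rw [interior_Icc] at ht
            exact ((hfd t (lt_of_lt_of_le hh ht.1.le)).differentiableAt).differentiableWithinAt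
          · intro t ht
            rw [interior_Icc] at ht
            have htpos : 0 < t := lt_of_lt_of_le hh ht.1.le
            rw [(hfd t htpos).deriv]
            apply div_nonneg _ (sq_nonneg _)
            have := hgmono t hstar htpos.le ht.2.le
            rw [hgs] at this
            linarith
        exact hmono (Set.left_mem_Icc.2 hle) (Set.right_mem_Icc.2 hle) hle
      · have hanti : AntitoneOn (fun t => t⁻¹ * (Γ t - D)) (Set.Icc hstar h) := by
          apply antitoneOn_of_deriv_nonpos (convex_Icc hstar h)
          · intro t ht
            exact ((hfd t (lt_of_lt_of_le hspos ht.1)).differentiableAt).continuousAt.continuousWithinAt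
          · intro t ht
            rw [interior_Icc] at ht
            exact ((hfd t (lt_of_lt_of_le hspos ht.1.le)).differentiableAt).differentiableWithinAt
          · intro t ht
            rw [interior_Icc] at ht
            have htpos : 0 < t := lt_of_lt_of_le hspos ht.1.le
            rw [(hfd t htpos).deriv]
            apply div_nonpos_of_nonpos_of_nonneg _ (sq_nonneg _)
            have := hgmono hstar t hspos.le ht.1.le
            rw [hgs] at this
            linarith
        exact hanti (Set.left_mem_Icc.2 hle) (Set.right_mem_Icc.2 hle) hle
    have hgr : IsGreatest {y : ℝ | ∃ h > (0 : ℝ), y = h⁻¹ * (Γ h - D)}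
        (hstar⁻¹ * (Γ hstar - D)) := by
      constructor
      · exact ⟨hstar, hspos, rfl⟩
      · rintro y ⟨h, hh, rfl⟩
        exact hfmax h hh
    have h𝒢eq : 𝒢 D = hstar⁻¹ * (Γ hstar - D) := by
      rw [h𝒢 D]
      exact hgr.csSup_eq
    refine ⟨hstar, hspos, ?_, ?_, ?_, ?_⟩
    · rw [h𝒢eq]; simp
    · rw [h𝒢eq]; simp; linarith
    · rw [hgs]; linarith
    · rw [hgs]
  · -- Case B: g < D everywhere
    push_neg at hA
    have hB : ∀ h : ℝ, 0 < h → Γ h - h * Γ' h < D := hA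
    have hDinfD : Dinf ≤ D := by
      refine le_of_tendsto hgtend ?_
      filter_upwards [eventually_gt_atTop (0:ℝ)] with h hh
      exact (hB h hh).le
    have hDeq : Dinf = D := le_antisymm hDinfD hDle
    have hΓD : ∀ h, Γ h ≤ D := by
      intro h
      have h1 : Γ h ≤ Dinf := hΓmono.ge_of_tendsto hΓtend h
      linarith
    have hfnonpos : ∀ h : ℝ, 0 < h → h⁻¹ * (Γ h - D) ≤ 0 := by
      intro h hh
      have h1 : Γ h - D ≤ 0 := by linarith [hΓD h]
      have := mul_le_mul_of_nonneg_left h1 (inv_pos.2 hh).le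
      simpa using this
    have hS_ne : Set.Nonempty {y : ℝ | ∃ h > (0 : ℝ), y = h⁻¹ * (Γ h - D)} :=
      ⟨(1:ℝ)⁻¹ * (Γ 1 - D), 1, one_pos, rfl⟩
    have hS_bdd : BddAbove {y : ℝ | ∃ h > (0 : ℝ), y = h⁻¹ * (Γ h - D)} := by
      refine ⟨0, ?_⟩
      rintro y ⟨h, hh, rfl⟩
      exact hfnonpos h hh
    have h𝒢le : 𝒢 D ≤ 0 := by
      rw [h𝒢 D]
      apply csSup_le hS_ne
      rintro y ⟨h, hh, rfl⟩
      exact hfnonpos h hh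
    -- choose large h₂
    have hev1 : ∀ᶠ h in atTop, D - ε < Γ h - h * Γ' h := by
      refine hgtend.eventually (eventually_gt_nhds ?_)
      rw [hDeq]
      linarith
    obtain ⟨h₂, hg2, hh2⟩ := (hev1.and (eventually_ge_atTop (max 1 (D / δ)))).exists
    have h₂pos : 0 < h₂ := lt_of_lt_of_le one_pos (le_trans (le_max_left _ _) hh2)
    have hDdel : D ≤ δ * h₂ := by
      have h1 : D / δ ≤ h₂ := le_trans (le_max_right _ _) hh2
      calc D = δ * (D / δ) := by field_simp
        _ ≤ δ * h₂ := mul_le_mul_of_nonneg_left h1 hδ.le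
    have hflb : -δ ≤ h₂⁻¹ * (Γ h₂ - D) := by
      have h1 : -D ≤ Γ h₂ - D := by linarith [hΓnonneg h₂ h₂pos.le]
      have h2 : h₂⁻¹ * (-D) ≤ h₂⁻¹ * (Γ h₂ - D) :=
        mul_le_mul_of_nonneg_left h1 (inv_pos.2 h₂pos).le
      have h3 : -δ ≤ h₂⁻¹ * (-D) := by
        have h4 : h₂⁻¹ * D ≤ h₂⁻¹ * (δ * h₂) :=
          mul_le_mul_of_nonneg_left hDdel (inv_pos.2 h₂pos).le
        have h5 : h₂⁻¹ * (δ * h₂) = δ := by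
          rw [mul_comm δ h₂, ← mul_assoc, inv_mul_cancel₀ (ne_of_gt h₂pos), one_mul]
        linarith [h4, h5]
      linarith
    have h𝒢ge : h₂⁻¹ * (Γ h₂ - D) ≤ 𝒢 D := by
      rw [h𝒢 D]
      exact le_csSup hS_bdd ⟨h₂, h₂pos, rfl⟩
    refine ⟨h₂, h₂pos, ?_, ?_, ?_, ?_⟩
    · linarith
    · linarith
    · exact hg2.le
    · exact (hB h₂ h₂pos).le
end
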